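/- arXiv:1811.01714 — 4 statements merged into one kernel-verified Lean document; each statement's English description precedes it below -/
import Mathlib

section
/- Assume g is three times continuously differentiable and g, g', g'', g''' are bounded on ℝ. Then for every parameter θ = (ω, β, b): M1(θ) = Σ_{k=1}^K ω_k E[g'(⟨β_k, X⟩ + b_k)] β_k; M2(θ)[i,j] = Σ_{k=1}^K ω_k E[g''(⟨β_k, X⟩ + b_k)] β_k[i] β_k[j] for all i,j; and M3(θ)[i,j,l] = Σ_{k=1}^K ω_k E[g'''(⟨β_k, X⟩ + b_k)] β_k[i] β_k[j] β_k[l] for all i,j,l, where X ∼ N(0, I_d). -/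
/- STATEMENT 2: Rewriting of the cross moments (Lemma 1 of the paper, after
Anandkumar et al.): for a smooth bounded link function,
M1(θ) = ∑_k ω_k E[g'(⟨β_k,X⟩+b_k)] β_k, and similarly for M2 (with g'') and
M3 (with g'''), where X ∼ N(0, I_d). -/

open MeasureTheory ProbabilityTheory Real Filter

noncomputable section

/-- The standard Gaussian measure `N(0, I_d)` on `ℝ^d`. -/
def stdGaussian (d : ℕ) : Measure (Fin d → ℝ) :=
  Measure.pi fun _ => gaussianReal 0 1

/-- Euclidean inner product on `ℝ^d`. -/
def dotp {d : ℕ} (u v : Fin d → ℝ) : ℝ := ∑ i, u i * v i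

/-- Kronecker delta. -/
def kron {d : ℕ} (i j : Fin d) : ℝ := if i = j then 1 else 0

/-- `P_θ(Y = 1 ∣ X = x) = ∑ k ω_k g(⟨β_k, x⟩ + b_k)`. -/
def mixP {d K : ℕ} (g : ℝ → ℝ) (ω : Fin K → ℝ) (β : Fin K → Fin d → ℝ)
    (b : Fin K → ℝ) (x : Fin d → ℝ) : ℝ :=
  ∑ k, ω k * g (dotp (β k) x + b k)

/-- `M1(θ)[i] = E_θ[Y X_i]`. -/
def M1 {d K : ℕ} (g : ℝ → ℝ) (ω : Fin K → ℝ) (β : Fin K → Fin d → ℝ)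
    (b : Fin K → ℝ) : Fin d → ℝ :=
  fun i => ∫ x, mixP g ω β b x * x i ∂ stdGaussian d

/-- `M2(θ)[i,j] = E_θ[Y (X_i X_j − δ_{ij})]`. -/
def M2 {d K : ℕ} (g : ℝ → ℝ) (ω : Fin K → ℝ) (β : Fin K → Fin d → ℝ)
    (b : Fin K → ℝ) : Fin d → Fin d → ℝ :=
  fun i j => ∫ x, mixP g ω β b x * (x i * x j - kron i j) ∂ stdGaussian d

/-- `M3(θ)[i,j,l] = E_θ[Y (X_i X_j X_l − X_i δ_{jl} − X_j δ_{il} − X_l δ_{ij})]`. -/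
def M3 {d K : ℕ} (g : ℝ → ℝ) (ω : Fin K → ℝ) (β : Fin K → Fin d → ℝ)
    (b : Fin K → ℝ) : Fin d → Fin d → Fin d → ℝ :=
  fun i j l => ∫ x, mixP g ω β b x *
    (x i * x j * x l - x i * kron j l - x j * kron i l - x l * kron i j) ∂ stdGaussian d

/-- `E[g^{(s)}(⟨β_k, X⟩ + b_k)]` for `X ∼ N(0, I_d)`. -/
def gMom {d : ℕ} (g : ℝ → ℝ) (s : ℕ) (βk : Fin d → ℝ) (bk : ℝ) : ℝ :=
  ∫ x, iteratedDeriv s g (dotp βk x + bk) ∂ stdGaussian d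

open scoped ENNReal NNReal Topology

local notation "γ" => gaussianReal 0 1




def p1 (t : ℝ) : ℝ := gaussianPDFReal 0 1 t

lemma p1_eq (t : ℝ) : p1 t = (√(2 * π))⁻¹ * rexp (-t ^ 2 / 2) := by
  simp [p1, gaussianPDFReal]

lemma p1_nonneg (t : ℝ) : 0 ≤ p1 t := gaussianPDFReal_nonneg 0 1 t

lemma p1_cont : Continuous p1 := by
  have : p1 = fun t => (√(2 * π))⁻¹ * rexp (-t ^ 2 / 2) := funext p1_eq
  rw [this]; fun_prop

lemma hasDerivAt_p1 (t : ℝ) : HasDerivAt p1 (-t * p1 t) t := by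
  have h1 : HasDerivAt (fun t : ℝ => -t ^ 2 / 2) (-t) t := by
    have := ((hasDerivAt_pow 2 t).neg).div_const 2
    exact this.congr_deriv (by simp; ring)
  have h2 := (h1.exp).const_mul (√(2 * π))⁻¹
  have : ∀ s : ℝ, p1 s = (√(2 * π))⁻¹ * rexp (-s ^ 2 / 2) := p1_eq
  rw [show p1 = fun s => (√(2 * π))⁻¹ * rexp (-s ^ 2 / 2) from funext this]
  exact h2.congr_deriv (by show _ = -t * ((√(2 * π))⁻¹ * rexp (-t ^ 2 / 2)); ring)

lemma integral_gaussian_eq (f : ℝ → ℝ) :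
    ∫ t, f t ∂γ = ∫ t, p1 t * f t := by
  rw [gaussianReal_of_var_ne_zero _ one_ne_zero]
  have h : gaussianPDF 0 1 = fun x => ((gaussianPDFReal 0 1 x).toNNReal : ℝ≥0∞) := rfl
  rw [h, integral_withDensity_eq_integral_smul
    ((measurable_gaussianPDFReal 0 1).real_toNNReal) f]
  congr 1; ext t
  simp only [NNReal.smul_def, smul_eq_mul]
  rw [show ((gaussianPDFReal 0 1 t).toNNReal : ℝ) = p1 t from
    Real.coe_toNNReal _ (p1_nonneg t)]

lemma integrable_gaussian_iff (f : ℝ → ℝ) :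
    Integrable f γ ↔ Integrable (fun t => p1 t * f t) volume := by
  rw [gaussianReal_of_var_ne_zero _ one_ne_zero]
  have h : gaussianPDF 0 1 = fun x => ((gaussianPDFReal 0 1 x).toNNReal : ℝ≥0∞) := rfl
  rw [h, integrable_withDensity_iff_integrable_smul
    ((measurable_gaussianPDFReal 0 1).real_toNNReal)]
  constructor <;> intro hi <;> [skip; skip] <;>
    · apply hi.congr
      filter_upwards with t
      simp only [NNReal.smul_def, smul_eq_mul]
      rw [show ((gaussianPDFReal 0 1 t).toNNReal : ℝ) = p1 t from
        Real.coe_toNNReal _ (p1_nonneg t)]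

lemma integrable_pow_gauss (m : ℕ) :
    Integrable (fun t : ℝ => t ^ m * rexp (-(1/2 : ℝ) * t ^ 2)) volume := by
  have := integrable_rpow_mul_exp_neg_mul_sq (b := 1/2) (by norm_num) (s := m)
    (by exact_mod_cast neg_one_lt_zero.trans_le (Nat.cast_nonneg m))
  simpa [Real.rpow_natCast] using this

lemma integrable_grow_gauss (m : ℕ) :
    Integrable (fun t : ℝ => (1 + |t|) ^ m * rexp (-(1/2 : ℝ) * t ^ 2)) volume := by
  have hint : Integrable (fun t : ℝ =>
      2 ^ m * (rexp (-(1/2 : ℝ) * t ^ 2) + |t ^ m * rexp (-(1/2 : ℝ) * t ^ 2)|)) volume :=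
    ((integrable_exp_neg_mul_sq (by norm_num)).add (integrable_pow_gauss m).abs).const_mul _
  refine hint.mono' (Continuous.aestronglyMeasurable (by fun_prop)) ?_
  filter_upwards with t
  have he : 0 < rexp (-(1/2 : ℝ) * t ^ 2) := exp_pos _
  have h1 : (1 + |t|) ^ m ≤ 2 ^ m * (1 + |t| ^ m) := by
    calc (1 + |t|) ^ m ≤ (2 * max 1 |t|) ^ m := by
          gcongr
          rcases le_total |t| 1 with h | h
          · calc 1 + |t| ≤ 1 + 1 := by gcongr
              _ ≤ 2 * max 1 |t| := by rw [two_mul]; gcongr <;> simp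
          · calc 1 + |t| ≤ |t| + |t| := by gcongr
              _ ≤ 2 * max 1 |t| := by rw [two_mul]; gcongr <;> simp
      _ = 2 ^ m * (max 1 |t|) ^ m := by rw [mul_pow]
      _ ≤ 2 ^ m * (1 + |t| ^ m) := by
          gcongr
          rcases le_total |t| 1 with h | h
          · rw [max_eq_left h]; simp [pow_nonneg (abs_nonneg t)]
          · rw [max_eq_right h]
            nlinarith [pow_nonneg (abs_nonneg t) m]
  have habs : |t ^ m * rexp (-(1/2 : ℝ) * t ^ 2)| = |t| ^ m * rexp (-(1/2 : ℝ) * t ^ 2) := by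
    rw [abs_mul, abs_pow, abs_of_pos he]
  rw [norm_eq_abs, abs_of_nonneg (by positivity)]
  rw [habs]
  nlinarith [pow_nonneg (abs_nonneg t) m, h1, he, mul_le_mul_of_nonneg_right h1 he.le]

/-- Integrability of continuous functions of polynomial growth w.r.t. the gaussian. -/
lemma integrable_gauss_of_growth (h : ℝ → ℝ) (hc : Continuous h) (C : ℝ) (m : ℕ)
    (hb : ∀ t, |h t| ≤ C * (1 + |t|) ^ m) : Integrable h γ := by
  rw [integrable_gaussian_iff]
  have hint : Integrable
      (fun t : ℝ => ((√(2 * π))⁻¹ * C) * ((1 + |t|) ^ m * rexp (-(1/2 : ℝ) * t ^ 2)))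
      volume := (integrable_grow_gauss m).const_mul _
  refine hint.mono' ((p1_cont.mul hc).aestronglyMeasurable) ?_
  filter_upwards with t
  rw [norm_eq_abs, abs_mul, abs_of_nonneg (p1_nonneg t), p1_eq]
  have h2 : |h t| ≤ C * (1 + |t|) ^ m := hb t
  have h3 : (0:ℝ) < rexp (-t ^ 2 / 2) := exp_pos _
  have h4 : rexp (-t^2/2) = rexp (-(1/2:ℝ) * t^2) := by ring_nf
  rw [h4]
  have h5 : (0:ℝ) ≤ (√(2 * π))⁻¹ := by positivity
  calc (√(2 * π))⁻¹ * rexp (-(1/2:ℝ) * t^2) * |h t|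
      ≤ (√(2 * π))⁻¹ * rexp (-(1/2:ℝ) * t^2) * (C * (1 + |t|) ^ m) := by
        apply mul_le_mul_of_nonneg_left h2 (by positivity)
    _ = (√(2 * π))⁻¹ * C * ((1 + |t|) ^ m * rexp (-(1/2:ℝ) * t^2)) := by ring

lemma tendsto_grow_gauss (C : ℝ) (l : Filter ℝ)
    (hq : Tendsto (fun t : ℝ => t ^ 2 / 2) l atTop)
    (h1 : ∀ᶠ t in l, 1 ≤ |t|) :
    Tendsto (fun t : ℝ => C * (1 + |t|) ^ 2 * p1 t) l (𝓝 0) := by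
  have base : Tendsto (fun t : ℝ => (t ^ 2 / 2) * rexp (-(t ^ 2 / 2))) l (𝓝 0) := by
    have h0 : Tendsto (fun x : ℝ => x ^ 1 * rexp (-x)) atTop (𝓝 0) :=
      tendsto_pow_mul_exp_neg_atTop_nhds_zero 1
    have := h0.comp hq
    simpa [Function.comp_def] using this
  have base2 : Tendsto (fun t : ℝ => (8 * (√(2 * π))⁻¹ * |C|) *
      ((t ^ 2 / 2) * rexp (-(t ^ 2 / 2)))) l (𝓝 0) := by
    simpa using base.const_mul (8 * (√(2 * π))⁻¹ * |C|)
  apply squeeze_zero_norm' _ base2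
  filter_upwards [h1] with t ht
  have hp : 0 ≤ p1 t := p1_nonneg t
  have hsq : (1 + |t|) ^ 2 ≤ 4 * t ^ 2 := by
    have h2 : 1 + |t| ≤ 2 * |t| := by linarith
    calc (1 + |t|) ^ 2 ≤ (2 * |t|) ^ 2 := by
          apply pow_le_pow_left₀ (by positivity) h2 2
      _ = 4 * t ^ 2 := by rw [mul_pow]; rw [sq_abs]; ring
  have hps : p1 t = (√(2 * π))⁻¹ * rexp (-(t ^ 2 / 2)) := by
    rw [p1_eq]; ring_nf
  have hc : (0:ℝ) ≤ (√(2 * π))⁻¹ := by positivity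
  rw [norm_eq_abs, abs_mul, abs_mul, abs_of_nonneg hp, abs_of_nonneg (by positivity : (0:ℝ) ≤ (1 + |t|) ^ 2)]
  rw [hps]
  calc |C| * (1 + |t|) ^ 2 * ((√(2 * π))⁻¹ * rexp (-(t ^ 2 / 2)))
      ≤ |C| * (4 * t ^ 2) * ((√(2 * π))⁻¹ * rexp (-(t ^ 2 / 2))) := by
        apply mul_le_mul_of_nonneg_right _ (by positivity)
        exact mul_le_mul_of_nonneg_left hsq (abs_nonneg C)
    _ = 8 * (√(2 * π))⁻¹ * |C| * (t ^ 2 / 2 * rexp (-(t ^ 2 / 2))) := by ring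

lemma tendsto_grow_gauss_atTop (C : ℝ) :
    Tendsto (fun t : ℝ => C * (1 + |t|) ^ 2 * p1 t) atTop (𝓝 0) := by
  apply tendsto_grow_gauss
  · exact (tendsto_pow_atTop two_ne_zero).atTop_div_const two_pos
  · filter_upwards [eventually_ge_atTop (1:ℝ)] with t ht
    rw [abs_of_nonneg (by linarith)]; exact ht

lemma tendsto_grow_gauss_atBot (C : ℝ) :
    Tendsto (fun t : ℝ => C * (1 + |t|) ^ 2 * p1 t) atBot (𝓝 0) := by
  apply tendsto_grow_gauss
  · have hneg : Tendsto (fun t : ℝ => -t) atBot atTop := tendsto_neg_atBot_atTop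
    have h2 := ((tendsto_pow_atTop two_ne_zero).atTop_div_const two_pos).comp hneg
    have he : ((fun x : ℝ => x ^ 2 / 2) ∘ fun t : ℝ => -t) = fun t : ℝ => t ^ 2 / 2 := by
      ext t; simp
    rwa [he] at h2
  · filter_upwards [eventually_le_atBot (-1:ℝ)] with t ht
    rw [abs_of_nonpos (by linarith)]; linarith

/-- Stein's lemma for the standard Gaussian in one dimension. -/
lemma stein (φ φ' : ℝ → ℝ) (hd : ∀ t, HasDerivAt φ (φ' t) t) (hc' : Continuous φ')
    (C : ℝ) (hφ : ∀ t, |φ t| ≤ C * (1 + |t|) ^ 2) (hφ' : ∀ t, |φ' t| ≤ C * (1 + |t|) ^ 2) :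
    ∫ t, t * φ t ∂γ = ∫ t, φ' t ∂γ := by
  have hcφ : Continuous φ := continuous_iff_continuousAt.2 fun t => (hd t).continuousAt
  have hC0 : 0 ≤ C := by
    have := hφ 0
    simp only [abs_zero] at this
    nlinarith [abs_nonneg (φ 0)]
  set G : ℝ → ℝ := fun t => φ t * p1 t with hG
  set G' : ℝ → ℝ := fun t => φ' t * p1 t - t * φ t * p1 t with hG'
  have hdG : ∀ t, HasDerivAt G (G' t) t := by
    intro t
    have := (hd t).mul (hasDerivAt_p1 t)
    exact this.congr_deriv (by simp only [hG']; ring)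
  have hvol : ∀ (h : ℝ → ℝ), Continuous h → (∀ t, |h t| ≤ C * (1 + |t|) ^ 3) →
      Integrable (fun t => h t * p1 t) volume := by
    intro h hc hb
    have := (integrable_gaussian_iff h).1 (integrable_gauss_of_growth h hc C 3 hb)
    exact this.congr (by filter_upwards with t using mul_comm _ _)
  have hgrow23 : ∀ t : ℝ, C * (1 + |t|) ^ 2 ≤ C * (1 + |t|) ^ 3 := by
    intro t
    apply mul_le_mul_of_nonneg_left _ hC0
    apply pow_le_pow_right₀ (le_add_of_nonneg_right (abs_nonneg t)) (by norm_num)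
  have hi1 : Integrable (fun t => φ' t * p1 t) volume :=
    hvol φ' hc' fun t => (hφ' t).trans (hgrow23 t)
  have hi2 : Integrable (fun t => t * φ t * p1 t) volume := by
    apply hvol (fun t => t * φ t) (continuous_id.mul hcφ)
    intro t
    calc |t * φ t| = |t| * |φ t| := abs_mul _ _
      _ ≤ (1 + |t|) * (C * (1 + |t|) ^ 2) := by
          apply mul_le_mul (by linarith [abs_nonneg t]) (hφ t) (abs_nonneg _) (by positivity)
      _ = C * (1 + |t|) ^ 3 := by ring
  have hiG' : Integrable G' volume := hi1.sub hi2
  have hbound : ∀ t, ‖G t‖ ≤ C * (1 + |t|) ^ 2 * p1 t := by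
    intro t
    rw [norm_eq_abs, hG, abs_mul, abs_of_nonneg (p1_nonneg t)]
    exact mul_le_mul_of_nonneg_right (hφ t) (p1_nonneg t)
  have hlt : Tendsto G atTop (𝓝 0) :=
    squeeze_zero_norm hbound (tendsto_grow_gauss_atTop C)
  have hlb : Tendsto G atBot (𝓝 0) :=
    squeeze_zero_norm hbound (tendsto_grow_gauss_atBot C)
  have htop := integral_Ioi_of_hasDerivAt_of_tendsto' (a := 0)
    (fun x _ => hdG x) hiG'.integrableOn hlt
  have hbot := integral_Iic_of_hasDerivAt_of_tendsto' (a := 0)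
    (fun x _ => hdG x) hiG'.integrableOn hlb
  have hsum : ∫ t, G' t = 0 := by
    rw [← intervalIntegral.integral_Iic_add_Ioi (b := 0) hiG'.integrableOn hiG'.integrableOn, htop, hbot]
    ring
  have hsub : ∫ t, G' t = (∫ t, φ' t * p1 t) - ∫ t, t * φ t * p1 t := by
    simp only [hG']
    exact integral_sub hi1 hi2
  rw [integral_gaussian_eq, integral_gaussian_eq]
  have e1 : (fun t => p1 t * (t * φ t)) = fun t => t * φ t * p1 t := funext fun t => by ring
  have e2 : (fun t => p1 t * φ' t) = fun t => φ' t * p1 t := funext fun t => by ring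
  rw [e1, e2]
  rw [hsub] at hsum
  linarith

lemma mul3_le {a b c A B C' : ℝ} (ha : 0 ≤ a) (hb : 0 ≤ b) (hc : 0 ≤ c)
    (hA : a ≤ A) (hB : b ≤ B) (hC : c ≤ C') : a * b * c ≤ A * B * C' :=
  mul_le_mul (mul_le_mul hA hB hb (ha.trans hA)) hC hc
    (mul_nonneg (ha.trans hA) (hb.trans hB))

lemma one_le_one_add_abs (t : ℝ) : (1:ℝ) ≤ 1 + |t| := le_add_of_nonneg_right (abs_nonneg t)

lemma one_le_sq_one_add_abs (t : ℝ) : (1:ℝ) ≤ (1 + |t|) ^ 2 :=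
  one_le_pow₀ (one_le_one_add_abs t)

lemma abs_le_sq_one_add_abs (t : ℝ) : |t| ≤ (1 + |t|) ^ 2 := by
  nlinarith [abs_nonneg t]

lemma sq_abs_le_sq_one_add_abs (t : ℝ) : |t| ^ 2 ≤ (1 + |t|) ^ 2 := by
  nlinarith [abs_nonneg t]

section keys

variable (f f1 f2 f3 : ℝ → ℝ) (C : ℝ)

lemma hasDerivAt_affine (h h' : ℝ → ℝ) (hd : ∀ t, HasDerivAt h (h' t) t) (α c t : ℝ) :
    HasDerivAt (fun s => h (α * s + c)) (α * h' (α * t + c)) t := by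
  have hlin : HasDerivAt (fun s : ℝ => α * s + c) α t := by
    simpa using ((hasDerivAt_id t).const_mul α).add_const c
  have := (hd (α * t + c)).comp t hlin
  exact this.congr_deriv (by ring)

lemma key1 (hd : ∀ t, HasDerivAt f (f1 t) t) (hc1 : Continuous f1)
    (hCf : ∀ t, |f t| ≤ C) (hCf1 : ∀ t, |f1 t| ≤ C) (α c : ℝ) :
    ∫ t, t * f (α * t + c) ∂γ = α * ∫ t, f1 (α * t + c) ∂γ := by
  have hC0 : 0 ≤ C := (abs_nonneg (f 0)).trans (hCf 0)
  have hα1 : |α| ≤ 1 + |α| := by linarith [abs_nonneg α]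
  have h11 : (1:ℝ) ≤ 1 + |α| := by linarith [abs_nonneg α]
  rw [stein (fun s => f (α * s + c)) (fun s => α * f1 (α * s + c))
    (fun t => hasDerivAt_affine f f1 hd α c t)
    (by fun_prop)
    ((1 + |α|) * C)
    (fun t => by
      have h := mul3_le zero_le_one (abs_nonneg (f (α * t + c))) zero_le_one
        h11 (hCf (α * t + c)) (one_le_sq_one_add_abs t)
      simpa using h)
    (fun t => by
      rw [abs_mul]
      have h := mul3_le (abs_nonneg α) (abs_nonneg (f1 (α * t + c))) zero_le_one
        hα1 (hCf1 (α * t + c)) (one_le_sq_one_add_abs t)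
      simpa using h)]
  exact integral_const_mul α _

lemma key2 (hd : ∀ t, HasDerivAt f (f1 t) t) (hd1 : ∀ t, HasDerivAt f1 (f2 t) t)
    (hc1 : Continuous f1) (hc2 : Continuous f2)
    (hCf : ∀ t, |f t| ≤ C) (hCf1 : ∀ t, |f1 t| ≤ C) (hCf2 : ∀ t, |f2 t| ≤ C) (α c : ℝ) :
    ∫ t, t ^ 2 * f (α * t + c) ∂γ
      = (∫ t, f (α * t + c) ∂γ) + α ^ 2 * ∫ t, f2 (α * t + c) ∂γ := by
  have hC0 : 0 ≤ C := (abs_nonneg (f 0)).trans (hCf 0)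
  have hcf : Continuous f := continuous_iff_continuousAt.2 fun t => (hd t).continuousAt
  have hα1 : |α| ≤ 1 + |α| := by linarith [abs_nonneg α]
  have h11 : (1:ℝ) ≤ 1 + |α| := by linarith [abs_nonneg α]
  have hφd : ∀ t, HasDerivAt (fun s => s * f (α * s + c))
      (f (α * t + c) + t * (α * f1 (α * t + c))) t := by
    intro t
    have := (hasDerivAt_id t).mul (hasDerivAt_affine f f1 hd α c t)
    exact this.congr_deriv (by simp only [id]; ring)
  have hs := stein (fun s => s * f (α * s + c))
    (fun s => f (α * s + c) + s * (α * f1 (α * s + c))) hφd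
    (by fun_prop) ((1 + |α|) * C)
    (fun t => by
      rw [abs_mul]
      have h := mul3_le zero_le_one (abs_nonneg (f (α * t + c))) (abs_nonneg t)
        h11 (hCf (α * t + c)) (abs_le_sq_one_add_abs t)
      calc |t| * |f (α * t + c)| = 1 * |f (α * t + c)| * |t| := by ring
        _ ≤ (1 + |α|) * C * (1 + |t|) ^ 2 := h)
    (fun t => by
      have hb1 : |t * (α * f1 (α * t + c))| ≤ |α| * C * (1 + |t|) ^ 2 := by
        rw [abs_mul, abs_mul]
        calc |t| * (|α| * |f1 (α * t + c)|) = |α| * |f1 (α * t + c)| * |t| := by ring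
          _ ≤ |α| * C * (1 + |t|) ^ 2 :=
            mul3_le (abs_nonneg α) (abs_nonneg _) (abs_nonneg t)
              le_rfl (hCf1 _) (abs_le_sq_one_add_abs t)
      have hb0 : |f (α * t + c)| ≤ C * (1 + |t|) ^ 2 := by
        have h := mul3_le zero_le_one (abs_nonneg (f (α * t + c))) zero_le_one
          le_rfl (hCf (α * t + c)) (one_le_sq_one_add_abs t)
        simpa using h
      calc |f (α * t + c) + t * (α * f1 (α * t + c))|
          ≤ |f (α * t + c)| + |t * (α * f1 (α * t + c))| := abs_add_le _ _
        _ ≤ C * (1 + |t|) ^ 2 + |α| * C * (1 + |t|) ^ 2 := add_le_add hb0 hb1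
        _ = (1 + |α|) * C * (1 + |t|) ^ 2 := by ring)
  have hif : Integrable (fun t => f (α * t + c)) γ := by
    apply integrable_gauss_of_growth _ (by fun_prop) C 0
    intro t; simpa using hCf (α * t + c)
  have hitf1 : Integrable (fun t => t * (α * f1 (α * t + c))) γ := by
    apply integrable_gauss_of_growth _ (by fun_prop) ((1 + |α|) * C) 1
    intro t
    rw [abs_mul, abs_mul]
    calc |t| * (|α| * |f1 (α * t + c)|) = |α| * |f1 (α * t + c)| * |t| := by ring
      _ ≤ (1 + |α|) * C * (1 + |t|) ^ 1 := by
        have := mul3_le (abs_nonneg α) (abs_nonneg (f1 (α * t + c))) (abs_nonneg t)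
          hα1 (hCf1 _) (le_of_lt (lt_add_of_pos_left _ one_pos) : |t| ≤ 1 + |t|)
        simpa using this
  have e1 : (fun t : ℝ => t ^ 2 * f (α * t + c)) = fun t => t * (t * f (α * t + c)) :=
    funext fun t => by ring
  rw [e1, hs, integral_add hif hitf1]
  have e2 : (fun t : ℝ => t * (α * f1 (α * t + c))) = fun t => α * (t * f1 (α * t + c)) :=
    funext fun t => by ring
  rw [e2, integral_const_mul, key1 f1 f2 C hd1 hc2 hCf1 hCf2 α c]
  ring

lemma key3 (hd : ∀ t, HasDerivAt f (f1 t) t) (hd1 : ∀ t, HasDerivAt f1 (f2 t) t)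
    (hd2 : ∀ t, HasDerivAt f2 (f3 t) t)
    (hc1 : Continuous f1) (hc2 : Continuous f2) (hc3 : Continuous f3)
    (hCf : ∀ t, |f t| ≤ C) (hCf1 : ∀ t, |f1 t| ≤ C) (hCf2 : ∀ t, |f2 t| ≤ C)
    (hCf3 : ∀ t, |f3 t| ≤ C) (α c : ℝ) :
    ∫ t, t ^ 3 * f (α * t + c) ∂γ
      = 3 * α * (∫ t, f1 (α * t + c) ∂γ) + α ^ 3 * ∫ t, f3 (α * t + c) ∂γ := by
  have hC0 : 0 ≤ C := (abs_nonneg (f 0)).trans (hCf 0)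
  have hcf : Continuous f := continuous_iff_continuousAt.2 fun t => (hd t).continuousAt
  have hα1 : |α| ≤ 2 + |α| := by linarith [abs_nonneg α]
  have h21 : (2:ℝ) ≤ 2 + |α| := by linarith [abs_nonneg α]
  have hφd : ∀ t, HasDerivAt (fun s => s ^ 2 * f (α * s + c))
      (2 * t * f (α * t + c) + t ^ 2 * (α * f1 (α * t + c))) t := by
    intro t
    have := (hasDerivAt_pow 2 t).mul (hasDerivAt_affine f f1 hd α c t)
    exact this.congr_deriv (by ring)
  have hs := stein (fun s => s ^ 2 * f (α * s + c))
    (fun s => 2 * s * f (α * s + c) + s ^ 2 * (α * f1 (α * s + c))) hφd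
    (by fun_prop) ((2 + |α|) * C)
    (fun t => by
      rw [abs_mul, abs_pow, sq_abs]
      have ht2 : t ^ 2 ≤ (1 + |t|) ^ 2 := by nlinarith [abs_nonneg t, sq_abs t]
      have h := mul3_le zero_le_one (abs_nonneg (f (α * t + c))) (sq_nonneg t)
        (by linarith : (1:ℝ) ≤ 2 + |α|) (hCf (α * t + c)) ht2
      calc t ^ 2 * |f (α * t + c)| = 1 * |f (α * t + c)| * t ^ 2 := by ring
        _ ≤ (2 + |α|) * C * (1 + |t|) ^ 2 := h)
    (fun t => by
      have hb1 : |2 * t * f (α * t + c)| ≤ 2 * C * (1 + |t|) ^ 2 := by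
        rw [abs_mul, abs_mul]
        simp only [Nat.abs_ofNat]
        calc (2:ℝ) * |t| * |f (α * t + c)| = 2 * |f (α * t + c)| * |t| := by ring
          _ ≤ 2 * C * (1 + |t|) ^ 2 :=
            mul3_le (by norm_num) (abs_nonneg _) (abs_nonneg t)
              le_rfl (hCf _) (abs_le_sq_one_add_abs t)
      have hb2 : |t ^ 2 * (α * f1 (α * t + c))| ≤ |α| * C * (1 + |t|) ^ 2 := by
        rw [abs_mul, abs_mul, abs_pow]
        calc |t| ^ 2 * (|α| * |f1 (α * t + c)|) = |α| * |f1 (α * t + c)| * |t| ^ 2 := by ring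
          _ ≤ |α| * C * (1 + |t|) ^ 2 :=
            mul3_le (abs_nonneg α) (abs_nonneg _) (sq_nonneg _)
              le_rfl (hCf1 _) (sq_abs_le_sq_one_add_abs t)
      calc |2 * t * f (α * t + c) + t ^ 2 * (α * f1 (α * t + c))|
          ≤ |2 * t * f (α * t + c)| + |t ^ 2 * (α * f1 (α * t + c))| := abs_add_le _ _
        _ ≤ 2 * C * (1 + |t|) ^ 2 + |α| * C * (1 + |t|) ^ 2 := add_le_add hb1 hb2
        _ = (2 + |α|) * C * (1 + |t|) ^ 2 := by ring)
  have hitf : Integrable (fun t => 2 * t * f (α * t + c)) γ := by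
    apply integrable_gauss_of_growth _ (by fun_prop) (2 * C) 1
    intro t
    rw [abs_mul, abs_mul]
    simp only [Nat.abs_ofNat]
    calc (2:ℝ) * |t| * |f (α * t + c)| = 2 * |f (α * t + c)| * |t| := by ring
      _ ≤ 2 * C * (1 + |t|) ^ 1 := by
        have := mul3_le (by norm_num : (0:ℝ) ≤ 2) (abs_nonneg (f (α * t + c))) (abs_nonneg t)
          le_rfl (hCf _) (by linarith [abs_nonneg t] : |t| ≤ 1 + |t|)
        simpa using this
  have hit2f1 : Integrable (fun t => t ^ 2 * (α * f1 (α * t + c))) γ := by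
    apply integrable_gauss_of_growth _ (by fun_prop) ((1 + |α|) * C) 2
    intro t
    rw [abs_mul, abs_mul, abs_pow]
    calc |t| ^ 2 * (|α| * |f1 (α * t + c)|) = |α| * |f1 (α * t + c)| * |t| ^ 2 := by ring
      _ ≤ (1 + |α|) * C * (1 + |t|) ^ 2 :=
        mul3_le (abs_nonneg α) (abs_nonneg _) (sq_nonneg _)
          (by linarith [abs_nonneg α]) (hCf1 _) (sq_abs_le_sq_one_add_abs t)
  have e1 : (fun t : ℝ => t ^ 3 * f (α * t + c)) = fun t => t * (t ^ 2 * f (α * t + c)) :=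
    funext fun t => by ring
  rw [e1, hs, integral_add hitf hit2f1]
  have e2 : (fun t : ℝ => 2 * t * f (α * t + c)) = fun t => 2 * (t * f (α * t + c)) :=
    funext fun t => by ring
  have e3 : (fun t : ℝ => t ^ 2 * (α * f1 (α * t + c))) = fun t => α * (t ^ 2 * f1 (α * t + c)) :=
    funext fun t => by ring
  rw [e2, e3, integral_const_mul, integral_const_mul,
    key1 f f1 C hd hc1 hCf hCf1 α c,
    key2 f1 f2 f3 C hd1 hd2 hc2 hc3 hCf1 hCf2 hCf3 α c]
  ring

end keys


instance stdGaussian.instIsProbabilityMeasure (n : ℕ) :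
    IsProbabilityMeasure (stdGaussian n) := by
  unfold _root_.stdGaussian; infer_instance

/-! ### Fubini for one coordinate -/

lemma fubini_coord {n : ℕ} (i : Fin (n + 1)) (G : (Fin (n + 1) → ℝ) → ℝ)
    (hG : Integrable G (stdGaussian (n + 1))) :
    (∫ x, G x ∂stdGaussian (n + 1)
        = ∫ y, ∫ t, G (i.insertNth t y) ∂γ ∂stdGaussian n) ∧
      Integrable (fun y => ∫ t, G (i.insertNth t y) ∂γ) (stdGaussian n) := by
  have hmp := measurePreserving_piFinSuccAbove (fun _ : Fin (n + 1) => γ) i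
  set e := MeasurableEquiv.piFinSuccAbove (fun _ : Fin (n + 1) => ℝ) i with he
  have hmap : Measure.map e (stdGaussian (n + 1))
      = (gaussianReal 0 1).prod (stdGaussian n) := hmp.map_eq
  have hcomp : ∀ x : Fin (n + 1) → ℝ, i.insertNth (e x).1 (e x).2 = x := by
    intro x
    simp [he, MeasurableEquiv.piFinSuccAbove, Fin.insertNthEquiv]
  have hGi : Integrable (fun z : ℝ × (Fin n → ℝ) => G (i.insertNth z.1 z.2))
      ((gaussianReal 0 1).prod (stdGaussian n)) := by
    rw [← hmap, integrable_map_equiv]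
    apply hG.congr
    filter_upwards with x
    simp only [Function.comp_apply]
    rw [hcomp x]
  constructor
  · calc ∫ x, G x ∂stdGaussian (n + 1)
        = ∫ z, G (i.insertNth z.1 z.2) ∂((gaussianReal 0 1).prod (stdGaussian n)) := by
          rw [← hmap, integral_map_equiv]
          congr 1
          funext x
          rw [hcomp x]
      _ = ∫ y, ∫ t, G (i.insertNth t y) ∂γ ∂stdGaussian n := integral_prod_symm _ hGi
  · exact hGi.integral_prod_right

/-! ### Integrability on the product space -/

lemma integrable_pi_prod {n : ℕ} (h : ℝ → ℝ) (hi : Integrable h γ) :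
    Integrable (fun x : Fin n → ℝ => ∏ m, h (x m)) (stdGaussian n) := by
  induction n with
  | zero =>
      simp only [Finset.univ_eq_empty, Finset.prod_empty]
      exact integrable_const 1
  | succ n ih =>
      have hmp := (measurePreserving_piFinSuccAbove (fun _ : Fin (n + 1) => γ) 0).symm
      rw [show stdGaussian (n + 1) = Measure.pi fun _ => γ from rfl,
        ← hmp.integrable_comp_emb (MeasurableEquiv.measurableEmbedding _)]
      have heq : ((fun x : Fin (n + 1) → ℝ => ∏ m, h (x m)) ∘
          (MeasurableEquiv.piFinSuccAbove (fun _ : Fin (n + 1) => ℝ) 0).symm)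
          = fun z : ℝ × (Fin n → ℝ) => h z.1 * ∏ m, h (z.2 m) := by
        funext z
        simp only [Function.comp_apply, MeasurableEquiv.piFinSuccAbove_symm_apply,
          Fin.insertNthEquiv, Equiv.coe_fn_mk, Fin.insertNth_zero]
        rw [Fin.prod_univ_succ]
        simp [Fin.cons_zero, Fin.cons_succ]
      rw [heq]
      exact hi.mul_prod (ih)

lemma prod_one_add_abs_ge_one' {N : ℕ} (s : Finset (Fin N)) (x : Fin N → ℝ) :
    (1:ℝ) ≤ ∏ m ∈ s, (1 + |x m|) := by
  calc (1:ℝ) = ∏ m ∈ s, (1:ℝ) := by simp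
    _ ≤ ∏ m ∈ s, (1 + |x m|) :=
      Finset.prod_le_prod (fun m _ => zero_le_one) (fun m _ => one_le_one_add_abs (x m))

lemma prod_one_add_abs_ge_one {N : ℕ} (x : Fin N → ℝ) :
    (1:ℝ) ≤ ∏ m, (1 + |x m|) := prod_one_add_abs_ge_one' Finset.univ x

lemma coord_le_prod {N : ℕ} (x : Fin N → ℝ) (i : Fin N) :
    |x i| ≤ ∏ m, (1 + |x m|) := by
  rw [← Finset.mul_prod_erase Finset.univ _ (Finset.mem_univ i)]
  have h1 : |x i| ≤ 1 + |x i| := by linarith [abs_nonneg (x i)]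
  have h2 := prod_one_add_abs_ge_one' (Finset.univ.erase i) x
  nlinarith [abs_nonneg (x i)]

lemma continuous_dot {N : ℕ} (β : Fin N → ℝ) (b : ℝ) :
    Continuous fun x : Fin N → ℝ => dotp β x + b := by
  have : Continuous fun x : Fin N → ℝ => ∑ i, β i * x i :=
    continuous_finset_sum _ fun i _ => continuous_const.mul (continuous_apply i)
  simp only [dotp]; exact this.add continuous_const

lemma integrable_master {n : ℕ} (β : Fin (n + 1) → ℝ) (b : ℝ)
    (h : ℝ → ℝ) (hc : Continuous h) (C : ℝ) (hb : ∀ t, |h t| ≤ C)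
    (P : (Fin (n + 1) → ℝ) → ℝ) (hPc : Continuous P)
    (hP : ∀ x, |P x| ≤ (∏ m, (1 + |x m|)) ^ 3) :
    Integrable (fun x => h (dotp β x + b) * P x) (stdGaussian (n + 1)) := by
  have hC0 : 0 ≤ C := (abs_nonneg (h 0)).trans (hb 0)
  have hint : Integrable (fun x : Fin (n + 1) → ℝ => C * ∏ m, (1 + |x m|) ^ 3)
      (stdGaussian (n + 1)) := by
    apply Integrable.const_mul
    apply integrable_pi_prod (fun t => (1 + |t|) ^ 3)
    apply integrable_gauss_of_growth _ (by fun_prop) 1 3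
    intro t
    rw [abs_of_nonneg (by positivity)]
    linarith
  apply hint.mono' (((hc.comp (continuous_dot β b)).mul hPc).aestronglyMeasurable)
  filter_upwards with x
  rw [norm_eq_abs, Pi.mul_apply, Function.comp_apply, abs_mul]
  calc |h (dotp β x + b)| * |P x| ≤ C * (∏ m, (1 + |x m|)) ^ 3 :=
      mul_le_mul (hb _) (hP x) (abs_nonneg _) hC0
    _ = C * ∏ m, (1 + |x m|) ^ 3 := by rw [Finset.prod_pow]

lemma integrable_plain {N : ℕ} (β : Fin N → ℝ) (b : ℝ)
    (h : ℝ → ℝ) (hc : Continuous h) (C : ℝ) (hb : ∀ t, |h t| ≤ C) :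
    Integrable (fun x => h (dotp β x + b)) (stdGaussian N) := by
  have : IsProbabilityMeasure (stdGaussian N) := by
    unfold _root_.stdGaussian; infer_instance
  apply (integrable_const C).mono' ((hc.comp (continuous_dot β b)).aestronglyMeasurable)
  filter_upwards with x
  rw [norm_eq_abs]
  exact hb _

/-! ### Bounds for coordinate monomials -/

lemma bound1 {N : ℕ} (x : Fin N → ℝ) (i : Fin N) :
    |x i| ≤ (∏ m, (1 + |x m|)) ^ 3 := by
  have hp := prod_one_add_abs_ge_one x
  exact (coord_le_prod x i).trans (le_self_pow₀ hp (by norm_num))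

lemma bound2 {N : ℕ} (x : Fin N → ℝ) (i j : Fin N) :
    |x i * x j| ≤ (∏ m, (1 + |x m|)) ^ 3 := by
  have hp := prod_one_add_abs_ge_one x
  have hi := coord_le_prod x i
  have hj := coord_le_prod x j
  rw [abs_mul]
  calc |x i| * |x j| ≤ (∏ m, (1 + |x m|)) * (∏ m, (1 + |x m|)) :=
      mul_le_mul hi hj (abs_nonneg _) (by linarith)
    _ = (∏ m, (1 + |x m|)) ^ 2 := (sq _).symm
    _ ≤ (∏ m, (1 + |x m|)) ^ 3 := pow_le_pow_right₀ hp (by norm_num)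

lemma bound3 {N : ℕ} (x : Fin N → ℝ) (i j l : Fin N) :
    |x i * x j * x l| ≤ (∏ m, (1 + |x m|)) ^ 3 := by
  have hp := prod_one_add_abs_ge_one x
  have hi := coord_le_prod x i
  have hj := coord_le_prod x j
  have hl := coord_le_prod x l
  rw [abs_mul, abs_mul]
  calc |x i| * |x j| * |x l| ≤ (∏ m, (1 + |x m|)) * (∏ m, (1 + |x m|)) * (∏ m, (1 + |x m|)) :=
      mul3_le (abs_nonneg _) (abs_nonneg _) (abs_nonneg _) hi hj hl
    _ = (∏ m, (1 + |x m|)) ^ 3 := by ring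

lemma dot_insertNth {n : ℕ} (β : Fin (n + 1) → ℝ) (b : ℝ) (i : Fin (n + 1)) (t : ℝ)
    (y : Fin n → ℝ) :
    dotp β (i.insertNth t y) + b
      = β i * t + ((∑ j, β (i.succAbove j) * y j) + b) := by
  rw [dotp, Fin.sum_univ_succAbove _ i]
  simp only [Fin.insertNth_apply_same, Fin.insertNth_apply_succAbove]
  ring

lemma L1 {n : ℕ} (f f1 : ℝ → ℝ) (C : ℝ) (hd : ∀ t, HasDerivAt f (f1 t) t)
    (hc1 : Continuous f1) (hCf : ∀ t, |f t| ≤ C) (hCf1 : ∀ t, |f1 t| ≤ C)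
    (β : Fin (n + 1) → ℝ) (b : ℝ) (i : Fin (n + 1)) :
    ∫ x, f (dotp β x + b) * x i ∂stdGaussian (n + 1)
      = β i * ∫ x, f1 (dotp β x + b) ∂stdGaussian (n + 1) := by
  have hcf : Continuous f := continuous_iff_continuousAt.2 fun t => (hd t).continuousAt
  have hGint : Integrable (fun x => f (dotp β x + b) * x i) (stdGaussian (n + 1)) :=
    integrable_master β b f hcf C hCf _ (continuous_apply i) (fun x => bound1 x i)
  have hG1int : Integrable (fun x => f1 (dotp β x + b)) (stdGaussian (n + 1)) :=
    integrable_plain β b f1 hc1 C hCf1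
  obtain ⟨hfub, -⟩ := fubini_coord i _ hGint
  obtain ⟨hfub1, -⟩ := fubini_coord i _ hG1int
  rw [hfub, hfub1, ← integral_const_mul]
  refine integral_congr_ae (Eventually.of_forall fun y => ?_)
  simp only []
  have e1 : (fun t : ℝ => f (dotp β (i.insertNth t y) + b) * (i.insertNth t y : Fin (n + 1) → ℝ) i)
      = fun t : ℝ => t * f (β i * t + ((∑ j, β (i.succAbove j) * y j) + b)) := by
    funext t
    rw [dot_insertNth, Fin.insertNth_apply_same]
    ring
  have e2 : (fun t : ℝ => f1 (dotp β (i.insertNth t y) + b))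
      = fun t : ℝ => f1 (β i * t + ((∑ j, β (i.succAbove j) * y j) + b)) := by
    funext t; rw [dot_insertNth]
  rw [e1, e2, key1 f f1 C hd hc1 hCf hCf1 (β i) _]

lemma L2 {n : ℕ} (f f1 f2 : ℝ → ℝ) (C : ℝ)
    (hd : ∀ t, HasDerivAt f (f1 t) t) (hd1 : ∀ t, HasDerivAt f1 (f2 t) t)
    (hc1 : Continuous f1) (hc2 : Continuous f2)
    (hCf : ∀ t, |f t| ≤ C) (hCf1 : ∀ t, |f1 t| ≤ C) (hCf2 : ∀ t, |f2 t| ≤ C)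
    (β : Fin (n + 1) → ℝ) (b : ℝ) (i j : Fin (n + 1)) :
    ∫ x, f (dotp β x + b) * (x i * x j) ∂stdGaussian (n + 1)
      = β i * β j * (∫ x, f2 (dotp β x + b) ∂stdGaussian (n + 1))
        + kron i j * ∫ x, f (dotp β x + b) ∂stdGaussian (n + 1) := by
  have hcf : Continuous f := continuous_iff_continuousAt.2 fun t => (hd t).continuousAt
  have hGint : Integrable (fun x => f (dotp β x + b) * (x i * x j)) (stdGaussian (n + 1)) :=
    integrable_master β b f hcf C hCf _ ((continuous_apply i).mul (continuous_apply j))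
      (fun x => bound2 x i j)
  obtain ⟨hfub, -⟩ := fubini_coord i _ hGint
  rcases eq_or_ne j i with rfl | hne
  · -- diagonal case
    have hFint : Integrable (fun x => f (dotp β x + b)) (stdGaussian (n + 1)) :=
      integrable_plain β b f hcf C hCf
    have hF2int : Integrable (fun x => f2 (dotp β x + b)) (stdGaussian (n + 1)) :=
      integrable_plain β b f2 hc2 C hCf2
    obtain ⟨hfubF, hmargF⟩ := fubini_coord j _ hFint
    obtain ⟨hfubF2, hmargF2⟩ := fubini_coord j _ hF2int
    have hmargF' : Integrable
        (fun y => ∫ t, f (dotp β (j.insertNth t y) + b) ∂γ) (stdGaussian n) := hmargF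
    have hmargF2' : Integrable
        (fun y => β j ^ 2 * ∫ t, f2 (dotp β (j.insertNth t y) + b) ∂γ) (stdGaussian n) :=
      hmargF2.const_mul _
    have hpt : (fun y : Fin n → ℝ => ∫ t, f (dotp β (j.insertNth t y) + b) *
          ((j.insertNth t y : Fin (n + 1) → ℝ) j * (j.insertNth t y : Fin (n + 1) → ℝ) j) ∂γ)
        = fun y : Fin n → ℝ => (∫ t, f (dotp β (j.insertNth t y) + b) ∂γ)
            + β j ^ 2 * ∫ t, f2 (dotp β (j.insertNth t y) + b) ∂γ := by
      funext y
      have e1 : (fun t : ℝ => f (dotp β (j.insertNth t y) + b) *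
            ((j.insertNth t y : Fin (n + 1) → ℝ) j * (j.insertNth t y : Fin (n + 1) → ℝ) j))
          = fun t : ℝ => t ^ 2 * f (β j * t + ((∑ m, β (j.succAbove m) * y m) + b)) := by
        funext t; rw [dot_insertNth, Fin.insertNth_apply_same]; ring
      have e2 : (fun t : ℝ => f (dotp β (j.insertNth t y) + b))
          = fun t : ℝ => f (β j * t + ((∑ m, β (j.succAbove m) * y m) + b)) :=
        funext fun t => by rw [dot_insertNth]
      have e3 : (fun t : ℝ => f2 (dotp β (j.insertNth t y) + b))
          = fun t : ℝ => f2 (β j * t + ((∑ m, β (j.succAbove m) * y m) + b)) :=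
        funext fun t => by rw [dot_insertNth]
      rw [e1, e2, e3]
      exact key2 f f1 f2 C hd hd1 hc1 hc2 hCf hCf1 hCf2 (β j) _
    rw [hfub, hpt, integral_add hmargF' hmargF2', integral_const_mul, ← hfubF, ← hfubF2]
    simp only [kron, if_true, eq_self_iff_true]
    ring
  · -- off-diagonal case
    obtain ⟨j', rfl⟩ := Fin.exists_succAbove_eq hne
    have hkron0 : kron i (i.succAbove j') = 0 := by
      simp only [kron, if_neg (Ne.symm (Fin.succAbove_ne i j'))]
    have hG1int : Integrable (fun x => f1 (dotp β x + b) * x (i.succAbove j'))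
        (stdGaussian (n + 1)) :=
      integrable_master β b f1 hc1 C hCf1 _ (continuous_apply _) (fun x => bound1 x _)
    obtain ⟨hfubG1, -⟩ := fubini_coord i _ hG1int
    have step1 : ∫ x, f (dotp β x + b) * (x i * x (i.succAbove j')) ∂stdGaussian (n + 1)
        = β i * ∫ x, f1 (dotp β x + b) * x (i.succAbove j') ∂stdGaussian (n + 1) := by
      rw [hfub, hfubG1, ← integral_const_mul]
      refine integral_congr_ae (Eventually.of_forall fun y => ?_)
      simp only []
      have e1 : (fun t : ℝ => f (dotp β (i.insertNth t y) + b) *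
            ((i.insertNth t y : Fin (n + 1) → ℝ) i *
              (i.insertNth t y : Fin (n + 1) → ℝ) (i.succAbove j')))
          = fun t : ℝ => y j' *
              (t * f (β i * t + ((∑ m, β (i.succAbove m) * y m) + b))) := by
        funext t
        rw [dot_insertNth, Fin.insertNth_apply_same, Fin.insertNth_apply_succAbove]
        ring
      have e2 : (fun t : ℝ => f1 (dotp β (i.insertNth t y) + b) *
            (i.insertNth t y : Fin (n + 1) → ℝ) (i.succAbove j'))
          = fun t : ℝ => f1 (β i * t + ((∑ m, β (i.succAbove m) * y m) + b)) * y j' := by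
        funext t
        rw [dot_insertNth, Fin.insertNth_apply_succAbove]
      rw [e1, e2, integral_const_mul, integral_mul_const,
        key1 f f1 C hd hc1 hCf hCf1 (β i) _]
      ring
    rw [step1, L1 f1 f2 C hd1 hc2 hCf1 hCf2 β b (i.succAbove j'), hkron0]
    ring

lemma L3 {n : ℕ} (f f1 f2 f3 : ℝ → ℝ) (C : ℝ)
    (hd : ∀ t, HasDerivAt f (f1 t) t) (hd1 : ∀ t, HasDerivAt f1 (f2 t) t)
    (hd2 : ∀ t, HasDerivAt f2 (f3 t) t)
    (hc1 : Continuous f1) (hc2 : Continuous f2) (hc3 : Continuous f3)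
    (hCf : ∀ t, |f t| ≤ C) (hCf1 : ∀ t, |f1 t| ≤ C) (hCf2 : ∀ t, |f2 t| ≤ C)
    (hCf3 : ∀ t, |f3 t| ≤ C)
    (β : Fin (n + 1) → ℝ) (b : ℝ) (i j l : Fin (n + 1)) :
    ∫ x, f (dotp β x + b) * (x i * x j * x l) ∂stdGaussian (n + 1)
      = β i * β j * β l * (∫ x, f3 (dotp β x + b) ∂stdGaussian (n + 1))
        + (kron j l * β i + kron i l * β j + kron i j * β l)
          * ∫ x, f1 (dotp β x + b) ∂stdGaussian (n + 1) := by
  have hcf : Continuous f := continuous_iff_continuousAt.2 fun t => (hd t).continuousAt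
  have hGint : Integrable (fun x => f (dotp β x + b) * (x i * x j * x l))
      (stdGaussian (n + 1)) :=
    integrable_master β b f hcf C hCf _
      (((continuous_apply i).mul (continuous_apply j)).mul (continuous_apply l))
      (fun x => bound3 x i j l)
  obtain ⟨hfub, -⟩ := fubini_coord i _ hGint
  rcases eq_or_ne j i with rfl | hj
  · rcases eq_or_ne l j with rfl | hl
    · -- Case A : all three indices equal (canonical name `l`)
      have hF1int : Integrable (fun x => f1 (dotp β x + b)) (stdGaussian (n + 1)) :=
        integrable_plain β b f1 hc1 C hCf1
      have hF3int : Integrable (fun x => f3 (dotp β x + b)) (stdGaussian (n + 1)) :=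
        integrable_plain β b f3 hc3 C hCf3
      obtain ⟨hfubF1, hmargF1⟩ := fubini_coord l _ hF1int
      obtain ⟨hfubF3, hmargF3⟩ := fubini_coord l _ hF3int
      have hm1 : Integrable
          (fun y => 3 * β l * ∫ t, f1 (dotp β (l.insertNth t y) + b) ∂γ) (stdGaussian n) :=
        hmargF1.const_mul _
      have hm3 : Integrable
          (fun y => β l ^ 3 * ∫ t, f3 (dotp β (l.insertNth t y) + b) ∂γ) (stdGaussian n) :=
        hmargF3.const_mul _
      have hpt : (fun y : Fin n → ℝ => ∫ t, f (dotp β (l.insertNth t y) + b) *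
            ((l.insertNth t y : Fin (n + 1) → ℝ) l * (l.insertNth t y : Fin (n + 1) → ℝ) l *
              (l.insertNth t y : Fin (n + 1) → ℝ) l) ∂γ)
          = fun y : Fin n → ℝ =>
              3 * β l * (∫ t, f1 (dotp β (l.insertNth t y) + b) ∂γ)
                + β l ^ 3 * ∫ t, f3 (dotp β (l.insertNth t y) + b) ∂γ := by
        funext y
        have e1 : (fun t : ℝ => f (dotp β (l.insertNth t y) + b) *
              ((l.insertNth t y : Fin (n + 1) → ℝ) l * (l.insertNth t y : Fin (n + 1) → ℝ) l *
                (l.insertNth t y : Fin (n + 1) → ℝ) l))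
            = fun t : ℝ => t ^ 3 * f (β l * t + ((∑ m, β (l.succAbove m) * y m) + b)) := by
          funext t; rw [dot_insertNth, Fin.insertNth_apply_same]; ring
        have e2 : (fun t : ℝ => f1 (dotp β (l.insertNth t y) + b))
            = fun t : ℝ => f1 (β l * t + ((∑ m, β (l.succAbove m) * y m) + b)) :=
          funext fun t => by rw [dot_insertNth]
        have e3 : (fun t : ℝ => f3 (dotp β (l.insertNth t y) + b))
            = fun t : ℝ => f3 (β l * t + ((∑ m, β (l.succAbove m) * y m) + b)) :=
          funext fun t => by rw [dot_insertNth]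
        rw [e1, e2, e3]
        exact key3 f f1 f2 f3 C hd hd1 hd2 hc1 hc2 hc3 hCf hCf1 hCf2 hCf3 (β l) _
      rw [hfub, hpt, integral_add hm1 hm3, integral_const_mul, integral_const_mul,
        ← hfubF1, ← hfubF3]
      simp only [kron, if_true, eq_self_iff_true]
      ring
    · -- Case B : first two equal (named `j`), third different
      obtain ⟨l', rfl⟩ := Fin.exists_succAbove_eq hl
      have hk : kron j (j.succAbove l') = 0 := by
        simp only [kron, if_neg (Ne.symm (Fin.succAbove_ne j l'))]
      have hGfint : Integrable (fun x => f (dotp β x + b) * x (j.succAbove l'))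
          (stdGaussian (n + 1)) :=
        integrable_master β b f hcf C hCf _ (continuous_apply _) (fun x => bound1 x _)
      have hGf2int : Integrable (fun x => f2 (dotp β x + b) * x (j.succAbove l'))
          (stdGaussian (n + 1)) :=
        integrable_master β b f2 hc2 C hCf2 _ (continuous_apply _) (fun x => bound1 x _)
      obtain ⟨hfubGf, hmargGf⟩ := fubini_coord j _ hGfint
      obtain ⟨hfubGf2, hmargGf2⟩ := fubini_coord j _ hGf2int
      have hm2 : Integrable (fun y => β j ^ 2 *
          ∫ t, f2 (dotp β (j.insertNth t y) + b) *
            (j.insertNth t y : Fin (n + 1) → ℝ) (j.succAbove l') ∂γ) (stdGaussian n) :=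
        hmargGf2.const_mul _
      have hpt : (fun y : Fin n → ℝ => ∫ t, f (dotp β (j.insertNth t y) + b) *
            ((j.insertNth t y : Fin (n + 1) → ℝ) j * (j.insertNth t y : Fin (n + 1) → ℝ) j *
              (j.insertNth t y : Fin (n + 1) → ℝ) (j.succAbove l')) ∂γ)
          = fun y : Fin n → ℝ =>
              (∫ t, f (dotp β (j.insertNth t y) + b) *
                  (j.insertNth t y : Fin (n + 1) → ℝ) (j.succAbove l') ∂γ)
                + β j ^ 2 * ∫ t, f2 (dotp β (j.insertNth t y) + b) *
                    (j.insertNth t y : Fin (n + 1) → ℝ) (j.succAbove l') ∂γ := by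
        funext y
        have e1 : (fun t : ℝ => f (dotp β (j.insertNth t y) + b) *
              ((j.insertNth t y : Fin (n + 1) → ℝ) j * (j.insertNth t y : Fin (n + 1) → ℝ) j *
                (j.insertNth t y : Fin (n + 1) → ℝ) (j.succAbove l')))
            = fun t : ℝ => y l' *
                (t ^ 2 * f (β j * t + ((∑ m, β (j.succAbove m) * y m) + b))) := by
          funext t
          rw [dot_insertNth, Fin.insertNth_apply_same, Fin.insertNth_apply_succAbove]
          ring
        have e2 : (fun t : ℝ => f (dotp β (j.insertNth t y) + b) *
              (j.insertNth t y : Fin (n + 1) → ℝ) (j.succAbove l'))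
            = fun t : ℝ => f (β j * t + ((∑ m, β (j.succAbove m) * y m) + b)) * y l' := by
          funext t
          rw [dot_insertNth, Fin.insertNth_apply_succAbove]
        have e3 : (fun t : ℝ => f2 (dotp β (j.insertNth t y) + b) *
              (j.insertNth t y : Fin (n + 1) → ℝ) (j.succAbove l'))
            = fun t : ℝ => f2 (β j * t + ((∑ m, β (j.succAbove m) * y m) + b)) * y l' := by
          funext t
          rw [dot_insertNth, Fin.insertNth_apply_succAbove]
        rw [e1, e2, e3, integral_const_mul, integral_mul_const, integral_mul_const,
          key2 f f1 f2 C hd hd1 hc1 hc2 hCf hCf1 hCf2 (β j) _]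
        ring
      rw [hfub, hpt, integral_add hmargGf hm2, integral_const_mul, ← hfubGf, ← hfubGf2,
        L1 f f1 C hd hc1 hCf hCf1 β b (j.succAbove l'),
        L1 f2 f3 C hd2 hc3 hCf2 hCf3 β b (j.succAbove l'), hk]
      simp only [kron, if_true, eq_self_iff_true]
      ring
  · obtain ⟨j', rfl⟩ := Fin.exists_succAbove_eq hj
    rcases eq_or_ne l i with rfl | hl
    · -- Case C : first and third equal (canonical name `l`), second different
      have hk : kron l (l.succAbove j') = 0 := by
        simp only [kron, if_neg (Ne.symm (Fin.succAbove_ne l j'))]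
      have hk' : kron (l.succAbove j') l = 0 := by
        simp only [kron, if_neg (Fin.succAbove_ne l j')]
      have hGfint : Integrable (fun x => f (dotp β x + b) * x (l.succAbove j'))
          (stdGaussian (n + 1)) :=
        integrable_master β b f hcf C hCf _ (continuous_apply _) (fun x => bound1 x _)
      have hGf2int : Integrable (fun x => f2 (dotp β x + b) * x (l.succAbove j'))
          (stdGaussian (n + 1)) :=
        integrable_master β b f2 hc2 C hCf2 _ (continuous_apply _) (fun x => bound1 x _)
      obtain ⟨hfubGf, hmargGf⟩ := fubini_coord l _ hGfint
      obtain ⟨hfubGf2, hmargGf2⟩ := fubini_coord l _ hGf2int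
      have hm2 : Integrable (fun y => β l ^ 2 *
          ∫ t, f2 (dotp β (l.insertNth t y) + b) *
            (l.insertNth t y : Fin (n + 1) → ℝ) (l.succAbove j') ∂γ) (stdGaussian n) :=
        hmargGf2.const_mul _
      have hpt : (fun y : Fin n → ℝ => ∫ t, f (dotp β (l.insertNth t y) + b) *
            ((l.insertNth t y : Fin (n + 1) → ℝ) l *
              (l.insertNth t y : Fin (n + 1) → ℝ) (l.succAbove j') *
              (l.insertNth t y : Fin (n + 1) → ℝ) l) ∂γ)
          = fun y : Fin n → ℝ =>
              (∫ t, f (dotp β (l.insertNth t y) + b) *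
                  (l.insertNth t y : Fin (n + 1) → ℝ) (l.succAbove j') ∂γ)
                + β l ^ 2 * ∫ t, f2 (dotp β (l.insertNth t y) + b) *
                    (l.insertNth t y : Fin (n + 1) → ℝ) (l.succAbove j') ∂γ := by
        funext y
        have e1 : (fun t : ℝ => f (dotp β (l.insertNth t y) + b) *
              ((l.insertNth t y : Fin (n + 1) → ℝ) l *
                (l.insertNth t y : Fin (n + 1) → ℝ) (l.succAbove j') *
                (l.insertNth t y : Fin (n + 1) → ℝ) l))
            = fun t : ℝ => y j' *
                (t ^ 2 * f (β l * t + ((∑ m, β (l.succAbove m) * y m) + b))) := by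
          funext t
          rw [dot_insertNth, Fin.insertNth_apply_same, Fin.insertNth_apply_succAbove]
          ring
        have e2 : (fun t : ℝ => f (dotp β (l.insertNth t y) + b) *
              (l.insertNth t y : Fin (n + 1) → ℝ) (l.succAbove j'))
            = fun t : ℝ => f (β l * t + ((∑ m, β (l.succAbove m) * y m) + b)) * y j' := by
          funext t
          rw [dot_insertNth, Fin.insertNth_apply_succAbove]
        have e3 : (fun t : ℝ => f2 (dotp β (l.insertNth t y) + b) *
              (l.insertNth t y : Fin (n + 1) → ℝ) (l.succAbove j'))
            = fun t : ℝ => f2 (β l * t + ((∑ m, β (l.succAbove m) * y m) + b)) * y j' := by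
          funext t
          rw [dot_insertNth, Fin.insertNth_apply_succAbove]
        rw [e1, e2, e3, integral_const_mul, integral_mul_const, integral_mul_const,
          key2 f f1 f2 C hd hd1 hc1 hc2 hCf hCf1 hCf2 (β l) _]
        ring
      rw [hfub, hpt, integral_add hmargGf hm2, integral_const_mul, ← hfubGf, ← hfubGf2,
        L1 f f1 C hd hc1 hCf hCf1 β b (l.succAbove j'),
        L1 f2 f3 C hd2 hc3 hCf2 hCf3 β b (l.succAbove j'), hk, hk']
      simp only [kron, if_true, eq_self_iff_true]
      ring
    · -- Case D : second and third both different from i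
      obtain ⟨l', rfl⟩ := Fin.exists_succAbove_eq hl
      have hk1 : kron i (i.succAbove j') = 0 := by
        simp only [kron, if_neg (Ne.symm (Fin.succAbove_ne i j'))]
      have hk2 : kron i (i.succAbove l') = 0 := by
        simp only [kron, if_neg (Ne.symm (Fin.succAbove_ne i l'))]
      have hG1int : Integrable
          (fun x => f1 (dotp β x + b) * (x (i.succAbove j') * x (i.succAbove l')))
          (stdGaussian (n + 1)) :=
        integrable_master β b f1 hc1 C hCf1 _
          ((continuous_apply _).mul (continuous_apply _)) (fun x => bound2 x _ _)
      obtain ⟨hfubG1, -⟩ := fubini_coord i _ hG1int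
      have hpt : (fun y : Fin n → ℝ => ∫ t, f (dotp β (i.insertNth t y) + b) *
            ((i.insertNth t y : Fin (n + 1) → ℝ) i *
              (i.insertNth t y : Fin (n + 1) → ℝ) (i.succAbove j') *
              (i.insertNth t y : Fin (n + 1) → ℝ) (i.succAbove l')) ∂γ)
          = fun y : Fin n → ℝ =>
              β i * ∫ t, f1 (dotp β (i.insertNth t y) + b) *
                ((i.insertNth t y : Fin (n + 1) → ℝ) (i.succAbove j') *
                  (i.insertNth t y : Fin (n + 1) → ℝ) (i.succAbove l')) ∂γ := by
        funext y
        have e1 : (fun t : ℝ => f (dotp β (i.insertNth t y) + b) *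
              ((i.insertNth t y : Fin (n + 1) → ℝ) i *
                (i.insertNth t y : Fin (n + 1) → ℝ) (i.succAbove j') *
                (i.insertNth t y : Fin (n + 1) → ℝ) (i.succAbove l')))
            = fun t : ℝ => (y j' * y l') *
                (t * f (β i * t + ((∑ m, β (i.succAbove m) * y m) + b))) := by
          funext t
          rw [dot_insertNth, Fin.insertNth_apply_same, Fin.insertNth_apply_succAbove,
            Fin.insertNth_apply_succAbove]
          ring
        have e2 : (fun t : ℝ => f1 (dotp β (i.insertNth t y) + b) *
              ((i.insertNth t y : Fin (n + 1) → ℝ) (i.succAbove j') *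
                (i.insertNth t y : Fin (n + 1) → ℝ) (i.succAbove l')))
            = fun t : ℝ => f1 (β i * t + ((∑ m, β (i.succAbove m) * y m) + b))
                * (y j' * y l') := by
          funext t
          rw [dot_insertNth, Fin.insertNth_apply_succAbove, Fin.insertNth_apply_succAbove]
        rw [e1, e2, integral_const_mul, integral_mul_const,
          key1 f f1 C hd hc1 hCf hCf1 (β i) _]
        ring
      rw [hfub, hpt, integral_const_mul, ← hfubG1,
        L2 f1 f2 f3 C hd1 hd2 hc2 hc3 hCf1 hCf2 hCf3 β b (i.succAbove j') (i.succAbove l'),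
        hk1, hk2]
      ring



section wrappers

variable (f f1 f2 f3 : ℝ → ℝ) (C : ℝ)

lemma M1k {d : ℕ} (hd : ∀ t, HasDerivAt f (f1 t) t)
    (hc1 : Continuous f1) (hCf : ∀ t, |f t| ≤ C) (hCf1 : ∀ t, |f1 t| ≤ C)
    (β : Fin d → ℝ) (b : ℝ) (i : Fin d) :
    ∫ x, f (dotp β x + b) * x i ∂stdGaussian d
      = β i * ∫ x, f1 (dotp β x + b) ∂stdGaussian d := by
  obtain ⟨n, rfl⟩ : ∃ n, d = n + 1 := ⟨d - 1, (Nat.succ_pred_eq_of_pos i.pos).symm⟩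
  exact L1 f f1 C hd hc1 hCf hCf1 β b i

lemma M2k {d : ℕ} (hd : ∀ t, HasDerivAt f (f1 t) t) (hd1 : ∀ t, HasDerivAt f1 (f2 t) t)
    (hc1 : Continuous f1) (hc2 : Continuous f2)
    (hCf : ∀ t, |f t| ≤ C) (hCf1 : ∀ t, |f1 t| ≤ C) (hCf2 : ∀ t, |f2 t| ≤ C)
    (β : Fin d → ℝ) (b : ℝ) (i j : Fin d) :
    ∫ x, f (dotp β x + b) * (x i * x j - kron i j) ∂stdGaussian d
      = β i * β j * ∫ x, f2 (dotp β x + b) ∂stdGaussian d := by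
  obtain ⟨n, rfl⟩ : ∃ n, d = n + 1 := ⟨d - 1, (Nat.succ_pred_eq_of_pos i.pos).symm⟩
  have hcf : Continuous f := continuous_iff_continuousAt.2 fun t => (hd t).continuousAt
  have h1 : Integrable (fun x => f (dotp β x + b) * (x i * x j)) (stdGaussian (n + 1)) :=
    integrable_master β b f hcf C hCf _ ((continuous_apply i).mul (continuous_apply j))
      (fun x => bound2 x i j)
  have h2 : Integrable (fun x => f (dotp β x + b) * kron i j) (stdGaussian (n + 1)) :=
    (integrable_plain β b f hcf C hCf).mul_const _
  have e : (fun x : Fin (n + 1) → ℝ => f (dotp β x + b) * (x i * x j - kron i j))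
      = fun x => f (dotp β x + b) * (x i * x j) - f (dotp β x + b) * kron i j :=
    funext fun x => by ring
  rw [e, integral_sub h1 h2, integral_mul_const,
    L2 f f1 f2 C hd hd1 hc1 hc2 hCf hCf1 hCf2 β b i j]
  ring

lemma M3k {d : ℕ} (hd : ∀ t, HasDerivAt f (f1 t) t) (hd1 : ∀ t, HasDerivAt f1 (f2 t) t)
    (hd2 : ∀ t, HasDerivAt f2 (f3 t) t)
    (hc1 : Continuous f1) (hc2 : Continuous f2) (hc3 : Continuous f3)
    (hCf : ∀ t, |f t| ≤ C) (hCf1 : ∀ t, |f1 t| ≤ C) (hCf2 : ∀ t, |f2 t| ≤ C)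
    (hCf3 : ∀ t, |f3 t| ≤ C)
    (β : Fin d → ℝ) (b : ℝ) (i j l : Fin d) :
    ∫ x, f (dotp β x + b) *
        (x i * x j * x l - x i * kron j l - x j * kron i l - x l * kron i j) ∂stdGaussian d
      = β i * β j * β l * ∫ x, f3 (dotp β x + b) ∂stdGaussian d := by
  obtain ⟨n, rfl⟩ : ∃ n, d = n + 1 := ⟨d - 1, (Nat.succ_pred_eq_of_pos i.pos).symm⟩
  have hcf : Continuous f := continuous_iff_continuousAt.2 fun t => (hd t).continuousAt
  have hA : Integrable (fun x => f (dotp β x + b) * (x i * x j * x l))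
      (stdGaussian (n + 1)) :=
    integrable_master β b f hcf C hCf _
      (((continuous_apply i).mul (continuous_apply j)).mul (continuous_apply l))
      (fun x => bound3 x i j l)
  have hxi : ∀ m : Fin (n + 1), Integrable (fun x => f (dotp β x + b) * x m)
      (stdGaussian (n + 1)) := fun m =>
    integrable_master β b f hcf C hCf _ (continuous_apply m) (fun x => bound1 x m)
  have hB : Integrable (fun x => f (dotp β x + b) * x i * kron j l)
      (stdGaussian (n + 1)) := (hxi i).mul_const _
  have hC' : Integrable (fun x => f (dotp β x + b) * x j * kron i l)
      (stdGaussian (n + 1)) := (hxi j).mul_const _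
  have hD : Integrable (fun x => f (dotp β x + b) * x l * kron i j)
      (stdGaussian (n + 1)) := (hxi l).mul_const _
  have e : (fun x : Fin (n + 1) → ℝ => f (dotp β x + b) *
        (x i * x j * x l - x i * kron j l - x j * kron i l - x l * kron i j))
      = fun x => f (dotp β x + b) * (x i * x j * x l) - f (dotp β x + b) * x i * kron j l
          - f (dotp β x + b) * x j * kron i l - f (dotp β x + b) * x l * kron i j :=
    funext fun x => by ring
  have hAB : Integrable (fun x => f (dotp β x + b) * (x i * x j * x l)
      - f (dotp β x + b) * x i * kron j l) (stdGaussian (n + 1)) := hA.sub hB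
  have hABC : Integrable (fun x => f (dotp β x + b) * (x i * x j * x l)
      - f (dotp β x + b) * x i * kron j l
      - f (dotp β x + b) * x j * kron i l) (stdGaussian (n + 1)) := hAB.sub hC'
  rw [e, integral_sub hABC hD, integral_sub hAB hC',
    integral_sub hA hB, integral_mul_const, integral_mul_const, integral_mul_const,
    L3 f f1 f2 f3 C hd hd1 hd2 hc1 hc2 hc3 hCf hCf1 hCf2 hCf3 β b i j l,
    M1k f f1 C hd hc1 hCf hCf1 β b i, M1k f f1 C hd hc1 hCf hCf1 β b j,
    M1k f f1 C hd hc1 hCf hCf1 β b l]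
  ring

end wrappers



theorem moments_rewrite
    (d K : ℕ) (g : ℝ → ℝ)
    (hg : ContDiff ℝ 3 g)
    (hbdd : ∀ s : ℕ, s ≤ 3 → ∃ C : ℝ, ∀ z : ℝ, |iteratedDeriv s g z| ≤ C)
    (ω : Fin K → ℝ) (β : Fin K → Fin d → ℝ) (b : Fin K → ℝ)
    (hω : ∀ k, 0 < ω k) (hωsum : ∑ k, ω k = 1) :
    (∀ i, M1 g ω β b i = ∑ k, ω k * gMom g 1 (β k) (b k) * β k i) ∧
    (∀ i j, M2 g ω β b i j = ∑ k, ω k * gMom g 2 (β k) (b k) * β k i * β k j) ∧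
    (∀ i j l, M3 g ω β b i j l =
      ∑ k, ω k * gMom g 3 (β k) (b k) * β k i * β k j * β k l) := by
  -- the derivative chain
  have hder0 : ∀ t, HasDerivAt g (iteratedDeriv 1 g t) t := by
    intro t
    rw [iteratedDeriv_one]
    exact ((hg.differentiable (by norm_num)) t).hasDerivAt
  have hder1 : ∀ t, HasDerivAt (iteratedDeriv 1 g) (iteratedDeriv 2 g t) t := by
    intro t
    rw [show iteratedDeriv 2 g = deriv (iteratedDeriv 1 g) from iteratedDeriv_succ]
    exact ((hg.differentiable_iteratedDeriv 1 (by norm_num)) t).hasDerivAt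
  have hder2 : ∀ t, HasDerivAt (iteratedDeriv 2 g) (iteratedDeriv 3 g t) t := by
    intro t
    rw [show iteratedDeriv 3 g = deriv (iteratedDeriv 2 g) from iteratedDeriv_succ]
    exact ((hg.differentiable_iteratedDeriv 2 (by norm_num)) t).hasDerivAt
  have hcont1 : Continuous (iteratedDeriv 1 g) := hg.continuous_iteratedDeriv 1 (by norm_num)
  have hcont2 : Continuous (iteratedDeriv 2 g) := hg.continuous_iteratedDeriv 2 (by norm_num)
  have hcont3 : Continuous (iteratedDeriv 3 g) := hg.continuous_iteratedDeriv 3 (by norm_num)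
  -- bounds
  obtain ⟨C0, hC0⟩ := hbdd 0 (by norm_num)
  obtain ⟨C1, hC1⟩ := hbdd 1 (by norm_num)
  obtain ⟨C2, hC2⟩ := hbdd 2 (by norm_num)
  obtain ⟨C3, hC3⟩ := hbdd 3 (by norm_num)
  set C : ℝ := max (max C0 C1) (max C2 C3) with hCdef
  have hb0 : ∀ t, |g t| ≤ C := by
    intro t
    have := hC0 t
    rw [iteratedDeriv_zero] at this
    exact this.trans (le_max_of_le_left (le_max_left _ _))
  have hb1 : ∀ t, |iteratedDeriv 1 g t| ≤ C := fun t =>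
    (hC1 t).trans (le_max_of_le_left (le_max_right _ _))
  have hb2 : ∀ t, |iteratedDeriv 2 g t| ≤ C := fun t =>
    (hC2 t).trans (le_max_of_le_right (le_max_left _ _))
  have hb3 : ∀ t, |iteratedDeriv 3 g t| ≤ C := fun t =>
    (hC3 t).trans (le_max_of_le_right (le_max_right _ _))
  have hcg : Continuous g := hg.continuous
  refine ⟨?_, ?_, ?_⟩
  · intro i
    obtain ⟨n, hd'⟩ : ∃ n, d = n + 1 := ⟨d - 1, (Nat.succ_pred_eq_of_pos i.pos).symm⟩
    subst hd'
    simp only [M1, mixP, gMom]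
    have e : (fun x : Fin (n + 1) → ℝ => (∑ k, ω k * g (dotp (β k) x + b k)) * x i)
        = fun x => ∑ k, ω k * (g (dotp (β k) x + b k) * x i) := by
      funext x
      rw [Finset.sum_mul]
      exact Finset.sum_congr rfl fun k _ => by ring
    rw [e, integral_finset_sum _ (fun k _ =>
      (integrable_master (β k) (b k) g hcg C hb0 _ (continuous_apply i)
        (fun x => bound1 x i)).const_mul (ω k))]
    refine Finset.sum_congr rfl fun k _ => ?_
    rw [integral_const_mul, M1k g (iteratedDeriv 1 g) C hder0 hcont1 hb0 hb1 (β k) (b k) i]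
    ring
  · intro i j
    obtain ⟨n, hd'⟩ : ∃ n, d = n + 1 := ⟨d - 1, (Nat.succ_pred_eq_of_pos i.pos).symm⟩
    subst hd'
    simp only [M2, mixP, gMom]
    have hterm : ∀ k : Fin K, Integrable
        (fun x : Fin (n + 1) → ℝ => g (dotp (β k) x + b k) * (x i * x j - kron i j))
        (stdGaussian (n + 1)) := by
      intro k
      have h1 : Integrable (fun x => g (dotp (β k) x + b k) * (x i * x j))
          (stdGaussian (n + 1)) :=
        integrable_master (β k) (b k) g hcg C hb0 _
          ((continuous_apply i).mul (continuous_apply j)) (fun x => bound2 x i j)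
      have h2 : Integrable (fun x => g (dotp (β k) x + b k) * kron i j)
          (stdGaussian (n + 1)) :=
        (integrable_plain (β k) (b k) g hcg C hb0).mul_const _
      have e : (fun x : Fin (n + 1) → ℝ => g (dotp (β k) x + b k) * (x i * x j - kron i j))
          = fun x => g (dotp (β k) x + b k) * (x i * x j)
              - g (dotp (β k) x + b k) * kron i j := funext fun x => by ring
      rw [e]; exact h1.sub h2
    have e : (fun x : Fin (n + 1) → ℝ =>
          (∑ k, ω k * g (dotp (β k) x + b k)) * (x i * x j - kron i j))
        = fun x => ∑ k, ω k * (g (dotp (β k) x + b k) * (x i * x j - kron i j)) := by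
      funext x
      rw [Finset.sum_mul]
      exact Finset.sum_congr rfl fun k _ => by ring
    rw [e, integral_finset_sum _ (fun k _ => (hterm k).const_mul (ω k))]
    refine Finset.sum_congr rfl fun k _ => ?_
    rw [integral_const_mul, M2k g (iteratedDeriv 1 g) (iteratedDeriv 2 g) C hder0 hder1
      hcont1 hcont2 hb0 hb1 hb2 (β k) (b k) i j]
    ring
  · intro i j l
    obtain ⟨n, hd'⟩ : ∃ n, d = n + 1 := ⟨d - 1, (Nat.succ_pred_eq_of_pos i.pos).symm⟩
    subst hd'
    simp only [M3, mixP, gMom]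
    have hterm : ∀ k : Fin K, Integrable
        (fun x : Fin (n + 1) → ℝ => g (dotp (β k) x + b k) *
          (x i * x j * x l - x i * kron j l - x j * kron i l - x l * kron i j))
        (stdGaussian (n + 1)) := by
      intro k
      have hA : Integrable (fun x => g (dotp (β k) x + b k) * (x i * x j * x l))
          (stdGaussian (n + 1)) :=
        integrable_master (β k) (b k) g hcg C hb0 _
          (((continuous_apply i).mul (continuous_apply j)).mul (continuous_apply l))
          (fun x => bound3 x i j l)
      have hxi : ∀ m : Fin (n + 1), Integrable
          (fun x => g (dotp (β k) x + b k) * x m) (stdGaussian (n + 1)) := fun m =>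
        integrable_master (β k) (b k) g hcg C hb0 _ (continuous_apply m)
          (fun x => bound1 x m)
      have e : (fun x : Fin (n + 1) → ℝ => g (dotp (β k) x + b k) *
            (x i * x j * x l - x i * kron j l - x j * kron i l - x l * kron i j))
          = fun x => g (dotp (β k) x + b k) * (x i * x j * x l)
              - g (dotp (β k) x + b k) * x i * kron j l
              - g (dotp (β k) x + b k) * x j * kron i l
              - g (dotp (β k) x + b k) * x l * kron i j := funext fun x => by ring
      rw [e]
      exact ((hA.sub ((hxi i).mul_const _)).sub ((hxi j).mul_const _)).sub
        ((hxi l).mul_const _)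
    have e : (fun x : Fin (n + 1) → ℝ => (∑ k, ω k * g (dotp (β k) x + b k)) *
          (x i * x j * x l - x i * kron j l - x j * kron i l - x l * kron i j))
        = fun x => ∑ k, ω k * (g (dotp (β k) x + b k) *
            (x i * x j * x l - x i * kron j l - x j * kron i l - x l * kron i j)) := by
      funext x
      rw [Finset.sum_mul]
      exact Finset.sum_congr rfl fun k _ => by ring
    rw [e, integral_finset_sum _ (fun k _ => (hterm k).const_mul (ω k))]
    refine Finset.sum_congr rfl fun k _ => ?_
    rw [integral_const_mul, M3k g (iteratedDeriv 1 g) (iteratedDeriv 2 g) (iteratedDeriv 3 g)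
      C hder0 hder1 hder2 hcont1 hcont2 hcont3 hb0 hb1 hb2 hb3 (β k) (b k) i j l]
    ring

end
end

section
/- Assume g satisfies (H2) and (H3) and g'''(0) ≠ 0. For (b, λ) ∈ ℝ × (0, ∞) for which the integrals below are finite and the denominator is nonzero, define m₁(b, λ) = ∫_ℝ z g'(λz + b) e^{−z²/2} dz / ∫_ℝ g'(λz + b) e^{−z²/2} dz and m₂(b, λ) = ∫_ℝ z² g'(λz + b) e^{−z²/2} dz / ∫_ℝ g'(λz + b) e^{−z²/2} dz. Then there exist B > 0 and L > 0 such that the map (b, λ) ↦ (m₁(b, λ), m₂(b, λ)) is injective on (−B, B) × (0, L). -/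
/- STATEMENT 5: Under (H2), (H3) and g'''(0) ≠ 0, the map
(b, λ) ↦ (m₁(b,λ), m₂(b,λ)) built from the first two moments of the tilted
measure with density ∝ g'(λz+b) e^{−z²/2} is injective on (−B, B) × (0, L) for
some B, L > 0. -/

open MeasureTheory Real Filter
open scoped Topology ENNReal

noncomputable section

/-- Assumption (H2) on the link function. -/
def CondH2 (g : ℝ → ℝ) : Prop :=
  StrictMono g ∧ Tendsto g atBot (nhds 0) ∧ Tendsto g atTop (nhds 1) ∧
    ContDiff ℝ 4 g ∧ StrictAntiOn (deriv g) (Set.Ici 0) ∧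
    ∀ z : ℝ, g z + g (-z) = 1

/-- Assumption (H3) on the link function: domination of the derivatives of order
2, 3, 4 near `(λ, b) = (0, 0)`. -/
def CondH3 (g : ℝ → ℝ) : Prop :=
  ∃ δ > (0 : ℝ), ∃ L : Fin 3 → ℝ → ℝ,
    (∀ s, (∀ z, 0 ≤ L s z) ∧
      Integrable (fun z => L s z * Real.exp (-z ^ 2 / 2))) ∧
    ∀ s : Fin 3, ∀ z lam b : ℝ, 0 < lam → lam < δ → |b| < δ →
      (|z| + 1) * |iteratedDeriv ((s : ℕ) + 2) g (lam * z + b)| ≤ L s z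

/-- `m₁(b, λ) = ∫ z g'(λz+b) e^{−z²/2} dz / ∫ g'(λz+b) e^{−z²/2} dz`. -/
def m1 (g : ℝ → ℝ) (b lam : ℝ) : ℝ :=
  (∫ z : ℝ, z * deriv g (lam * z + b) * Real.exp (-z ^ 2 / 2)) /
    ∫ z : ℝ, deriv g (lam * z + b) * Real.exp (-z ^ 2 / 2)

/-- `m₂(b, λ) = ∫ z² g'(λz+b) e^{−z²/2} dz / ∫ g'(λz+b) e^{−z²/2} dz`. -/
def m2 (g : ℝ → ℝ) (b lam : ℝ) : ℝ :=
  (∫ z : ℝ, z ^ 2 * deriv g (lam * z + b) * Real.exp (-z ^ 2 / 2)) /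
    ∫ z : ℝ, deriv g (lam * z + b) * Real.exp (-z ^ 2 / 2)

-- ===== auxiliary development =====

def phi (z : ℝ) : ℝ := Real.exp (-z ^ 2 / 2)

lemma phi_pos (z : ℝ) : 0 < phi z := Real.exp_pos _

lemma phi_eq : phi = fun z : ℝ => Real.exp (-(1/2) * z ^ 2) := by
  funext z; simp only [phi]; ring_nf

lemma integrable_phi : Integrable phi := by
  rw [phi_eq]; exact integrable_exp_neg_mul_sq (by norm_num)

lemma integrable_abs_mul_phi : Integrable (fun z : ℝ => |z| * phi z) := by
  have h := (integrable_mul_exp_neg_mul_sq (b := 1/2) (by norm_num)).abs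
  refine h.congr (ae_of_all _ fun z => ?_)
  simp only [abs_mul, abs_of_pos (Real.exp_pos _), phi]
  congr 2
  ring
lemma integrable_sq_mul_phi : Integrable (fun z : ℝ => z ^ 2 * phi z) := by
  have h := integrable_rpow_mul_exp_neg_mul_sq (b := 1/2) (by norm_num)
    (s := ((2:ℕ):ℝ)) (by norm_num)
  refine h.congr (ae_of_all _ fun z => ?_)
  simp only [Real.rpow_natCast]
  simp only [phi]
  congr 2
  ring

lemma hasDerivAt_phi (z : ℝ) : HasDerivAt phi (-z * phi z) z := by
  have h : HasDerivAt (fun z : ℝ => -z ^ 2 / 2) (-z) z := by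
    have := ((hasDerivAt_pow 2 z).neg).div_const 2
    simpa using this.congr_deriv (by ring)
  exact ((Real.hasDerivAt_exp _).comp z h).congr_deriv (by simp only [phi]; ring)

/-- If `F` is everywhere differentiable with derivative `F'`, and both `F` and `F'`
are integrable, then `∫ F' = 0`. -/
lemma integral_deriv_eq_zero' (F F' : ℝ → ℝ) (hF : ∀ x, HasDerivAt F (F' x) x)
    (hFi : Integrable F) (hF'i : Integrable F') : ∫ x, F' x = 0 := by
  have hmeas : ∀ s ∈ (atTop : Filter ℝ), volume s = ∞ := by
    intro s hs
    rcases mem_atTop_sets.1 hs with ⟨b, hb⟩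
    rw [← top_le_iff, ← Real.volume_Ici (a := b)]
    exact measure_mono fun x hx => hb x hx
  have hmeasb : ∀ s ∈ (atBot : Filter ℝ), volume s = ∞ := by
    intro s hs
    rcases mem_atBot_sets.1 hs with ⟨b, hb⟩
    rw [← top_le_iff, ← Real.volume_Iic (a := b)]
    exact measure_mono fun x hx => hb x hx
  have htop : Tendsto F atTop (𝓝 (limUnder atTop F)) :=
    tendsto_limUnder_of_hasDerivAt_of_integrableOn_Ioi (a := 0) (fun x _ => hF x)
      hF'i.integrableOn
  have htop0 : limUnder atTop F = 0 :=
    IntegrableAtFilter.eq_zero_of_tendsto ⟨Set.Ioi 0, Ioi_mem_atTop 0, hFi.integrableOn⟩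
      hmeas htop
  have hbot : Tendsto F atBot (𝓝 (limUnder atBot F)) :=
    tendsto_limUnder_of_hasDerivAt_of_integrableOn_Iic (a := 0) (fun x _ => hF x)
      hF'i.integrableOn
  have hbot0 : limUnder atBot F = 0 :=
    IntegrableAtFilter.eq_zero_of_tendsto ⟨Set.Iic 0, Iic_mem_atBot 0, hFi.integrableOn⟩
      hmeasb hbot
  rw [htop0] at htop
  rw [hbot0] at hbot
  have h1 : ∫ x in Set.Ioi (0:ℝ), F' x = 0 - F 0 :=
    integral_Ioi_of_hasDerivAt_of_tendsto' (fun x _ => hF x) hF'i.integrableOn htop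
  have h2 : ∫ x in Set.Iic (0:ℝ), F' x = F 0 - 0 :=
    integral_Iic_of_hasDerivAt_of_tendsto' (fun x _ => hF x) hF'i.integrableOn hbot
  rw [← intervalIntegral.integral_Iic_add_Ioi (b := 0) hF'i.integrableOn hF'i.integrableOn, h1, h2]
  ring

lemma deriv_nonpos_right {f : ℝ → ℝ} {x d : ℝ} (hf : HasDerivAt f d x)
    (h : ∀ y, x < y → f y ≤ f x) : d ≤ 0 := by
  have ht : Tendsto (slope f x) (𝓝[>] x) (𝓝 d) :=
    (hasDerivAt_iff_tendsto_slope.1 hf).mono_left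
      (nhdsWithin_mono x fun y hy => ne_of_gt hy)
  refine le_of_tendsto ht ?_
  filter_upwards [self_mem_nhdsWithin] with y hy
  rw [slope_def_field]
  apply div_nonpos_of_nonpos_of_nonneg
  · linarith [h y hy]
  · linarith [Set.mem_Ioi.1 hy]

lemma deriv_nonneg_right {f : ℝ → ℝ} {x d : ℝ} (hf : HasDerivAt f d x)
    (h : ∀ y, x < y → f x ≤ f y) : 0 ≤ d := by
  have := deriv_nonpos_right (f := fun y => -f y) hf.neg fun y hy => by
    simpa using h y hy
  linarith

section G

variable {g : ℝ → ℝ}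

lemma gd_hasDerivAt (hg : ContDiff ℝ 4 g) {n : ℕ} (hn : n < 4) (x : ℝ) :
    HasDerivAt (iteratedDeriv n g) (iteratedDeriv (n + 1) g x) x := by
  have hd : DifferentiableAt ℝ (iteratedDeriv n g) x :=
    (hg.differentiable_iteratedDeriv n (by exact_mod_cast hn)).differentiableAt
  simpa [iteratedDeriv_succ] using hd.hasDerivAt

lemma gd_comp_hasDerivAt (hg : ContDiff ℝ 4 g) {n : ℕ} (hn : n < 4) (l b z : ℝ) :
    HasDerivAt (fun z => iteratedDeriv n g (l * z + b))
      (l * iteratedDeriv (n + 1) g (l * z + b)) z := by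
  have h1 : HasDerivAt (fun z : ℝ => l * z + b) l z := by
    simpa using ((hasDerivAt_id z).const_mul l).add_const b
  exact ((gd_hasDerivAt hg hn (l * z + b)).comp z h1).congr_deriv (mul_comm _ _)

lemma deriv_g_even (hg : ContDiff ℝ 4 g) (hsym : ∀ z, g z + g (-z) = 1) (x : ℝ) :
    deriv g x = deriv g (-x) := by
  have hdg : Differentiable ℝ g := hg.differentiable (by norm_num)
  have hk : HasDerivAt (fun y : ℝ => 1 - g (-y)) (deriv g (-x)) x := by
    have h1 : HasDerivAt (fun y : ℝ => g (-y)) (deriv g (-x) * (-1)) x :=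
      (hdg (-x)).hasDerivAt.comp x (hasDerivAt_neg x)
    simpa using h1.const_sub 1
  have heq : (fun y : ℝ => 1 - g (-y)) = g := funext fun y => by linarith [hsym y]
  rw [heq] at hk
  exact hk.deriv

lemma deriv_g_nonneg (hg : ContDiff ℝ 4 g) (hmono : StrictMono g) (x : ℝ) :
    0 ≤ deriv g x :=
  deriv_nonneg_right (hg.differentiable (by norm_num) x |>.hasDerivAt)
    fun y hy => (hmono hy).le

lemma deriv_g_le (hg : ContDiff ℝ 4 g) (hsym : ∀ z, g z + g (-z) = 1)
    (hanti : StrictAntiOn (deriv g) (Set.Ici 0)) (x : ℝ) : deriv g x ≤ deriv g 0 := by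
  rcases lt_trichotomy x 0 with hx | hx | hx
  · rw [deriv_g_even hg hsym]
    exact (hanti Set.self_mem_Ici (Set.mem_Ici.2 (by linarith)) (by linarith)).le
  · rw [hx]
  · exact (hanti Set.self_mem_Ici (Set.mem_Ici.2 hx.le) hx).le

lemma deriv_g_zero_pos (hg : ContDiff ℝ 4 g) (hmono : StrictMono g)
    (hanti : StrictAntiOn (deriv g) (Set.Ici 0)) : 0 < deriv g 0 :=
  lt_of_le_of_lt (deriv_g_nonneg hg hmono 1)
    (hanti Set.self_mem_Ici (Set.mem_Ici.2 zero_le_one) zero_lt_one)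

lemma gd2_zero (hg : ContDiff ℝ 4 g) (hsym : ∀ z, g z + g (-z) = 1) :
    iteratedDeriv 2 g 0 = 0 := by
  have he : (deriv g) = fun x => deriv g (-x) := funext fun x => deriv_g_even hg hsym x
  have h1 : HasDerivAt (deriv g) (iteratedDeriv 2 g 0) 0 := by
    simpa [iteratedDeriv_one] using gd_hasDerivAt hg (n := 1) (by norm_num) 0
  have h0 : HasDerivAt (deriv g) (iteratedDeriv 2 g (-0)) (-0) := by
    simpa [iteratedDeriv_one] using gd_hasDerivAt hg (n := 1) (by norm_num) (-0)
  have h2 : HasDerivAt (fun x => deriv g (-x)) (iteratedDeriv 2 g (-0) * (-1)) 0 :=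
    h0.comp 0 (hasDerivAt_neg 0)
  rw [he] at h1
  have huniq := h1.unique h2
  simp only [neg_zero, mul_neg_one] at huniq
  linarith

lemma gd2_nonpos (hg : ContDiff ℝ 4 g) (hanti : StrictAntiOn (deriv g) (Set.Ici 0))
    {x : ℝ} (hx : 0 ≤ x) : iteratedDeriv 2 g x ≤ 0 := by
  have h1 : HasDerivAt (deriv g) (iteratedDeriv 2 g x) x := by
    simpa [iteratedDeriv_one] using gd_hasDerivAt hg (n := 1) (by norm_num) x
  exact deriv_nonpos_right h1 fun y hy =>
    (hanti (Set.mem_Ici.2 hx) (Set.mem_Ici.2 (hx.trans hy.le)) hy).le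

lemma gd3_zero_neg (hg : ContDiff ℝ 4 g) (hsym : ∀ z, g z + g (-z) = 1)
    (hanti : StrictAntiOn (deriv g) (Set.Ici 0)) (hne : iteratedDeriv 3 g 0 ≠ 0) :
    iteratedDeriv 3 g 0 < 0 := by
  have h : HasDerivAt (iteratedDeriv 2 g) (iteratedDeriv 3 g 0) 0 :=
    gd_hasDerivAt hg (by norm_num) 0
  have hle := deriv_nonpos_right h fun y hy => by
    rw [gd2_zero hg hsym]; exact gd2_nonpos hg hanti hy.le
  exact lt_of_le_of_ne hle hne

end G

section A

variable {g : ℝ → ℝ} {δ : ℝ} {Ls : Fin 3 → ℝ → ℝ}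

/-- The moments `A_s(b, λ) = ∫ g^{(s+1)}(λ z + b) φ(z) dz`. -/
def Agd (g : ℝ → ℝ) (s : ℕ) (b l : ℝ) : ℝ :=
  ∫ z : ℝ, iteratedDeriv (s + 1) g (l * z + b) * phi z

lemma gd_cont (hg : ContDiff ℝ 4 g) {n : ℕ} (hn : n ≤ 4) :
    Continuous (iteratedDeriv n g) :=
  hg.continuous_iteratedDeriv n (by exact_mod_cast hn)

lemma continuous_phi : Continuous phi := by
  unfold phi; fun_prop

lemma integrable_of_bound {f C : ℝ → ℝ} (hf : Continuous f) (hC : Integrable C)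
    (h : ∀ z, |f z| ≤ C z) : Integrable f :=
  hC.mono' hf.aestronglyMeasurable (ae_of_all _ fun z => by
    rw [Real.norm_eq_abs]; exact h z)

/-- Extension of the (H3) domination to `lam = 0`, by continuity. -/
lemma H3ext (hg : ContDiff ℝ 4 g) (hδ : 0 < δ)
    (hdom : ∀ s : Fin 3, ∀ z lam b : ℝ, 0 < lam → lam < δ → |b| < δ →
      (|z| + 1) * |iteratedDeriv ((s : ℕ) + 2) g (lam * z + b)| ≤ Ls s z)
    (s : Fin 3) (z lam b : ℝ) (h0 : 0 ≤ lam) (h1 : lam < δ) (h2 : |b| < δ) :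
    (|z| + 1) * |iteratedDeriv ((s : ℕ) + 2) g (lam * z + b)| ≤ Ls s z := by

  rcases h0.lt_or_eq with h | h
  · exact hdom s z lam b h h1 h2
  · have hcont : Continuous fun t : ℝ =>
        (|z| + 1) * |iteratedDeriv ((s : ℕ) + 2) g (t * z + b)| := by
      have hc : Continuous (iteratedDeriv ((s : ℕ) + 2) g) :=
        gd_cont hg (by have := s.isLt; omega)
      fun_prop
    have hF : Tendsto (fun t : ℝ => (|z| + 1) * |iteratedDeriv ((s : ℕ) + 2) g (t * z + b)|)
        (nhdsWithin 0 (Set.Ioi 0))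
        (nhds ((|z| + 1) * |iteratedDeriv ((s : ℕ) + 2) g (0 * z + b)|)) :=
      (hcont.tendsto 0).mono_left nhdsWithin_le_nhds
    rw [← h]
    refine le_of_tendsto hF ?_
    filter_upwards [Ioo_mem_nhdsGT_of_mem (Set.mem_Ico.2 ⟨le_refl (0:ℝ), hδ⟩)] with t ht
    exact hdom s z t b ht.1 ht.2 h2

/-- Mean-value bound for differences of `g^{(s+1)}` along the parameter box. -/
lemma gd_pair_bound (hg : ContDiff ℝ 4 g) (hδ : 0 < δ)
    (hdom' : ∀ s : Fin 3, ∀ z lam b : ℝ, 0 ≤ lam → lam < δ → |b| < δ →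
      (|z| + 1) * |iteratedDeriv ((s : ℕ) + 2) g (lam * z + b)| ≤ Ls s z)
    (hLnn : ∀ s z, 0 ≤ Ls s z)
    (s : ℕ) (hs : s < 3) (z : ℝ) {b₁ l₁ b₂ l₂ : ℝ}
    (hb₁ : |b₁| ≤ δ / 2) (hb₂ : |b₂| ≤ δ / 2)
    (hl₁ : 0 ≤ l₁) (hl₁' : l₁ ≤ δ / 2) (hl₂ : 0 ≤ l₂) (hl₂' : l₂ ≤ δ / 2) :
    |iteratedDeriv (s + 1) g (l₁ * z + b₁)
      - iteratedDeriv (s + 1) g (l₂ * z + b₂)|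
      ≤ (|l₁ - l₂| + |b₁ - b₂|) * Ls ⟨s, hs⟩ z := by
  set c : ℝ := (l₁ - l₂) * z + (b₁ - b₂) with hc
  set dd : ℝ := l₂ * z + b₂ with hdd
  set u : ℝ → ℝ := fun t => iteratedDeriv (s + 1) g (c * t + dd) with hudef
  have hu : ∀ t : ℝ, HasDerivAt u (c * iteratedDeriv (s + 2) g (c * t + dd)) t := by
    intro t
    have h := gd_comp_hasDerivAt hg (n := s + 1) (by omega) c dd t
    exact h
  have bound : ∀ t ∈ Set.Icc (0 : ℝ) 1,
      ‖c * iteratedDeriv (s + 2) g (c * t + dd)‖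
        ≤ (|l₁ - l₂| + |b₁ - b₂|) * Ls ⟨s, hs⟩ z := by
    intro t ht
    obtain ⟨ht0, ht1⟩ := ht
    have harg : c * t + dd = (l₂ + t * (l₁ - l₂)) * z + (b₂ + t * (b₁ - b₂)) := by
      rw [hc, hdd]; ring
    set lt := l₂ + t * (l₁ - l₂) with hlt
    set bt := b₂ + t * (b₁ - b₂) with hbt
    have hlt0 : 0 ≤ lt := by
      have h1 : lt = (1 - t) * l₂ + t * l₁ := by rw [hlt]; ring
      rw [h1]
      have := mul_nonneg (by linarith : (0:ℝ) ≤ 1 - t) hl₂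
      have := mul_nonneg ht0 hl₁
      linarith
    have hltδ : lt < δ := by
      have h1 : lt = (1 - t) * l₂ + t * l₁ := by rw [hlt]; ring
      have h2 : (1 - t) * l₂ ≤ (1 - t) * (δ / 2) :=
        mul_le_mul_of_nonneg_left hl₂' (by linarith)
      have h3 : t * l₁ ≤ t * (δ / 2) := mul_le_mul_of_nonneg_left hl₁' ht0
      rw [h1]; nlinarith
    have hbtδ : |bt| < δ := by
      have h1 : bt = (1 - t) * b₂ + t * b₁ := by rw [hbt]; ring
      have h2 : |bt| ≤ (1 - t) * |b₂| + t * |b₁| := by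
        rw [h1]
        refine le_trans (abs_add_le _ _) ?_
        rw [abs_mul, abs_mul, abs_of_nonneg (by linarith : (0:ℝ) ≤ 1 - t),
          abs_of_nonneg ht0]
      have h3 : (1 - t) * |b₂| ≤ (1 - t) * (δ / 2) :=
        mul_le_mul_of_nonneg_left hb₂ (by linarith)
      have h4 : t * |b₁| ≤ t * (δ / 2) := mul_le_mul_of_nonneg_left hb₁ ht0
      nlinarith
    have hb := hdom' ⟨s, hs⟩ z lt bt hlt0 hltδ hbtδ
    rw [Real.norm_eq_abs, abs_mul, harg]
    have hcabs : |c| ≤ |l₁ - l₂| * |z| + |b₁ - b₂| := by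
      rw [hc]
      refine le_trans (abs_add_le _ _) ?_
      rw [abs_mul]
    set G := |iteratedDeriv (s + 2) g (lt * z + bt)| with hG
    have hG0 : 0 ≤ G := abs_nonneg _
    have h1 : |c| * G ≤ (|l₁ - l₂| * |z| + |b₁ - b₂|) * G :=
      mul_le_mul_of_nonneg_right hcabs hG0
    have h2 : (|l₁ - l₂| * |z| + |b₁ - b₂|) * G
        ≤ (|l₁ - l₂| + |b₁ - b₂|) * ((|z| + 1) * G) := by
      nlinarith [mul_nonneg (mul_nonneg (abs_nonneg (b₁ - b₂)) (abs_nonneg z)) hG0,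
        mul_nonneg (abs_nonneg (l₁ - l₂)) hG0]
    have h3 : (|l₁ - l₂| + |b₁ - b₂|) * ((|z| + 1) * G)
        ≤ (|l₁ - l₂| + |b₁ - b₂|) * Ls ⟨s, hs⟩ z :=
      mul_le_mul_of_nonneg_left hb (by positivity)
    linarith
  have key := Convex.norm_image_sub_le_of_norm_hasDerivWithin_le
    (f := u) (f' := fun t => c * iteratedDeriv (s + 2) g (c * t + dd))
    (s := Set.Icc (0 : ℝ) 1)
    (fun t _ => (hu t).hasDerivWithinAt) bound (convex_Icc 0 1)
    (Set.mem_Icc.2 ⟨le_refl 0, zero_le_one⟩) (Set.mem_Icc.2 ⟨zero_le_one, le_refl 1⟩)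
  have e1 : c * 1 + dd = l₁ * z + b₁ := by rw [hc, hdd]; ring
  have e0 : c * 0 + dd = l₂ * z + b₂ := by rw [hc, hdd]; ring
  have hu1 : u 1 = iteratedDeriv (s + 1) g (l₁ * z + b₁) := by
    show iteratedDeriv (s + 1) g (c * 1 + dd) = _
    rw [e1]
  have hu0 : u 0 = iteratedDeriv (s + 1) g (l₂ * z + b₂) := by
    show iteratedDeriv (s + 1) g (c * 0 + dd) = _
    rw [e0]
  rw [hu1, hu0] at key
  simpa using key

end A

section B

variable {g : ℝ → ℝ} {δ : ℝ} {Ls : Fin 3 → ℝ → ℝ}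

lemma integrable_gdphi (hg : ContDiff ℝ 4 g) (hδ : 0 < δ)
    (hdom' : ∀ s : Fin 3, ∀ z lam b : ℝ, 0 ≤ lam → lam < δ → |b| < δ →
      (|z| + 1) * |iteratedDeriv ((s : ℕ) + 2) g (lam * z + b)| ≤ Ls s z)
    (hLnn : ∀ s z, 0 ≤ Ls s z)
    (hLint : ∀ s, Integrable (fun z => Ls s z * phi z))
    (s : ℕ) (hs : s < 3) {b l : ℝ} (hb : |b| ≤ δ / 2) (hl0 : 0 ≤ l) (hl : l ≤ δ / 2) :
    Integrable (fun z => iteratedDeriv (s + 1) g (l * z + b) * phi z) := by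
  have hcont : Continuous fun z => iteratedDeriv (s + 1) g (l * z + b) * phi z := by
    have h1 : Continuous (iteratedDeriv (s + 1) g) :=
      gd_cont hg (by omega)
    exact (h1.comp (by continuity)).mul continuous_phi
  refine integrable_of_bound hcont
    (C := fun z => δ * (Ls ⟨s, hs⟩ z * phi z) + |iteratedDeriv (s + 1) g 0| * phi z)
    (((hLint ⟨s, hs⟩).const_mul δ).add (integrable_phi.const_mul _)) fun z => ?_
  rw [abs_mul, abs_of_pos (phi_pos z)]
  have hpair := gd_pair_bound hg hδ hdom' hLnn s hs z (b₁ := b) (l₁ := l) (b₂ := 0) (l₂ := 0)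
    hb (by simpa using le_of_lt (half_pos hδ)) hl0 hl le_rfl (le_of_lt (half_pos hδ))
  rw [show (0 : ℝ) * z + 0 = 0 by ring] at hpair
  have h2 : |iteratedDeriv (s + 1) g (l * z + b)|
      ≤ δ * Ls ⟨s, hs⟩ z + |iteratedDeriv (s + 1) g 0| := by
    have h3 := abs_sub_abs_le_abs_sub (iteratedDeriv (s + 1) g (l * z + b))
      (iteratedDeriv (s + 1) g 0)
    have h4 : (|l - 0| + |b - 0|) * Ls ⟨s, hs⟩ z ≤ δ * Ls ⟨s, hs⟩ z := by
      apply mul_le_mul_of_nonneg_right _ (hLnn ⟨s, hs⟩ z)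
      rw [sub_zero, sub_zero, abs_of_nonneg hl0]
      linarith
    linarith
  calc |iteratedDeriv (s + 1) g (l * z + b)| * phi z
      ≤ (δ * Ls ⟨s, hs⟩ z + |iteratedDeriv (s + 1) g 0|) * phi z :=
        mul_le_mul_of_nonneg_right h2 (le_of_lt (phi_pos z))
    _ = δ * (Ls ⟨s, hs⟩ z * phi z) + |iteratedDeriv (s + 1) g 0| * phi z := by ring

lemma Agd_lip (hg : ContDiff ℝ 4 g) (hδ : 0 < δ)
    (hdom' : ∀ s : Fin 3, ∀ z lam b : ℝ, 0 ≤ lam → lam < δ → |b| < δ →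
      (|z| + 1) * |iteratedDeriv ((s : ℕ) + 2) g (lam * z + b)| ≤ Ls s z)
    (hLnn : ∀ s z, 0 ≤ Ls s z)
    (hLint : ∀ s, Integrable (fun z => Ls s z * phi z))
    (s : ℕ) (hs : s < 3) {b₁ l₁ b₂ l₂ : ℝ}
    (hb₁ : |b₁| ≤ δ / 2) (hb₂ : |b₂| ≤ δ / 2)
    (hl₁ : 0 ≤ l₁) (hl₁' : l₁ ≤ δ / 2) (hl₂ : 0 ≤ l₂) (hl₂' : l₂ ≤ δ / 2) :
    |Agd g s b₁ l₁ - Agd g s b₂ l₂|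
      ≤ (|l₁ - l₂| + |b₁ - b₂|) * ∫ z, Ls ⟨s, hs⟩ z * phi z := by
  have i1 := integrable_gdphi hg hδ hdom' hLnn hLint s hs hb₁ hl₁ hl₁'
  have i2 := integrable_gdphi hg hδ hdom' hLnn hLint s hs hb₂ hl₂ hl₂'
  rw [Agd, Agd, ← integral_sub i1 i2]
  rw [← Real.norm_eq_abs]
  refine le_trans (norm_integral_le_integral_norm _) ?_
  rw [← integral_const_mul]
  refine integral_mono (i1.sub i2).norm (((hLint ⟨s, hs⟩).const_mul _)) fun z => ?_
  rw [Real.norm_eq_abs]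
  have hpair := gd_pair_bound hg hδ hdom' hLnn s hs z hb₁ hb₂ hl₁ hl₁' hl₂ hl₂'
  calc |iteratedDeriv (s + 1) g (l₁ * z + b₁) * phi z
        - iteratedDeriv (s + 1) g (l₂ * z + b₂) * phi z|
      = |(iteratedDeriv (s + 1) g (l₁ * z + b₁)
          - iteratedDeriv (s + 1) g (l₂ * z + b₂)) * phi z| := by
        rw [sub_mul]
    _ = |iteratedDeriv (s + 1) g (l₁ * z + b₁)
          - iteratedDeriv (s + 1) g (l₂ * z + b₂)| * phi z := by
        rw [abs_mul, abs_of_pos (phi_pos z)]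
    _ ≤ (|l₁ - l₂| + |b₁ - b₂|) * Ls ⟨s, hs⟩ z * phi z :=
        mul_le_mul_of_nonneg_right hpair (le_of_lt (phi_pos z))
    _ = (|l₁ - l₂| + |b₁ - b₂|) * (Ls ⟨s, hs⟩ z * phi z) := by ring

lemma Agd_zero (g : ℝ → ℝ) (n : ℕ) :
    Agd g n 0 0 = iteratedDeriv (n + 1) g 0 * ∫ z, phi z := by
  rw [Agd, show (fun z : ℝ => iteratedDeriv (n + 1) g (0 * z + 0) * phi z)
    = fun z : ℝ => iteratedDeriv (n + 1) g 0 * phi z from by funext z; norm_num,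
    integral_const_mul]

/-- Generic Stein-type identity `∫ z u(z) φ(z) = ∫ u'(z) φ(z)`. -/
lemma stein_s5 (u u' : ℝ → ℝ) (hu : ∀ z, HasDerivAt u (u' z) z)
    (hiu : Integrable (fun z => u z * phi z))
    (hizu : Integrable (fun z => z * (u z * phi z)))
    (hiu' : Integrable (fun z => u' z * phi z)) :
    ∫ z, z * (u z * phi z) = ∫ z, u' z * phi z := by
  have hF : ∀ z, HasDerivAt (fun z => -(u z * phi z))
      (z * (u z * phi z) - u' z * phi z) z := by
    intro z
    have h := ((hu z).mul (hasDerivAt_phi z)).neg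
    exact h.congr_deriv (by ring)
  have h0 := integral_deriv_eq_zero' _ _ hF hiu.neg (hizu.sub hiu')
  rw [integral_sub hizu hiu'] at h0
  linarith

end B

section C

variable {g : ℝ → ℝ} {δ : ℝ} {Ls : Fin 3 → ℝ → ℝ}

/-- The key second-order estimate: `A₁(b,λ) - A₁(b',λ) ≈ (b - b') g'''(0) ∫φ`. -/
lemma A1_shift (hg : ContDiff ℝ 4 g) (hδ : 0 < δ)
    (hdom' : ∀ s : Fin 3, ∀ z lam b : ℝ, 0 ≤ lam → lam < δ → |b| < δ →
      (|z| + 1) * |iteratedDeriv ((s : ℕ) + 2) g (lam * z + b)| ≤ Ls s z)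
    (hLnn : ∀ s z, 0 ≤ Ls s z)
    (hLint : ∀ s, Integrable (fun z => Ls s z * phi z))
    {b b' l η' : ℝ} (hη : 0 < η') (hη' : η' ≤ δ / 2) (hb : |b| ≤ η') (hb' : |b'| ≤ η')
    (hl0 : 0 ≤ l) (hl : l ≤ η') :
    |Agd g 1 b l - Agd g 1 b' l - (b - b') * (iteratedDeriv (2 + 1) g 0 * ∫ z, phi z)|
      ≤ 2 * η' * (∫ z, Ls ⟨2, by norm_num⟩ z * phi z) * |b - b'| := by
  have hbδ : |b| ≤ δ / 2 := le_trans hb hη'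
  have hb'δ : |b'| ≤ δ / 2 := le_trans hb' hη'
  have hlδ : l ≤ δ / 2 := le_trans hl hη'
  -- pointwise mean value estimate
  have hpt : ∀ z : ℝ, |iteratedDeriv (1 + 1) g (l * z + b) - iteratedDeriv (1 + 1) g (l * z + b')
      - (b - b') * iteratedDeriv (2 + 1) g 0| ≤ 2 * η' * Ls ⟨2, by norm_num⟩ z * |b - b'| := by
    intro z
    set v : ℝ → ℝ := fun t => iteratedDeriv (1 + 1) g (l * z + t)
      - t * iteratedDeriv (2 + 1) g 0 with hv
    have hvd : ∀ t : ℝ, HasDerivAt v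
        (iteratedDeriv (1 + 1 + 1) g (1 * t + l * z) - iteratedDeriv (2 + 1) g 0) t := by
      intro t
      have h1 := gd_comp_hasDerivAt hg (n := 1 + 1) (by norm_num) 1 (l * z) t
      have h2 : HasDerivAt (fun t : ℝ => t * iteratedDeriv (2 + 1) g 0)
          (iteratedDeriv (2 + 1) g 0) t := by
        simpa using (hasDerivAt_id t).mul_const (iteratedDeriv (2 + 1) g 0)
      have h3 : (fun t : ℝ => iteratedDeriv (1 + 1) g (1 * t + l * z))
          = fun t : ℝ => iteratedDeriv (1 + 1) g (l * z + t) := by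
        funext t; rw [show (1 : ℝ) * t + l * z = l * z + t by ring]
      rw [h3] at h1
      exact (h1.sub h2).congr_deriv (by ring)
    have hbound : ∀ t ∈ Set.Icc (-η') η',
        ‖iteratedDeriv (1 + 1 + 1) g (1 * t + l * z) - iteratedDeriv (2 + 1) g 0‖
          ≤ 2 * η' * Ls ⟨2, by norm_num⟩ z := by
      intro t ht
      have htabs : |t| ≤ δ / 2 := by
        rw [abs_le]; exact ⟨by linarith [ht.1, hη'], by linarith [ht.2, hη']⟩
      have hpair := gd_pair_bound hg hδ hdom' hLnn 2 (by norm_num) z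
        (b₁ := t) (l₁ := l) (b₂ := 0) (l₂ := 0) htabs
        (by simpa using le_of_lt (half_pos hδ)) hl0 hlδ le_rfl (le_of_lt (half_pos hδ))
      rw [show (0 : ℝ) * z + 0 = 0 by ring] at hpair
      rw [Real.norm_eq_abs, show (1 : ℝ) * t + l * z = l * z + t by ring]
      have h5 : (|l - 0| + |t - 0|) * Ls ⟨2, by norm_num⟩ z
          ≤ 2 * η' * Ls ⟨2, by norm_num⟩ z := by
        apply mul_le_mul_of_nonneg_right _ (hLnn _ z)
        rw [sub_zero, sub_zero, abs_of_nonneg hl0]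
        have : |t| ≤ η' := abs_le.2 ⟨ht.1, ht.2⟩
        linarith
      exact le_trans (le_trans (le_of_eq (by rw [show (2:ℕ) + 1 = 1 + 1 + 1 by norm_num])) hpair) h5
    have key := Convex.norm_image_sub_le_of_norm_hasDerivWithin_le
      (f := v) (f' := fun t => iteratedDeriv (1 + 1 + 1) g (1 * t + l * z)
        - iteratedDeriv (2 + 1) g 0)
      (s := Set.Icc (-η') η')
      (fun t _ => (hvd t).hasDerivWithinAt) hbound (convex_Icc _ _)
      (Set.mem_Icc.2 ⟨neg_le_of_abs_le hb', le_of_abs_le hb'⟩)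
      (Set.mem_Icc.2 ⟨neg_le_of_abs_le hb, le_of_abs_le hb⟩)
    have hv1 : v b - v b' = iteratedDeriv (1 + 1) g (l * z + b)
        - iteratedDeriv (1 + 1) g (l * z + b') - (b - b') * iteratedDeriv (2 + 1) g 0 := by
      rw [hv]; ring
    rw [hv1, Real.norm_eq_abs, Real.norm_eq_abs] at key
    exact key
  -- integrate
  have i1 := integrable_gdphi hg hδ hdom' hLnn hLint 1 (by norm_num) hbδ hl0 hlδ
  have i2 := integrable_gdphi hg hδ hdom' hLnn hLint 1 (by norm_num) hb'δ hl0 hlδ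
  have i3 : Integrable (fun z => ((b - b') * iteratedDeriv (2 + 1) g 0) * phi z) :=
    integrable_phi.const_mul _
  have hval : (b - b') * (iteratedDeriv (2 + 1) g 0 * ∫ z, phi z)
      = ∫ z, ((b - b') * iteratedDeriv (2 + 1) g 0) * phi z := by
    rw [integral_const_mul]; ring
  rw [show Agd g 1 b l = ∫ z, iteratedDeriv (1 + 1) g (l * z + b) * phi z from rfl,
    show Agd g 1 b' l = ∫ z, iteratedDeriv (1 + 1) g (l * z + b') * phi z from rfl,
    hval, ← integral_sub i1 i2]
  have i12 : Integrable (fun z => iteratedDeriv (1 + 1) g (l * z + b) * phi z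
      - iteratedDeriv (1 + 1) g (l * z + b') * phi z) := i1.sub i2
  rw [← integral_sub i12 i3]
  rw [← Real.norm_eq_abs]
  refine le_trans (norm_integral_le_integral_norm _) ?_
  have iR : Integrable (fun z => 2 * η' * |b - b'| * (Ls ⟨2, by norm_num⟩ z * phi z)) :=
    (hLint _).const_mul _
  have hle : ∀ z : ℝ, ‖iteratedDeriv (1 + 1) g (l * z + b) * phi z
      - iteratedDeriv (1 + 1) g (l * z + b') * phi z
      - ((b - b') * iteratedDeriv (2 + 1) g 0) * phi z‖
      ≤ 2 * η' * |b - b'| * (Ls ⟨2, by norm_num⟩ z * phi z) := by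
    intro z
    rw [Real.norm_eq_abs,
      show iteratedDeriv (1 + 1) g (l * z + b) * phi z
        - iteratedDeriv (1 + 1) g (l * z + b') * phi z
        - ((b - b') * iteratedDeriv (2 + 1) g 0) * phi z
      = (iteratedDeriv (1 + 1) g (l * z + b) - iteratedDeriv (1 + 1) g (l * z + b')
        - (b - b') * iteratedDeriv (2 + 1) g 0) * phi z from by ring,
      abs_mul, abs_of_pos (phi_pos z)]
    calc _ ≤ (2 * η' * Ls ⟨2, by norm_num⟩ z * |b - b'|) * phi z :=
          mul_le_mul_of_nonneg_right (hpt z) (le_of_lt (phi_pos z))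
      _ = 2 * η' * |b - b'| * (Ls ⟨2, by norm_num⟩ z * phi z) := by ring
  have i123 : Integrable (fun z => iteratedDeriv (1 + 1) g (l * z + b) * phi z
      - iteratedDeriv (1 + 1) g (l * z + b') * phi z
      - ((b - b') * iteratedDeriv (2 + 1) g 0) * phi z) := i12.sub i3
  refine le_trans (integral_mono i123.norm iR hle) ?_
  rw [integral_const_mul]
  apply le_of_eq
  ring

end C

-- ===== algebraic core =====

set_option maxHeartbeats 1000000 in
/-- Pure-arithmetic core of the injectivity argument. -/
lemma key_algebra (e1 e3 M0 M1 M2 η p CD : ℝ)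
    (b l b' l' A0 A1 A2 A0' A1' A2' A1m : ℝ)
    (he1 : 0 < e1) (he3 : 0 < e3) (hM0 : 0 ≤ M0) (hM1 : 0 ≤ M1) (hM2 : 0 ≤ M2)
    (hp : p = e1 * e3 / 4) (hCD : CD = 3 * e3 / 2 * M0 + 3 * e1 / 2 * M2)
    (hb : |b| < η) (hb' : |b'| < η)
    (hl : 0 < l) (hl' : 0 < l') (hlη : l < η) (hl'η : l' < η)
    (hA0 : |A0 - e1| ≤ 2 * η * M0) (hA0' : |A0' - e1| ≤ 2 * η * M0)
    (hA1 : |A1| ≤ 2 * η * M1) (hA1' : |A1'| ≤ 2 * η * M1)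
    (hA2 : |A2 + e3| ≤ 2 * η * M2) (hA2' : |A2' + e3| ≤ 2 * η * M2)
    (hL0 : |A0 - A0'| ≤ (|l - l'| + |b - b'|) * M0)
    (hL1 : |A1m - A1'| ≤ |l - l'| * M1)
    (hL2 : |A2 - A2'| ≤ (|l - l'| + |b - b'|) * M2)
    (hKey : |A1 - A1m - (b - b') * (-e3)| ≤ 2 * η * M2 * |b - b'|)
    (hc1 : 2 * η * M0 ≤ e1 / 2) (hc2 : 2 * η * M2 ≤ e3 / 2)
    (hc3 : η * CD ≤ p / 2)
    (hc4 : η * (p * e1 * M2 + 3 * e1 * M1 * CD + 4 * p * M1 * M0 + 18 * M1 * e1 * CD)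
      < p * (e1 / 2) * e3)
    (hE1 : l * A1 * A0' = l' * A1' * A0)
    (hE2 : l ^ 2 * A2 * A0' = l' ^ 2 * A2' * A0) :
    b = b' ∧ l = l' := by
  have hp0 : 0 < p := by rw [hp]; positivity
  have hCD0 : 0 ≤ CD := by rw [hCD]; positivity
  have hη : 0 < η := lt_of_le_of_lt (abs_nonneg b) hb
  have hA0lb : e1 / 2 ≤ A0 := by have := abs_le.1 hA0; linarith [this.1]
  have hA0ub : A0 ≤ 3 * e1 / 2 := by have := abs_le.1 hA0; linarith [this.2]
  have hA0'lb : e1 / 2 ≤ A0' := by have := abs_le.1 hA0'; linarith [this.1]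
  have hA0'ub : A0' ≤ 3 * e1 / 2 := by have := abs_le.1 hA0'; linarith [this.2]
  have hA2lb : e3 / 2 ≤ -A2 := by have := abs_le.1 hA2; linarith [this.2]
  have hA2ub : -A2 ≤ 3 * e3 / 2 := by have := abs_le.1 hA2; linarith [this.1]
  have hA2'lb : e3 / 2 ≤ -A2' := by have := abs_le.1 hA2'; linarith [this.2]
  have hA2'ub : -A2' ≤ 3 * e3 / 2 := by have := abs_le.1 hA2'; linarith [this.1]
  set u : ℝ := -(A2 * A0') with hu
  set u' : ℝ := -(A2' * A0) with hu'
  have hulb : p ≤ u := by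
    have h : u = -A2 * A0' := by rw [hu]; ring
    have k := mul_le_mul hA2lb hA0'lb (by positivity) (by linarith)
    rw [h, hp]; linarith only [k]
  have huub : u ≤ 9 * p := by
    have h : u = -A2 * A0' := by rw [hu]; ring
    have k := mul_le_mul hA2ub hA0'ub (by linarith) (by positivity)
    rw [h, hp]; linarith only [k]
  have hu'lb : p ≤ u' := by
    have h : u' = -A2' * A0 := by rw [hu']; ring
    have k := mul_le_mul hA2'lb hA0lb (by positivity) (by linarith)
    rw [h, hp]; linarith only [k]
  have hu'ub : u' ≤ 9 * p := by
    have h : u' = -A2' * A0 := by rw [hu']; ring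
    have k := mul_le_mul hA2'ub hA0ub (by linarith) (by positivity)
    rw [h, hp]; linarith only [k]
  have hE2' : l ^ 2 * u = l' ^ 2 * u' := by rw [hu, hu']; linear_combination -hE2
  have h9 : l' ^ 2 * p ≤ 9 * l ^ 2 * p := by
    have a1 : l' ^ 2 * p ≤ l' ^ 2 * u' := mul_le_mul_of_nonneg_left hu'lb (sq_nonneg l')
    have a2 : l ^ 2 * u ≤ l ^ 2 * (9 * p) := mul_le_mul_of_nonneg_left huub (sq_nonneg l)
    have a3 : l ^ 2 * (9 * p) = 9 * l ^ 2 * p := by ring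
    linarith only [hE2', a1, a2, a3]
  have h9' : l' ^ 2 ≤ 9 * l ^ 2 := le_of_mul_le_mul_right h9 hp0
  have hll' : l' ≤ 3 * l := by
    by_contra hgt
    push_neg at hgt
    have := mul_pos (sub_pos.2 hgt) (show (0:ℝ) < l' + 3 * l by linarith)
    nlinarith only [this, h9']
  set Δ : ℝ := |l - l'| + |b - b'| with hΔ
  have hΔ0 : 0 ≤ Δ := by positivity
  have hud' : |u' - u| ≤ CD * Δ := by
    have hrw2 : u' - u = A2 * (A0' - A0) + A0 * (A2 - A2') := by rw [hu, hu']; ring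
    have h1 : |A2 * (A0' - A0)| ≤ (3 * e3 / 2) * (Δ * M0) := by
      rw [abs_mul]
      have hA2abs : |A2| ≤ 3 * e3 / 2 := by rw [abs_le]; constructor <;> linarith
      have h0 : |A0' - A0| ≤ Δ * M0 := by rw [abs_sub_comm, hΔ]; exact hL0
      exact mul_le_mul hA2abs h0 (abs_nonneg _) (by linarith)
    have h2 : |A0 * (A2 - A2')| ≤ (3 * e1 / 2) * (Δ * M2) := by
      rw [abs_mul]
      have hA0abs : |A0| ≤ 3 * e1 / 2 := by rw [abs_le]; constructor <;> linarith
      have h0 : |A2 - A2'| ≤ Δ * M2 := by rw [hΔ]; exact hL2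
      exact mul_le_mul hA0abs h0 (abs_nonneg _) (by linarith)
    calc |u' - u| ≤ |A2 * (A0' - A0)| + |A0 * (A2 - A2')| := by
          rw [hrw2]; exact abs_add_le _ _
      _ ≤ CD * Δ := by rw [hCD]; ring_nf; ring_nf at h1 h2; linarith only [h1, h2]
  have hs2a : p * ((l + l') * |l - l'|) ≤ l' ^ 2 * (CD * Δ) := by
    have heq : (l ^ 2 - l' ^ 2) * u = l' ^ 2 * (u' - u) := by linear_combination hE2'
    have habs : |l ^ 2 - l' ^ 2| * u = l' ^ 2 * |u' - u| := by
      calc |l ^ 2 - l' ^ 2| * u = |(l ^ 2 - l' ^ 2) * u| := by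
            rw [abs_mul, abs_of_pos (lt_of_lt_of_le hp0 hulb)]
        _ = |l' ^ 2 * (u' - u)| := by rw [heq]
        _ = l' ^ 2 * |u' - u| := by rw [abs_mul, abs_of_nonneg (sq_nonneg l')]
    have h1 : |l ^ 2 - l' ^ 2| = (l + l') * |l - l'| := by
      rw [show l ^ 2 - l' ^ 2 = (l + l') * (l - l') by ring, abs_mul,
        abs_of_pos (by linarith)]
    have h2 : l' ^ 2 * |u' - u| ≤ l' ^ 2 * (CD * Δ) :=
      mul_le_mul_of_nonneg_left hud' (sq_nonneg l')
    calc p * ((l + l') * |l - l'|) ≤ u * ((l + l') * |l - l'|) :=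
          mul_le_mul_of_nonneg_right hulb (by positivity)
      _ = |l ^ 2 - l' ^ 2| * u := by rw [h1]; ring
      _ = l' ^ 2 * |u' - u| := habs
      _ ≤ l' ^ 2 * (CD * Δ) := h2
  have c1 : p * (l' * |l - l'|) ≤ l' ^ 2 * (CD * Δ) := by
    refine le_trans ?_ hs2a
    exact mul_le_mul_of_nonneg_left
      (mul_le_mul_of_nonneg_right (by linarith) (abs_nonneg _)) (le_of_lt hp0)
  have hl'CD : l' * CD ≤ p / 2 :=
    le_trans (mul_le_mul_of_nonneg_right (le_of_lt hl'η) hCD0) hc3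
  have hs2b : |l - l'| ≤ Δ / 2 := by
    have c2 : l' ^ 2 * (CD * Δ) ≤ l' * ((p / 2) * Δ) := by
      have h := mul_le_mul_of_nonneg_right hl'CD (mul_nonneg (le_of_lt hl') hΔ0)
      calc l' ^ 2 * (CD * Δ) = (l' * CD) * (l' * Δ) := by ring
        _ ≤ (p / 2) * (l' * Δ) := mul_le_mul_of_nonneg_right hl'CD
            (mul_nonneg (le_of_lt hl') hΔ0)
        _ = l' * ((p / 2) * Δ) := by ring
    have d1 : l' * (p * |l - l'|) ≤ l' * ((p / 2) * Δ) := by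
      have := le_trans c1 c2
      calc l' * (p * |l - l'|) = p * (l' * |l - l'|) := by ring
        _ ≤ l' * ((p / 2) * Δ) := le_trans c1 c2
    have d2 : p * |l - l'| ≤ (p / 2) * Δ := le_of_mul_le_mul_left d1 hl'
    have d3 : p * |l - l'| ≤ p * (Δ / 2) := by linarith
    exact le_of_mul_le_mul_left d3 hp0
  have hs2c : |l - l'| ≤ |b - b'| := by rw [hΔ] at hs2b; linarith
  have hΔd : Δ ≤ 2 * |b - b'| := by rw [hΔ]; linarith
  have hpm : p * |l - l'| ≤ l * (6 * CD) * |b - b'| := by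
    have c2 : l' ^ 2 * (CD * Δ) ≤ l' * (l * (6 * CD) * |b - b'|) := by
      calc l' ^ 2 * (CD * Δ) ≤ l' ^ 2 * (CD * (2 * |b - b'|)) :=
            mul_le_mul_of_nonneg_left (mul_le_mul_of_nonneg_left hΔd hCD0) (sq_nonneg l')
        _ = l' * (l' * (2 * CD * |b - b'|)) := by ring
        _ ≤ l' * (3 * l * (2 * CD * |b - b'|)) := by
            apply mul_le_mul_of_nonneg_left _ (le_of_lt hl')
            exact mul_le_mul_of_nonneg_right hll' (by positivity)
        _ = l' * (l * (6 * CD) * |b - b'|) := by ring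
    have d1 : l' * (p * |l - l'|) ≤ l' * (l * (6 * CD) * |b - b'|) := by
      calc l' * (p * |l - l'|) = p * (l' * |l - l'|) := by ring
        _ ≤ l' * (l * (6 * CD) * |b - b'|) := le_trans c1 c2
    exact le_of_mul_le_mul_left d1 hl'
  -- Step 3 : b = b'
  have hbb : b = b' := by
    by_contra hne
    have hd : 0 < |b - b'| := abs_pos.2 (sub_ne_zero.2 hne)
    set d : ℝ := |b - b'| with hdd
    set m : ℝ := |l - l'| with hmm
    have hE1' : l * (A1 * A0' - A1' * A0) = (l' - l) * (A1' * A0) := by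
      linear_combination hE1
    have hRHS : |(l' - l) * (A1' * A0)| ≤ m * (2 * η * M1 * (3 * e1 / 2)) := by
      rw [abs_mul]
      have h1 : |l' - l| = m := by rw [hmm, abs_sub_comm]
      have h2 : |A1' * A0| ≤ 2 * η * M1 * (3 * e1 / 2) := by
        rw [abs_mul]
        apply mul_le_mul hA1' _ (abs_nonneg _) (by positivity)
        rw [abs_of_pos (by linarith : (0:ℝ) < A0)]; exact hA0ub
      rw [h1]
      exact mul_le_mul_of_nonneg_left h2 (by rw [hmm]; exact abs_nonneg _)
    have hA1diff : e3 * d - 2 * η * M2 * d ≤ |A1 - A1m| := by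
      have h1 : |(b - b') * (-e3)| = e3 * d := by
        rw [abs_mul, abs_neg, abs_of_pos he3, hdd]; ring
      have h2 := abs_sub_abs_le_abs_sub ((b - b') * (-e3)) (A1 - A1m)
      rw [h1] at h2
      linarith only [h2, hKey, abs_sub_comm A1m A1,
        abs_sub_comm ((b - b') * (-e3)) (A1 - A1m)]
    have hA1A1' : e3 * d - 2 * η * M2 * d - M1 * m ≤ |A1 - A1'| := by
      have h3 : |A1 - A1m| ≤ |A1 - A1'| + |A1m - A1'| := by
        have h : A1 - A1m = (A1 - A1') - (A1m - A1') := by ring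
        rw [h]; exact abs_sub _ _
      have h4 : |A1m - A1'| ≤ M1 * m := by rw [hmm, mul_comm]; exact hL1
      linarith only [h3, h4, hA1diff]
    have hLHS : (e1 / 2) * (e3 * d - 2 * η * M2 * d - M1 * m)
        - 2 * η * M1 * (M0 * (2 * d)) ≤ |A1 * A0' - A1' * A0| := by
      have hrw : A1 * A0' - A1' * A0 = A1 * (A0' - A0) + A0 * (A1 - A1') := by ring
      have h1 : (e1 / 2) * (e3 * d - 2 * η * M2 * d - M1 * m) ≤ |A0 * (A1 - A1')| := by
        rw [abs_mul, abs_of_pos (by linarith : (0:ℝ) < A0)]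
        rcases le_or_gt (e3 * d - 2 * η * M2 * d - M1 * m) 0 with hneg | hpos
        · have hz := mul_nonneg (by linarith : (0:ℝ) ≤ A0) (abs_nonneg (A1 - A1'))
          have hz2 : (e1 / 2) * (e3 * d - 2 * η * M2 * d - M1 * m) ≤ 0 :=
            mul_nonpos_iff.2 (Or.inl ⟨by positivity, hneg⟩)
          linarith only [hz, hz2]
        · calc (e1 / 2) * (e3 * d - 2 * η * M2 * d - M1 * m)
              ≤ A0 * (e3 * d - 2 * η * M2 * d - M1 * m) :=
                mul_le_mul_of_nonneg_right hA0lb (le_of_lt hpos)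
            _ ≤ A0 * |A1 - A1'| :=
                mul_le_mul_of_nonneg_left hA1A1' (by linarith)
      have h2 : |A1 * (A0' - A0)| ≤ 2 * η * M1 * (M0 * (2 * d)) := by
        rw [abs_mul]
        have hh : |A0' - A0| ≤ M0 * (2 * d) := by
          rw [abs_sub_comm]
          calc |A0 - A0'| ≤ Δ * M0 := by rw [hΔ]; exact hL0
            _ ≤ 2 * d * M0 := mul_le_mul_of_nonneg_right hΔd hM0
            _ = M0 * (2 * d) := by ring
        exact mul_le_mul hA1 hh (abs_nonneg _) (by positivity)
      have h3 : |A0 * (A1 - A1')| - |A1 * (A0' - A0)| ≤ |A1 * A0' - A1' * A0| := by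
        rw [hrw]
        have h4 := abs_sub_abs_le_abs_sub (A0 * (A1 - A1'))
          (A1 * (A0' - A0) + A0 * (A1 - A1'))
        have h5 : A0 * (A1 - A1') - (A1 * (A0' - A0) + A0 * (A1 - A1'))
            = -(A1 * (A0' - A0)) := by ring
        rw [h5, abs_neg] at h4
        linarith only [h4]
      linarith only [h1, h2, h3]
    have hmain : l * |A1 * A0' - A1' * A0| ≤ m * (3 * η * M1 * e1) := by
      calc l * |A1 * A0' - A1' * A0| = |l * (A1 * A0' - A1' * A0)| := by
            rw [abs_mul, abs_of_pos hl]
        _ = |(l' - l) * (A1' * A0)| := by rw [hE1']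
        _ ≤ m * (2 * η * M1 * (3 * e1 / 2)) := hRHS
        _ = m * (3 * η * M1 * e1) := by ring
    have hx : 0 < l * d := mul_pos hl hd
    have T1 : p * (l * ((e1 / 2) * (e3 * d - 2 * η * M2 * d - M1 * m)
        - 2 * η * M1 * (M0 * (2 * d)))) ≤ 3 * η * M1 * e1 * (l * (6 * CD) * d) := by
      have k2 : p * (l * ((e1 / 2) * (e3 * d - 2 * η * M2 * d - M1 * m)
          - 2 * η * M1 * (M0 * (2 * d)))) ≤ p * (l * |A1 * A0' - A1' * A0|) :=
        mul_le_mul_of_nonneg_left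
          (mul_le_mul_of_nonneg_left hLHS (le_of_lt hl)) (le_of_lt hp0)
      have h5 := mul_le_mul_of_nonneg_left hmain (le_of_lt hp0)
      have h6 : (3 * η * M1 * e1) * (p * m) ≤ (3 * η * M1 * e1) * (l * (6 * CD) * d) :=
        mul_le_mul_of_nonneg_left hpm (by positivity)
      have h7 : p * (m * (3 * η * M1 * e1)) = (3 * η * M1 * e1) * (p * m) := by ring
      linarith only [k2, h5, h6, h7]
    have P2 : p * (l * ((e1 / 2) * (M1 * m))) ≤ 3 * e1 * M1 * CD * η * (l * d) := by
      have q1 : l * (p * m) ≤ l * (l * (6 * CD) * d) :=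
        mul_le_mul_of_nonneg_left hpm (le_of_lt hl)
      have q2 : l * (l * (6 * CD) * d) ≤ η * (l * (6 * CD) * d) := by
        apply mul_le_mul_of_nonneg_right (le_of_lt hlη)
        positivity
      have q3 := mul_le_mul_of_nonneg_left (le_trans q1 q2)
        (show (0:ℝ) ≤ e1 / 2 * M1 by positivity)
      have q4 : e1 / 2 * M1 * (l * (p * m)) = p * (l * ((e1 / 2) * (M1 * m))) := by ring
      have q5 : e1 / 2 * M1 * (η * (l * (6 * CD) * d)) = 3 * e1 * M1 * CD * η * (l * d) := by
        ring
      linarith only [q3, q4, q5]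
    have final : p * (e1 / 2) * e3 * (l * d)
        ≤ η * (p * e1 * M2 + 3 * e1 * M1 * CD + 4 * p * M1 * M0 + 18 * M1 * e1 * CD)
          * (l * d) := by
      ring_nf at T1 P2 ⊢
      linarith only [T1, P2]
    have hlt : η * (p * e1 * M2 + 3 * e1 * M1 * CD + 4 * p * M1 * M0 + 18 * M1 * e1 * CD)
        * (l * d) < p * (e1 / 2) * e3 * (l * d) := mul_lt_mul_of_pos_right hc4 hx
    linarith only [final, hlt]
  refine ⟨hbb, ?_⟩
  -- Step 4 : l = l'
  by_contra hne
  have hm : 0 < |l - l'| := abs_pos.2 (sub_ne_zero.2 hne)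
  have hΔm : Δ = |l - l'| := by rw [hΔ, hbb]; simp
  rw [← hΔm] at hm hs2a
  have h2 : l' ^ 2 * (CD * Δ) ≤ l' * ((p / 2) * Δ) := by
    calc l' ^ 2 * (CD * Δ) = (l' * CD) * (l' * Δ) := by ring
      _ ≤ (p / 2) * (l' * Δ) := mul_le_mul_of_nonneg_right hl'CD
          (mul_nonneg (le_of_lt hl') hΔ0)
      _ = l' * ((p / 2) * Δ) := by ring
  have h3 : l' * ((p / 2) * Δ) ≤ (l + l') * ((p / 2) * Δ) :=
    mul_le_mul_of_nonneg_right (by linarith) (by positivity)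
  have e : (l + l') * ((p / 2) * Δ) = (p / 2) * ((l + l') * Δ) := by ring
  have H : p * ((l + l') * Δ) ≤ (p / 2) * ((l + l') * Δ) :=
    le_trans hs2a (le_trans h2 (le_trans h3 (le_of_eq e)))
  have h5 : 0 < (l + l') * Δ := mul_pos (by linarith) hm
  have H2 : p ≤ p / 2 := by
    have H' : (l + l') * Δ * p ≤ (l + l') * Δ * (p / 2) := by
      calc (l + l') * Δ * p = p * ((l + l') * Δ) := by ring
        _ ≤ p / 2 * ((l + l') * Δ) := H
        _ = (l + l') * Δ * (p / 2) := by ring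
    exact le_of_mul_le_mul_left H' h5
  linarith only [H2, hp0]

-- ===== main theorem =====
set_option maxHeartbeats 2000000 in
theorem tilted_moments_locally_injective
    (g : ℝ → ℝ) (hg2 : CondH2 g) (hg3 : CondH3 g)
    (hg3ne : iteratedDeriv 3 g 0 ≠ 0) :
    ∃ B > (0 : ℝ), ∃ L > (0 : ℝ),
      Set.InjOn (fun p : ℝ × ℝ => (m1 g p.1 p.2, m2 g p.1 p.2))
        (Set.Ioo (-B) B ×ˢ Set.Ioo 0 L) := by
  obtain ⟨hmono, -, -, hg4, hanti, hsym⟩ := hg2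
  obtain ⟨δ, hδ, Ls, hLs, hdom0⟩ := hg3
  have hLnn : ∀ s z, 0 ≤ Ls s z := fun s => (hLs s).1
  have hLint : ∀ s, Integrable (fun z => Ls s z * phi z) := fun s => (hLs s).2
  have hdom' := H3ext (Ls := Ls) hg4 hδ hdom0
  -- global bound on g'
  have hgd1eq : iteratedDeriv (0 + 1) g = deriv g := by
    rw [show (0 + 1 : ℕ) = 1 by norm_num, iteratedDeriv_one]
  have hG1pos : 0 < deriv g 0 := deriv_g_zero_pos hg4 hmono hanti
  have hgd1abs : ∀ x, |deriv g x| ≤ deriv g 0 := fun x => by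
    rw [abs_of_nonneg (deriv_g_nonneg hg4 hmono x)]
    exact deriv_g_le hg4 hsym hanti x
  have hG3neg : iteratedDeriv 3 g 0 < 0 := gd3_zero_neg hg4 hsym hanti hg3ne
  -- the Gaussian mass
  set c : ℝ := ∫ z, phi z with hcdef
  have hc : 0 < c := by
    have h1 : c = ∫ z : ℝ, Real.exp (-(1/2 : ℝ) * z ^ 2) := by rw [hcdef, phi_eq]
    rw [h1, integral_gaussian]
    positivity
  -- Stein identities for the numerators
  have hN1 : ∀ b l : ℝ, |b| ≤ δ / 2 → 0 ≤ l → l ≤ δ / 2 →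
      (∫ z, z * deriv g (l * z + b) * phi z) = l * Agd g 1 b l := by
    intro b l hb hl0 hl
    have i0 : Integrable (fun z => iteratedDeriv (0 + 1) g (l * z + b) * phi z) :=
      integrable_gdphi hg4 hδ hdom' hLnn hLint 0 (by norm_num) hb hl0 hl
    have iz : Integrable (fun z => z * (iteratedDeriv (0 + 1) g (l * z + b) * phi z)) := by
      refine integrable_of_bound ?_ (C := fun z => deriv g 0 * (|z| * phi z))
        (integrable_abs_mul_phi.const_mul _) fun z => ?_
      · have h1 : Continuous (iteratedDeriv (0 + 1) g) := gd_cont hg4 (by norm_num)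
        exact continuous_id.mul ((h1.comp (by continuity)).mul continuous_phi)
      · beta_reduce
        rw [abs_mul, abs_mul, abs_of_pos (phi_pos z), hgd1eq]
        have := hgd1abs (l * z + b)
        have hp := (phi_pos z).le
        have h9 := mul_le_mul_of_nonneg_left this (mul_nonneg (abs_nonneg z) hp)
        linarith [h9]
    have i1' : Integrable (fun z => (l * iteratedDeriv (1 + 1) g (l * z + b)) * phi z) := by
      have h := (integrable_gdphi hg4 hδ hdom' hLnn hLint 1 (by norm_num) hb hl0 hl).const_mul l
      have e : (fun z => (l * iteratedDeriv (1 + 1) g (l * z + b)) * phi z)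
          = fun z => l * (iteratedDeriv (1 + 1) g (l * z + b) * phi z) := by
        funext z; ring
      rw [e]; exact h
    have hs := stein_s5 (u := fun z => iteratedDeriv (0 + 1) g (l * z + b))
      (u' := fun z => l * iteratedDeriv (1 + 1) g (l * z + b))
      (fun z => gd_comp_hasDerivAt hg4 (n := 0 + 1) (by norm_num) l b z) i0 iz i1'
    have eL : (fun z : ℝ => z * deriv g (l * z + b) * phi z)
        = fun z => z * (iteratedDeriv (0 + 1) g (l * z + b) * phi z) := by
      funext z; rw [hgd1eq]; ring
    have eR : (fun z : ℝ => (l * iteratedDeriv (1 + 1) g (l * z + b)) * phi z)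
        = fun z => l * (iteratedDeriv (1 + 1) g (l * z + b) * phi z) := by
      funext z; ring
    rw [eL, hs, eR, integral_const_mul]
    rfl
  have hN3 : ∀ b l : ℝ, |b| ≤ δ / 2 → 0 ≤ l → l ≤ δ / 2 →
      (∫ z, z * (iteratedDeriv (1 + 1) g (l * z + b) * phi z)) = l * Agd g 2 b l := by
    intro b l hb hl0 hl
    have i1 : Integrable (fun z => iteratedDeriv (1 + 1) g (l * z + b) * phi z) :=
      integrable_gdphi hg4 hδ hdom' hLnn hLint 1 (by norm_num) hb hl0 hl
    have iz : Integrable (fun z => z * (iteratedDeriv (1 + 1) g (l * z + b) * phi z)) := by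
      refine integrable_of_bound ?_ (C := fun z => Ls ⟨0, by norm_num⟩ z * phi z)
        (hLint _) fun z => ?_
      · have h1 : Continuous (iteratedDeriv (1 + 1) g) := gd_cont hg4 (by norm_num)
        exact continuous_id.mul ((h1.comp (by continuity)).mul continuous_phi)
      · beta_reduce
        have hd := hdom' ⟨0, by norm_num⟩ z l b hl0 (by linarith) (lt_of_le_of_lt hb (by linarith))
        rw [abs_mul, abs_mul, abs_of_pos (phi_pos z)]
        have h2 : |z| * |iteratedDeriv (1 + 1) g (l * z + b)| ≤ Ls ⟨0, by norm_num⟩ z := by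
          have h3 : |z| * |iteratedDeriv (1 + 1) g (l * z + b)|
              ≤ (|z| + 1) * |iteratedDeriv (1 + 1) g (l * z + b)| := by
            apply mul_le_mul_of_nonneg_right (by linarith [abs_nonneg z]) (abs_nonneg _)
          exact le_trans h3 (le_trans (le_of_eq (by norm_num)) hd)
        have hp := (phi_pos z).le
        have h9 := mul_le_mul_of_nonneg_right h2 hp
        linarith [h9]
    have i2' : Integrable (fun z => (l * iteratedDeriv (1 + 1 + 1) g (l * z + b)) * phi z) := by
      have h := (integrable_gdphi hg4 hδ hdom' hLnn hLint 2 (by norm_num) hb hl0 hl).const_mul l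
      have e : (fun z => (l * iteratedDeriv (1 + 1 + 1) g (l * z + b)) * phi z)
          = fun z => l * (iteratedDeriv (2 + 1) g (l * z + b) * phi z) := by
        funext z; rw [show (1 + 1 + 1 : ℕ) = 2 + 1 by norm_num]; ring
      rw [e]; exact h
    have hs := stein_s5 (u := fun z => iteratedDeriv (1 + 1) g (l * z + b))
      (u' := fun z => l * iteratedDeriv (1 + 1 + 1) g (l * z + b))
      (fun z => gd_comp_hasDerivAt hg4 (n := 1 + 1) (by norm_num) l b z) i1 iz i2'
    have eR : (fun z : ℝ => (l * iteratedDeriv (1 + 1 + 1) g (l * z + b)) * phi z)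
        = fun z => l * (iteratedDeriv (2 + 1) g (l * z + b) * phi z) := by
      funext z; rw [show (1 + 1 + 1 : ℕ) = 2 + 1 by norm_num]; ring
    rw [hs, eR, integral_const_mul]
    rfl
  have hN2 : ∀ b l : ℝ, |b| ≤ δ / 2 → 0 ≤ l → l ≤ δ / 2 →
      (∫ z, z ^ 2 * deriv g (l * z + b) * phi z)
        = Agd g 0 b l + l * (l * Agd g 2 b l) := by
    intro b l hb hl0 hl
    have i0 : Integrable (fun z => iteratedDeriv (0 + 1) g (l * z + b) * phi z) :=
      integrable_gdphi hg4 hδ hdom' hLnn hLint 0 (by norm_num) hb hl0 hl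
    have izgd2 : Integrable (fun z => z * (iteratedDeriv (1 + 1) g (l * z + b) * phi z)) := by
      refine integrable_of_bound ?_ (C := fun z => Ls ⟨0, by norm_num⟩ z * phi z)
        (hLint _) fun z => ?_
      · have h1 : Continuous (iteratedDeriv (1 + 1) g) := gd_cont hg4 (by norm_num)
        exact continuous_id.mul ((h1.comp (by continuity)).mul continuous_phi)
      · beta_reduce
        have hd := hdom' ⟨0, by norm_num⟩ z l b hl0 (by linarith) (lt_of_le_of_lt hb (by linarith))
        rw [abs_mul, abs_mul, abs_of_pos (phi_pos z)]
        have h3 : |z| * |iteratedDeriv (1 + 1) g (l * z + b)|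
            ≤ (|z| + 1) * |iteratedDeriv (1 + 1) g (l * z + b)| := by
          apply mul_le_mul_of_nonneg_right (by linarith [abs_nonneg z]) (abs_nonneg _)
        have h2 : |z| * |iteratedDeriv (1 + 1) g (l * z + b)| ≤ Ls ⟨0, by norm_num⟩ z :=
          le_trans h3 (le_trans (le_of_eq (by norm_num)) hd)
        have hp := (phi_pos z).le
        have h9 := mul_le_mul_of_nonneg_right h2 hp
        linarith [h9]
    have iu : Integrable (fun z => (z * iteratedDeriv (0 + 1) g (l * z + b)) * phi z) := by
      have h := integrable_of_bound (f := fun z => z * (iteratedDeriv (0 + 1) g (l * z + b) * phi z))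
        ?_ (C := fun z => deriv g 0 * (|z| * phi z)) (integrable_abs_mul_phi.const_mul _) ?_
      · have e : (fun z => (z * iteratedDeriv (0 + 1) g (l * z + b)) * phi z)
            = fun z => z * (iteratedDeriv (0 + 1) g (l * z + b) * phi z) := by funext z; ring
        rw [e]; exact h
      · have h1 : Continuous (iteratedDeriv (0 + 1) g) := gd_cont hg4 (by norm_num)
        exact continuous_id.mul ((h1.comp (by continuity)).mul continuous_phi)
      · intro z
        beta_reduce
        rw [abs_mul, abs_mul, abs_of_pos (phi_pos z), hgd1eq]
        have := hgd1abs (l * z + b)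
        have hp := (phi_pos z).le
        have h9 := mul_le_mul_of_nonneg_left this (mul_nonneg (abs_nonneg z) hp)
        linarith [h9]
    have izu : Integrable (fun z => z * ((z * iteratedDeriv (0 + 1) g (l * z + b)) * phi z)) := by
      refine integrable_of_bound ?_ (C := fun z => deriv g 0 * (z ^ 2 * phi z))
        (integrable_sq_mul_phi.const_mul _) fun z => ?_
      · have h1 : Continuous (iteratedDeriv (0 + 1) g) := gd_cont hg4 (by norm_num)
        exact continuous_id.mul ((continuous_id.mul (h1.comp (by continuity))).mul continuous_phi)
      · beta_reduce
        rw [abs_mul, abs_mul, abs_mul, abs_of_pos (phi_pos z), hgd1eq]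
        have h1 := hgd1abs (l * z + b)
        have hp := (phi_pos z).le
        have hz : |z| * |z| = z ^ 2 := by rw [← abs_mul, abs_of_nonneg (mul_self_nonneg z)]; ring
        rw [← hz]
        have h9 := mul_le_mul_of_nonneg_left h1
          (mul_nonneg (mul_nonneg (abs_nonneg z) (abs_nonneg z)) hp)
        linarith [h9]
    have iu' : Integrable (fun z => (iteratedDeriv (0 + 1) g (l * z + b)
        + z * (l * iteratedDeriv (0 + 1 + 1) g (l * z + b))) * phi z) := by
      have e : (fun z => (iteratedDeriv (0 + 1) g (l * z + b)
          + z * (l * iteratedDeriv (0 + 1 + 1) g (l * z + b))) * phi z)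
          = fun z => iteratedDeriv (0 + 1) g (l * z + b) * phi z
            + l * (z * (iteratedDeriv (1 + 1) g (l * z + b) * phi z)) := by
        funext z; rw [show (0 + 1 + 1 : ℕ) = 1 + 1 by norm_num]; ring
      rw [e]
      exact i0.add (izgd2.const_mul l)
    have hu : ∀ z : ℝ, HasDerivAt (fun z => z * iteratedDeriv (0 + 1) g (l * z + b))
        (iteratedDeriv (0 + 1) g (l * z + b)
          + z * (l * iteratedDeriv (0 + 1 + 1) g (l * z + b))) z := by
      intro z
      have h := (hasDerivAt_id z).mul (gd_comp_hasDerivAt hg4 (n := 0 + 1) (by norm_num) l b z)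
      exact h.congr_deriv (by simp only [id_eq, one_mul])
    have hs := stein_s5 (u := fun z => z * iteratedDeriv (0 + 1) g (l * z + b))
      (u' := fun z => iteratedDeriv (0 + 1) g (l * z + b)
        + z * (l * iteratedDeriv (0 + 1 + 1) g (l * z + b))) hu iu izu iu'
    have eL : (fun z : ℝ => z ^ 2 * deriv g (l * z + b) * phi z)
        = fun z => z * ((z * iteratedDeriv (0 + 1) g (l * z + b)) * phi z) := by
      funext z; rw [hgd1eq]; ring
    have eR : (fun z : ℝ => (iteratedDeriv (0 + 1) g (l * z + b)
        + z * (l * iteratedDeriv (0 + 1 + 1) g (l * z + b))) * phi z)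
        = fun z => iteratedDeriv (0 + 1) g (l * z + b) * phi z
          + l * (z * (iteratedDeriv (1 + 1) g (l * z + b) * phi z)) := by
      funext z; rw [show (0 + 1 + 1 : ℕ) = 1 + 1 by norm_num]; ring
    rw [eL, hs, eR, integral_add i0 (izgd2.const_mul l), integral_const_mul,
      hN3 b l hb hl0 hl]
    rfl
  -- centred values
  have hval0 : Agd g 0 0 0 = deriv g 0 * c := by
    rw [Agd_zero, ← hgd1eq]
  have hval1 : Agd g 1 0 0 = 0 := by
    rw [Agd_zero, show (1 + 1 : ℕ) = 2 by norm_num, gd2_zero hg4 hsym, zero_mul]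
  have hval2 : Agd g 2 0 0 = iteratedDeriv 3 g 0 * c := by
    rw [Agd_zero, show (2 + 1 : ℕ) = 3 by norm_num]
  -- constants
  set e1 : ℝ := deriv g 0 * c with he1def
  set e3 : ℝ := -(iteratedDeriv 3 g 0 * c) with he3def
  have he1 : 0 < e1 := mul_pos hG1pos hc
  have he3 : 0 < e3 := by rw [he3def]; nlinarith
  set M0 : ℝ := ∫ z, Ls ⟨0, by norm_num⟩ z * phi z with hM0def
  set M1 : ℝ := ∫ z, Ls ⟨1, by norm_num⟩ z * phi z with hM1def
  set M2 : ℝ := ∫ z, Ls ⟨2, by norm_num⟩ z * phi z with hM2def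
  have hM0 : 0 ≤ M0 := integral_nonneg fun z => mul_nonneg (hLnn _ z) (phi_pos z).le
  have hM1 : 0 ≤ M1 := integral_nonneg fun z => mul_nonneg (hLnn _ z) (phi_pos z).le
  have hM2 : 0 ≤ M2 := integral_nonneg fun z => mul_nonneg (hLnn _ z) (phi_pos z).le
  set p : ℝ := e1 * e3 / 4 with hpdef
  set CD : ℝ := 3 * e3 / 2 * M0 + 3 * e1 / 2 * M2 with hCDdef
  have hp0 : 0 < p := by rw [hpdef]; positivity
  have hCD0 : 0 ≤ CD := by rw [hCDdef]; positivity
  set X4 : ℝ := p * e1 * M2 + 3 * e1 * M1 * CD + 4 * p * M1 * M0 + 18 * M1 * e1 * CD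
    with hX4def
  have hX40 : 0 ≤ X4 := by rw [hX4def]; positivity
  set K : ℝ := 2 * M0 + 2 * M2 + CD + X4 + 1 with hKdef
  have hK : 0 < K := by rw [hKdef]; positivity
  set β : ℝ := min (min (e1 / 2) (e3 / 2)) (min (p / 2) (p * (e1 / 2) * e3 / 2)) with hβdef
  have hβ : 0 < β := by
    rw [hβdef]
    apply lt_min (lt_min (by linarith) (by linarith)) (lt_min (by linarith) (by positivity))
  set η : ℝ := min (δ / 2) (β / K) with hηdef
  have hη : 0 < η := lt_min (half_pos hδ) (div_pos hβ hK)
  have hηδ : η ≤ δ / 2 := min_le_left _ _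
  have hηK : η * K ≤ β := by
    have h1 : η ≤ β / K := min_le_right _ _
    calc η * K ≤ β / K * K := mul_le_mul_of_nonneg_right h1 (le_of_lt hK)
      _ = β := div_mul_cancel₀ β (ne_of_gt hK)
  have hcond1 : 2 * η * M0 ≤ e1 / 2 := by
    have h1 : η * (2 * M0) ≤ η * K := mul_le_mul_of_nonneg_left
      (by rw [hKdef]; linarith) (le_of_lt hη)
    have h2 : β ≤ e1 / 2 := le_trans (min_le_left _ _) (min_le_left _ _)
    linarith
  have hcond2 : 2 * η * M2 ≤ e3 / 2 := by
    have h1 : η * (2 * M2) ≤ η * K := mul_le_mul_of_nonneg_left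
      (by rw [hKdef]; linarith) (le_of_lt hη)
    have h2 : β ≤ e3 / 2 := le_trans (min_le_left _ _) (min_le_right _ _)
    linarith
  have hcond3 : η * CD ≤ p / 2 := by
    have h1 : η * CD ≤ η * K := mul_le_mul_of_nonneg_left
      (by rw [hKdef]; linarith) (le_of_lt hη)
    have h2 : β ≤ p / 2 := le_trans (min_le_right _ _) (min_le_left _ _)
    exact le_trans h1 (le_trans hηK h2)
  have hcond4 : η * X4 < p * (e1 / 2) * e3 := by
    have h1 : η * X4 ≤ η * K := mul_le_mul_of_nonneg_left
      (by rw [hKdef]; linarith) (le_of_lt hη)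
    have h2 : β ≤ p * (e1 / 2) * e3 / 2 := le_trans (min_le_right _ _) (min_le_right _ _)
    have h3 : 0 < p * (e1 / 2) * e3 := by positivity
    exact lt_of_le_of_lt (le_trans h1 (le_trans hηK h2)) (half_lt_self h3)
  -- the bounds on A for points of the box
  have hbox : ∀ b l : ℝ, |b| < η → 0 < l → l < η →
      (|b| ≤ δ / 2 ∧ 0 ≤ l ∧ l ≤ δ / 2) := by
    intro b l hb hl0 hl
    exact ⟨le_trans hb.le hηδ, hl0.le, le_trans hl.le hηδ⟩
  have hAbd : ∀ s : ℕ, ∀ hs : s < 3, ∀ b l : ℝ, |b| < η → 0 < l → l < η →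
      |Agd g s b l - Agd g s 0 0| ≤ 2 * η * ∫ z, Ls ⟨s, hs⟩ z * phi z := by
    intro s hs b l hb hl0 hl
    obtain ⟨h1, h2, h3⟩ := hbox b l hb hl0 hl
    have h := Agd_lip hg4 hδ hdom' hLnn hLint s hs (b₁ := b) (l₁ := l) (b₂ := 0) (l₂ := 0)
      h1 (by simpa using (half_pos hδ).le) h2 h3 le_rfl (half_pos hδ).le
    refine le_trans h ?_
    apply mul_le_mul_of_nonneg_right _
      (integral_nonneg fun z => mul_nonneg (hLnn _ z) (phi_pos z).le)
    rw [sub_zero, sub_zero, abs_of_nonneg h2]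
    have := abs_nonneg b
    linarith
  -- the injectivity proof
  refine ⟨η, hη, η, hη, ?_⟩
  rintro ⟨b, l⟩ hmem ⟨b', l'⟩ hmem' heq
  obtain ⟨hbmem, hlmem⟩ := hmem
  obtain ⟨hbmem', hlmem'⟩ := hmem'
  simp only [Set.mem_Ioo] at hbmem hlmem hbmem' hlmem'
  have hb : |b| < η := abs_lt.2 ⟨hbmem.1, hbmem.2⟩
  have hb' : |b'| < η := abs_lt.2 ⟨hbmem'.1, hbmem'.2⟩
  have hl0 : 0 < l := hlmem.1
  have hlη : l < η := hlmem.2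
  have hl0' : 0 < l' := hlmem'.1
  have hlη' : l' < η := hlmem'.2
  obtain ⟨hbδ, hlδ0, hlδ⟩ := hbox b l hb hl0 hlη
  obtain ⟨hbδ', hlδ0', hlδ'⟩ := hbox b' l' hb' hl0' hlη'
  have heq1 : m1 g b l = m1 g b' l' := congrArg Prod.fst heq
  have heq2 : m2 g b l = m2 g b' l' := congrArg Prod.snd heq
  -- A-quantities
  set A0 : ℝ := Agd g 0 b l with hA0def
  set A1 : ℝ := Agd g 1 b l with hA1def
  set A2 : ℝ := Agd g 2 b l with hA2def
  set A0' : ℝ := Agd g 0 b' l' with hA0'def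
  set A1' : ℝ := Agd g 1 b' l' with hA1'def
  set A2' : ℝ := Agd g 2 b' l' with hA2'def
  set A1m : ℝ := Agd g 1 b' l with hA1mdef
  have hA0 : |A0 - e1| ≤ 2 * η * M0 := by
    have := hAbd 0 (by norm_num) b l hb hl0 hlη
    rw [hval0] at this
    exact this
  have hA0' : |A0' - e1| ≤ 2 * η * M0 := by
    have := hAbd 0 (by norm_num) b' l' hb' hl0' hlη'
    rw [hval0] at this
    exact this
  have hA1 : |A1| ≤ 2 * η * M1 := by
    have := hAbd 1 (by norm_num) b l hb hl0 hlη
    rw [hval1, sub_zero] at this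
    exact this
  have hA1' : |A1'| ≤ 2 * η * M1 := by
    have := hAbd 1 (by norm_num) b' l' hb' hl0' hlη'
    rw [hval1, sub_zero] at this
    exact this
  have hA2 : |A2 + e3| ≤ 2 * η * M2 := by
    have := hAbd 2 (by norm_num) b l hb hl0 hlη
    rw [hval2] at this
    have e : A2 - iteratedDeriv 3 g 0 * c = A2 + e3 := by rw [he3def]; ring
    rw [e] at this
    exact this
  have hA2' : |A2' + e3| ≤ 2 * η * M2 := by
    have := hAbd 2 (by norm_num) b' l' hb' hl0' hlη'
    rw [hval2] at this
    have e : A2' - iteratedDeriv 3 g 0 * c = A2' + e3 := by rw [he3def]; ring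
    rw [e] at this
    exact this
  have hL0 : |A0 - A0'| ≤ (|l - l'| + |b - b'|) * M0 :=
    Agd_lip hg4 hδ hdom' hLnn hLint 0 (by norm_num) hbδ hbδ' hlδ0 hlδ hlδ0' hlδ'
  have hL2 : |A2 - A2'| ≤ (|l - l'| + |b - b'|) * M2 :=
    Agd_lip hg4 hδ hdom' hLnn hLint 2 (by norm_num) hbδ hbδ' hlδ0 hlδ hlδ0' hlδ'
  have hL1 : |A1m - A1'| ≤ |l - l'| * M1 := by
    have h := Agd_lip hg4 hδ hdom' hLnn hLint 1 (by norm_num)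
      (b₁ := b') (l₁ := l) (b₂ := b') (l₂ := l') hbδ' hbδ' hlδ0 hlδ hlδ0' hlδ'
    rw [sub_self, abs_zero, add_zero] at h
    exact h
  have hKey : |A1 - A1m - (b - b') * (-e3)| ≤ 2 * η * M2 * |b - b'| := by
    have h := A1_shift (η' := η) hg4 hδ hdom' hLnn hLint hη hηδ hb.le hb'.le hlδ0 hlη.le
    rw [show ((2 : ℕ) + 1) = 3 from by norm_num, ← hcdef, ← hM2def] at h
    have e : (b - b') * (iteratedDeriv 3 g 0 * c) = (b - b') * (-e3) := by
      rw [he3def]; ring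
    rw [e] at h
    exact h
  -- denominators and the moment identities
  have hDen : ∀ bb ll : ℝ, (∫ z, deriv g (ll * z + bb) * phi z) = Agd g 0 bb ll := by
    intro bb ll
    rw [Agd, hgd1eq]
  have hA0pos : 0 < A0 := by
    have h := (abs_le.1 hA0).1
    linarith
  have hA0pos' : 0 < A0' := by
    have h := (abs_le.1 hA0').1
    linarith
  have hm1l : m1 g b l = (l * A1) / A0 := by
    have h0 : m1 g b l = (∫ z, z * deriv g (l * z + b) * phi z)
        / (∫ z, deriv g (l * z + b) * phi z) := rfl
    rw [h0, hN1 b l hbδ hlδ0 hlδ, hDen b l]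
  have hm1l' : m1 g b' l' = (l' * A1') / A0' := by
    have h0 : m1 g b' l' = (∫ z, z * deriv g (l' * z + b') * phi z)
        / (∫ z, deriv g (l' * z + b') * phi z) := rfl
    rw [h0, hN1 b' l' hbδ' hlδ0' hlδ', hDen b' l']
  have hm2l : m2 g b l = (A0 + l * (l * A2)) / A0 := by
    have h0 : m2 g b l = (∫ z, z ^ 2 * deriv g (l * z + b) * phi z)
        / (∫ z, deriv g (l * z + b) * phi z) := rfl
    rw [h0, hN2 b l hbδ hlδ0 hlδ, hDen b l]
  have hm2l' : m2 g b' l' = (A0' + l' * (l' * A2')) / A0' := by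
    have h0 : m2 g b' l' = (∫ z, z ^ 2 * deriv g (l' * z + b') * phi z)
        / (∫ z, deriv g (l' * z + b') * phi z) := rfl
    rw [h0, hN2 b' l' hbδ' hlδ0' hlδ', hDen b' l']
  have hE1 : l * A1 * A0' = l' * A1' * A0 := by
    have h := heq1
    rw [hm1l, hm1l'] at h
    have h2 := (div_eq_div_iff (ne_of_gt hA0pos) (ne_of_gt hA0pos')).1 h
    linear_combination h2
  have hE2 : l ^ 2 * A2 * A0' = l' ^ 2 * A2' * A0 := by
    have h := heq2
    rw [hm2l, hm2l'] at h
    have h2 := (div_eq_div_iff (ne_of_gt hA0pos) (ne_of_gt hA0pos')).1 h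
    linear_combination h2
  have hcond4' : η * (p * e1 * M2 + 3 * e1 * M1 * CD + 4 * p * M1 * M0
      + 18 * M1 * e1 * CD) < p * (e1 / 2) * e3 := by
    rw [← hX4def]; exact hcond4
  have hfinal := key_algebra e1 e3 M0 M1 M2 η p CD b l b' l' A0 A1 A2 A0' A1' A2' A1m
    he1 he3 hM0 hM1 hM2 hpdef hCDdef hb hb' hl0 hl0' hlη hlη' hA0 hA0' hA1 hA1' hA2 hA2'
    hL0 hL1 hL2 hKey hcond1 hcond2 hcond3 hcond4' hE1 hE2
  obtain ⟨hbb, hll⟩ := hfinal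
  rw [Prod.mk.injEq]
  exact ⟨hbb, hll⟩


end
end

section
/- Let g and g̃ both satisfy (S3). Let (ω, β, b) be a parameter with K components and (ω̃, β̃, b̃) a parameter with K̃ components, both with positive weights summing to 1 and nonzero regression vectors, and each satisfying (S2). If Σ_{k=1}^K ω_k g(⟨β_k, x⟩ + b_k) = Σ_{k=1}^{K̃} ω̃_k g̃(⟨β̃_k, x⟩ + b̃_k) for all x ∈ ℝ^d, then K = K̃ and the sets of normalized directions coincide: {μ_1, …, μ_K} = {μ̃_1, …, μ̃_{K̃}}. -/
/- STATEMENT 13: Identifiability of the directions (Theorem 4 of the paper):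
under (S2) and (S3), the mixture function determines the number of components
and the set of normalized directions, even with an unknown link function. -/

open Filter Real

noncomputable section

/-- Assumption (S3) on the link function: `g : ℝ → (0,1)` is increasing, has
limit 0 at `−∞` and 1 at `+∞`, and is continuously differentiable with
derivative tending to 0 at `±∞`. -/
def CondS3 (g : ℝ → ℝ) : Prop :=
  (∀ z, g z ∈ Set.Ioo (0 : ℝ) 1) ∧ Monotone g ∧
    Tendsto g atBot (nhds 0) ∧ Tendsto g atTop (nhds 1) ∧
    ContDiff ℝ 1 g ∧
    Tendsto (deriv g) atBot (nhds 0) ∧ Tendsto (deriv g) atTop (nhds 0)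

/-- Normalized direction `μ_k = β_k / ‖β_k‖`. -/
def dir {d K : ℕ} (β : Fin K → EuclideanSpace ℝ (Fin d)) (k : Fin K) :
    EuclideanSpace ℝ (Fin d) := ‖β k‖⁻¹ • β k

/-- Assumption (S2): the normalized directions are pairwise distinct and
pairwise non-opposite. -/
def CondS2 {d K : ℕ} (β : Fin K → EuclideanSpace ℝ (Fin d)) : Prop :=
  ∀ j k : Fin K, j ≠ k → dir β j ≠ dir β k ∧ dir β j ≠ -dir β k

namespace Stmt13

open RealInnerProductSpace

/-- limit of `g (t*a+c)` as `t → ∞`. -/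
def eps (g : ℝ → ℝ) (a c : ℝ) : ℝ := if 0 < a then 1 else if a < 0 then 0 else g c

/-- limit of `eps g a (r*a'+c)` as `r → ∞`. -/
def Ee (g : ℝ → ℝ) (a a' c : ℝ) : ℝ := if 0 < a then 1 else if a < 0 then 0 else eps g a' c

lemma tendsto_eps {g : ℝ → ℝ} (h0 : Tendsto g atBot (nhds 0))
    (h1 : Tendsto g atTop (nhds 1)) (a c : ℝ) :
    Tendsto (fun t : ℝ => g (t * a + c)) atTop (nhds (eps g a c)) := by
  unfold eps
  rcases lt_trichotomy 0 a with h | h | h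
  · rw [if_pos h]
    exact h1.comp (tendsto_atTop_add_const_right _ c (tendsto_id.atTop_mul_const h))
  · rw [if_neg (by simp [← h]), if_neg (by simp [← h]), ← h]
    simpa using tendsto_const_nhds (α := ℝ) (f := atTop) (a := g c)
  · rw [if_neg (not_lt.mpr h.le), if_pos h]
    exact h0.comp (tendsto_atBot_add_const_right _ c (tendsto_id.atTop_mul_const_of_neg h))

lemma tendsto_eps' {g : ℝ → ℝ} (h0 : Tendsto g atBot (nhds 0))
    (h1 : Tendsto g atTop (nhds 1)) (a a' c : ℝ) :
    Tendsto (fun r : ℝ => eps g a (r * a' + c)) atTop (nhds (Ee g a a' c)) := by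
  unfold Ee
  rcases lt_trichotomy 0 a with h | h | h
  · simp only [eps, if_pos h]
    exact tendsto_const_nhds
  · simp only [eps, if_neg (by simp [← h] : ¬ (0:ℝ) < a), if_neg (by simp [← h] : ¬ a < (0:ℝ))]
    exact tendsto_eps h0 h1 a' c
  · simp only [eps, if_neg (not_lt.mpr h.le), if_pos h]
    exact tendsto_const_nhds

variable {d K K' : ℕ} {g g' : ℝ → ℝ}
  {ω : Fin K → ℝ} {β : Fin K → EuclideanSpace ℝ (Fin d)} {b : Fin K → ℝ}
  {ω' : Fin K' → ℝ} {β' : Fin K' → EuclideanSpace ℝ (Fin d)} {b' : Fin K' → ℝ}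

lemma star (hg0 : Tendsto g atBot (nhds 0)) (hg1 : Tendsto g atTop (nhds 1))
    (hg'0 : Tendsto g' atBot (nhds 0)) (hg'1 : Tendsto g' atTop (nhds 1))
    (heq : ∀ x : EuclideanSpace ℝ (Fin d),
      ∑ k, ω k * g (⟪β k, x⟫ + b k) = ∑ k, ω' k * g' (⟪β' k, x⟫ + b' k))
    (u v : EuclideanSpace ℝ (Fin d)) :
    ∑ k, ω k * Ee g ⟪β k, u⟫ ⟪β k, v⟫ (b k)
      = ∑ k, ω' k * Ee g' ⟪β' k, u⟫ ⟪β' k, v⟫ (b' k) := by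
  have step1 : ∀ w : EuclideanSpace ℝ (Fin d),
      ∑ k, ω k * eps g ⟪β k, u⟫ (⟪β k, w⟫ + b k)
        = ∑ k, ω' k * eps g' ⟪β' k, u⟫ (⟪β' k, w⟫ + b' k) := by
    intro w
    have hL : Tendsto (fun t : ℝ => ∑ k, ω k * g (⟪β k, t • u + w⟫ + b k)) atTop
        (nhds (∑ k, ω k * eps g ⟪β k, u⟫ (⟪β k, w⟫ + b k))) := by
      refine tendsto_finset_sum _ fun k _ => ?_
      have he : (fun t : ℝ => ω k * g (⟪β k, t • u + w⟫ + b k))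
          = fun t : ℝ => ω k * g (t * ⟪β k, u⟫ + (⟪β k, w⟫ + b k)) := by
        funext t
        rw [inner_add_right, real_inner_smul_right]
        ring_nf
      rw [he]
      exact (tendsto_eps hg0 hg1 _ _).const_mul _
    have hR : Tendsto (fun t : ℝ => ∑ k, ω k * g (⟪β k, t • u + w⟫ + b k)) atTop
        (nhds (∑ k, ω' k * eps g' ⟪β' k, u⟫ (⟪β' k, w⟫ + b' k))) := by
      have he : (fun t : ℝ => ∑ k, ω k * g (⟪β k, t • u + w⟫ + b k))
          = fun t : ℝ => ∑ k, ω' k * g' (⟪β' k, t • u + w⟫ + b' k) := by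
        funext t; exact heq _
      rw [he]
      refine tendsto_finset_sum _ fun k _ => ?_
      have he2 : (fun t : ℝ => ω' k * g' (⟪β' k, t • u + w⟫ + b' k))
          = fun t : ℝ => ω' k * g' (t * ⟪β' k, u⟫ + (⟪β' k, w⟫ + b' k)) := by
        funext t
        rw [inner_add_right, real_inner_smul_right]
        ring_nf
      rw [he2]
      exact (tendsto_eps hg'0 hg'1 _ _).const_mul _
    exact tendsto_nhds_unique hL hR
  have hL : Tendsto (fun r : ℝ => ∑ k, ω k * eps g ⟪β k, u⟫ (⟪β k, r • v⟫ + b k)) atTop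
      (nhds (∑ k, ω k * Ee g ⟪β k, u⟫ ⟪β k, v⟫ (b k))) := by
    refine tendsto_finset_sum _ fun k _ => ?_
    have he : (fun r : ℝ => ω k * eps g ⟪β k, u⟫ (⟪β k, r • v⟫ + b k))
        = fun r : ℝ => ω k * eps g ⟪β k, u⟫ (r * ⟪β k, v⟫ + b k) := by
      funext r; rw [real_inner_smul_right]
    rw [he]
    exact (tendsto_eps' hg0 hg1 _ _ _).const_mul _
  have hR : Tendsto (fun r : ℝ => ∑ k, ω k * eps g ⟪β k, u⟫ (⟪β k, r • v⟫ + b k)) atTop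
      (nhds (∑ k, ω' k * Ee g' ⟪β' k, u⟫ ⟪β' k, v⟫ (b' k))) := by
    have he : (fun r : ℝ => ∑ k, ω k * eps g ⟪β k, u⟫ (⟪β k, r • v⟫ + b k))
        = fun r : ℝ => ∑ k, ω' k * eps g' ⟪β' k, u⟫ (⟪β' k, r • v⟫ + b' k) := by
      funext r; exact step1 _
    rw [he]
    refine tendsto_finset_sum _ fun k _ => ?_
    have he2 : (fun r : ℝ => ω' k * eps g' ⟪β' k, u⟫ (⟪β' k, r • v⟫ + b' k))
        = fun r : ℝ => ω' k * eps g' ⟪β' k, u⟫ (r * ⟪β' k, v⟫ + b' k) := by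
      funext r; rw [real_inner_smul_right]
    rw [he2]
    exact (tendsto_eps' hg'0 hg'1 _ _ _).const_mul _
  exact tendsto_nhds_unique hL hR

lemma exists_orth {ι : Type*} [DecidableEq ι] (μ : EuclideanSpace ℝ (Fin d)) (hμ : ‖μ‖ = 1)
    (s : Finset ι) (v : ι → EuclideanSpace ℝ (Fin d))
    (hv : ∀ i ∈ s, ∀ c : ℝ, v i ≠ c • μ) :
    ∃ u : EuclideanSpace ℝ (Fin d), ⟪μ, u⟫ = 0 ∧ ∀ i ∈ s, ⟪v i, u⟫ ≠ 0 := by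
  classical
  induction s using Finset.induction_on with
  | empty => exact ⟨0, inner_zero_right _, by simp⟩
  | @insert a s hnot ih =>
    obtain ⟨u, hu0, hu⟩ := ih fun i hi => hv i (Finset.mem_insert_of_mem hi)
    set c0 : ℝ := ⟪μ, v a⟫ with hc0
    set p : EuclideanSpace ℝ (Fin d) := v a - c0 • μ with hp
    have hμμ : ⟪μ, μ⟫ = (1 : ℝ) := by
      rw [real_inner_self_eq_norm_sq, hμ]; norm_num
    have hμp : ⟪μ, p⟫ = 0 := by
      rw [hp, inner_sub_right, real_inner_smul_right, hμμ]
      ring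
    have hpne : p ≠ 0 := by
      intro h
      exact hv a (Finset.mem_insert_self a s) c0 (by rwa [hp, sub_eq_zero] at h)
    have hvap : ⟪v a, p⟫ = ‖p‖ ^ 2 := by
      have : v a = p + c0 • μ := by rw [hp]; abel
      rw [this, inner_add_left, real_inner_smul_left, hμp, real_inner_self_eq_norm_sq]
      ring
    have hvap' : ⟪v a, p⟫ ≠ 0 := by
      rw [hvap]
      exact pow_ne_zero 2 (norm_ne_zero_iff.mpr hpne)
    -- bad values of t
    set B : Finset ℝ := insert 0 (((insert a s).filter (fun i => ⟪v i, p⟫ ≠ 0)).image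
      (fun i => -⟪v i, u⟫ / ⟪v i, p⟫)) with hB
    obtain ⟨t, ht⟩ := Infinite.exists_notMem_finset B
    have ht0 : t ≠ 0 := fun h => ht (by rw [h, hB]; exact Finset.mem_insert_self _ _)
    refine ⟨u + t • p, ?_, ?_⟩
    · rw [inner_add_right, real_inner_smul_right, hu0, hμp]; ring
    · intro i hi hzero
      rw [inner_add_right, real_inner_smul_right] at hzero
      have hkey : ⟪v i, p⟫ ≠ 0 → False := by
        intro hip
        have : t = -⟪v i, u⟫ / ⟪v i, p⟫ := by
          rw [eq_div_iff hip]
          linarith [hzero]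
        apply ht
        rw [hB]
        exact Finset.mem_insert_of_mem (Finset.mem_image.mpr ⟨i, Finset.mem_filter.mpr ⟨hi, hip⟩, this.symm⟩)
      rcases Finset.mem_insert.mp hi with rfl | his
      · exact hkey hvap'
      · by_cases hip : ⟪v i, p⟫ = 0
        · rw [hip, mul_zero, add_zero] at hzero
          exact hu i his hzero
        · exact hkey hip

lemma norm_dir {K₀ : ℕ} (γ : Fin K₀ → EuclideanSpace ℝ (Fin d)) (k : Fin K₀)
    (hγ : γ k ≠ 0) : ‖dir γ k‖ = 1 := by
  rw [dir, norm_smul, norm_inv, norm_norm]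
  exact inv_mul_cancel₀ (norm_ne_zero_iff.mpr hγ)

lemma inner_dir {K₀ : ℕ} (γ : Fin K₀ → EuclideanSpace ℝ (Fin d)) (k : Fin K₀)
    (hγ : γ k ≠ 0) (u : EuclideanSpace ℝ (Fin d)) :
    ⟪γ k, u⟫ = ‖γ k‖ * ⟪dir γ k, u⟫ := by
  rw [dir, real_inner_smul_left, ← mul_assoc, mul_inv_cancel₀ (norm_ne_zero_iff.mpr hγ),
    one_mul]

lemma Ee_zero_pos {a' : ℝ} (h : 0 < a') (c : ℝ) : Ee g 0 a' c = 1 := by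
  unfold Ee eps
  rw [if_neg (lt_irrefl 0), if_neg (lt_irrefl 0), if_pos h]

lemma Ee_zero_neg {a' : ℝ} (h : a' < 0) (c : ℝ) : Ee g 0 a' c = 0 := by
  unfold Ee eps
  rw [if_neg (lt_irrefl 0), if_neg (lt_irrefl 0), if_neg (not_lt.mpr h.le), if_pos h]

lemma ee_of_ne {a : ℝ} (ha : a ≠ 0) (x y c : ℝ) : Ee g a x c = Ee g a y c := by
  unfold Ee
  rcases ha.lt_or_gt with h | h
  · rw [if_neg (not_lt.mpr h.le), if_pos h, if_neg (not_lt.mpr h.le), if_pos h]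
  · rw [if_pos h, if_pos h]

/-- Key lemma: each direction on the left appears on the right. -/
lemma key (hg0 : Tendsto g atBot (nhds 0)) (hg1 : Tendsto g atTop (nhds 1))
    (hg'0 : Tendsto g' atBot (nhds 0)) (hg'1 : Tendsto g' atTop (nhds 1))
    (hω : ∀ k, 0 < ω k) (hω' : ∀ k, 0 < ω' k)
    (hβ : ∀ k, β k ≠ 0) (hβ' : ∀ k, β' k ≠ 0) (hS2 : CondS2 β)
    (heq : ∀ x : EuclideanSpace ℝ (Fin d),
      ∑ k, ω k * g (⟪β k, x⟫ + b k) = ∑ k, ω' k * g' (⟪β' k, x⟫ + b' k))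
    (j : Fin K) : ∃ k', dir β' k' = dir β j := by
  classical
  by_contra hcon
  push_neg at hcon
  set μ : EuclideanSpace ℝ (Fin d) := dir β j with hμdef
  have hμ : ‖μ‖ = 1 := norm_dir β j (hβ j)
  -- unit vectors distinct from ±μ are not multiples of μ
  have not_mul : ∀ w : EuclideanSpace ℝ (Fin d), ‖w‖ = 1 → w ≠ μ → w ≠ -μ →
      ∀ c : ℝ, w ≠ c • μ := by
    intro w hw h1 h2 c hc
    have : |c| = 1 := by
      have := hw
      rw [hc, norm_smul, hμ, mul_one, Real.norm_eq_abs] at this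
      exact this
    rcases abs_eq (by norm_num : (0:ℝ) ≤ 1) |>.mp this with rfl | rfl
    · rw [one_smul] at hc; exact h1 hc
    · rw [neg_one_smul] at hc; exact h2 hc
  set s : Finset (Fin K ⊕ Fin K') :=
    Finset.disjSum (Finset.univ.filter (· ≠ j))
      (Finset.univ.filter (fun k => dir β' k ≠ -μ)) with hs
  have hv : ∀ i ∈ s, ∀ c : ℝ, Sum.elim (dir β) (dir β') i ≠ c • μ := by
    rintro (k | k) hk c
    · have hkj : k ≠ j := by
        have := (Finset.inl_mem_disjSum.mp (hs ▸ hk))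
        simpa using this
      exact not_mul _ (norm_dir β k (hβ k)) (hS2 k j hkj).1 (hS2 k j hkj).2 c
    · have hk' : dir β' k ≠ -μ := by
        have := (Finset.inr_mem_disjSum.mp (hs ▸ hk))
        simpa using this
      exact not_mul _ (norm_dir β' k (hβ' k)) (hcon k) hk' c
  obtain ⟨u, hu0, hu⟩ := exists_orth μ hμ s _ hv
  -- inner products with u
  have hβju : ⟪β j, u⟫ = 0 := by
    rw [inner_dir β j (hβ j) u, ← hμdef, hu0, mul_zero]
  have hβku : ∀ k, k ≠ j → ⟪β k, u⟫ ≠ 0 := by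
    intro k hk
    have hmem : Sum.inl k ∈ s := by
      rw [hs, Finset.inl_mem_disjSum]
      simpa using hk
    have := hu _ hmem
    simp only [Sum.elim_inl] at this
    rw [inner_dir β k (hβ k) u]
    exact mul_ne_zero (norm_ne_zero_iff.mpr (hβ k)) this
  -- evaluate star at (u, μ) and (u, -μ)
  have h1 := star hg0 hg1 hg'0 hg'1 heq u μ
  have h2 := star hg0 hg1 hg'0 hg'1 heq u (-μ)
  have hdiff : ∑ k, ω k * (Ee g ⟪β k, u⟫ ⟪β k, μ⟫ (b k) - Ee g ⟪β k, u⟫ ⟪β k, -μ⟫ (b k))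
      = ∑ k, ω' k * (Ee g' ⟪β' k, u⟫ ⟪β' k, μ⟫ (b' k) - Ee g' ⟪β' k, u⟫ ⟪β' k, -μ⟫ (b' k)) := by
    simp only [mul_sub, Finset.sum_sub_distrib]
    rw [h1, h2]
  -- LHS equals ω j
  have hβjμ : ⟪β j, μ⟫ = ‖β j‖ := by
    rw [hμdef, dir, real_inner_smul_right, real_inner_self_eq_norm_sq, pow_two, ← mul_assoc,
      inv_mul_cancel₀ (norm_ne_zero_iff.mpr (hβ j)), one_mul]
  have hLHS : ∑ k, ω k * (Ee g ⟪β k, u⟫ ⟪β k, μ⟫ (b k) - Ee g ⟪β k, u⟫ ⟪β k, -μ⟫ (b k))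
      = ω j := by
    rw [Finset.sum_eq_single j]
    · have hpos : (0:ℝ) < ‖β j‖ := norm_pos_iff.mpr (hβ j)
      rw [hβju, inner_neg_right, hβjμ, Ee_zero_pos hpos, Ee_zero_neg (neg_neg_of_pos hpos)]
      ring
    · intro k _ hk
      rw [ee_of_ne (hβku k hk) _ ⟪β k, -μ⟫]
      ring
    · intro h
      exact absurd (Finset.mem_univ j) h
  -- RHS is nonpositive
  have hRHS : ∑ k, ω' k * (Ee g' ⟪β' k, u⟫ ⟪β' k, μ⟫ (b' k) - Ee g' ⟪β' k, u⟫ ⟪β' k, -μ⟫ (b' k))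
      ≤ 0 := by
    refine Finset.sum_nonpos fun k _ => ?_
    by_cases hku : ⟪β' k, u⟫ = 0
    · -- then dir β' k = -μ
      have hdm : dir β' k = -μ := by
        by_contra hne
        have hmem : Sum.inr k ∈ s := by
          rw [hs, Finset.inr_mem_disjSum]
          simpa using hne
        have := hu _ hmem
        simp only [Sum.elim_inr] at this
        apply this
        have h3 := inner_dir β' k (hβ' k) u
        rw [hku] at h3
        rcases mul_eq_zero.mp h3.symm with h | h
        · exact absurd h (norm_ne_zero_iff.mpr (hβ' k))
        · exact h
      have hβkμ : ⟪β' k, μ⟫ = -‖β' k‖ := by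
        rw [inner_dir β' k (hβ' k) μ, hdm, inner_neg_left, real_inner_self_eq_norm_sq, hμ]
        ring
      have hpos : (0:ℝ) < ‖β' k‖ := norm_pos_iff.mpr (hβ' k)
      rw [hku, hβkμ, inner_neg_right, hβkμ, neg_neg,
        Ee_zero_neg (neg_neg_of_pos hpos), Ee_zero_pos hpos]
      nlinarith [(hω' k)]
    · rw [ee_of_ne hku _ ⟪β' k, -μ⟫]
      simp
  rw [hLHS] at hdiff
  linarith [hω j, hdiff ▸ hRHS]

end Stmt13

open RealInnerProductSpace in
theorem directions_identifiable
    (d : ℕ) (hd : 1 ≤ d) (g g' : ℝ → ℝ) (hg : CondS3 g) (hg' : CondS3 g')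
    (K K' : ℕ) (hK : 1 ≤ K) (hK' : 1 ≤ K')
    (ω : Fin K → ℝ) (β : Fin K → EuclideanSpace ℝ (Fin d)) (b : Fin K → ℝ)
    (ω' : Fin K' → ℝ) (β' : Fin K' → EuclideanSpace ℝ (Fin d)) (b' : Fin K' → ℝ)
    (hω : ∀ k, 0 < ω k) (hωsum : ∑ k, ω k = 1) (hβ : ∀ k, β k ≠ 0)
    (hω' : ∀ k, 0 < ω' k) (hωsum' : ∑ k, ω' k = 1) (hβ' : ∀ k, β' k ≠ 0)
    (hS2 : CondS2 β) (hS2' : CondS2 β')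
    (heq : ∀ x : EuclideanSpace ℝ (Fin d),
      ∑ k, ω k * g (⟪β k, x⟫ + b k) = ∑ k, ω' k * g' (⟪β' k, x⟫ + b' k)) :
    K = K' ∧ Set.range (dir β) = Set.range (dir β') := by
  obtain ⟨-, -, hg0, hg1, -, -, -⟩ := hg
  obtain ⟨-, -, hg'0, hg'1, -, -, -⟩ := hg'
  have hfwd : ∀ j, ∃ k', dir β' k' = dir β j :=
    Stmt13.key hg0 hg1 hg'0 hg'1 hω hω' hβ hβ' hS2 heq
  have hbwd : ∀ j, ∃ k', dir β k' = dir β' j :=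
    Stmt13.key hg'0 hg'1 hg0 hg1 hω' hω hβ' hβ hS2' (fun x => (heq x).symm)
  have hrange : Set.range (dir β) = Set.range (dir β') := by
    apply Set.Subset.antisymm
    · rintro _ ⟨j, rfl⟩
      obtain ⟨k', hk'⟩ := hfwd j
      exact ⟨k', hk'⟩
    · rintro _ ⟨j, rfl⟩
      obtain ⟨k', hk'⟩ := hbwd j
      exact ⟨k', hk'⟩
  refine ⟨?_, hrange⟩
  have hinj : Function.Injective (dir β) := by
    intro a c h
    by_contra hne
    exact (hS2 a c hne).1 h
  have hinj' : Function.Injective (dir β') := by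
    intro a c h
    by_contra hne
    exact (hS2' a c hne).1 h
  have h1 : Nat.card (Set.range (dir β)) = K := by
    rw [Nat.card_range_of_injective hinj, Nat.card_eq_fintype_card, Fintype.card_fin]
  have h2 : Nat.card (Set.range (dir β')) = K' := by
    rw [Nat.card_range_of_injective hinj', Nat.card_eq_fintype_card, Fintype.card_fin]
  rw [← h1, ← h2, hrange]

end
end

section
/- Let g satisfy (S3). Let β_1, …, β_K ∈ ℝ^d be nonzero vectors whose normalized directions μ_k = β_k/‖β_k‖ satisfy (S2), and let b_1, …, b_K ∈ ℝ. If α_1, …, α_K ∈ ℝ are such that Σ_{k=1}^K α_k g(⟨β_k, x⟩ + b_k) = 0 for all x ∈ ℝ^d, then α_k = 0 for every k; that is, the functions x ↦ g(⟨β_k, x⟩ + b_k), k = 1, …, K, are linearly independent. -/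
/- STATEMENT 17: Under (S2) and (S3), the functions x ↦ g(⟨β_k, x⟩ + b_k),
k = 1, …, K, are linearly independent. -/

open Filter Real

noncomputable section

open RealInnerProductSpace in
/-- Finite hyperplane avoidance inside the hyperplane `u^⊥`. -/
lemma exists_perp_forall_inner_ne {E : Type*} [NormedAddCommGroup E]
    [InnerProductSpace ℝ E] (u : E) {ι : Type*} [DecidableEq ι] (s : Finset ι) (β : ι → E)
    (h : ∀ k ∈ s, ∃ w : E, ⟪u, w⟫ = 0 ∧ ⟪β k, w⟫ ≠ 0) :
    ∃ v : E, ⟪u, v⟫ = 0 ∧ ∀ k ∈ s, ⟪β k, v⟫ ≠ 0 := by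
  classical
  induction s using Finset.induction_on with
  | empty => exact ⟨0, by simp, by simp⟩
  | @insert k s hk ih =>
    obtain ⟨v, hv0, hv⟩ := ih fun m hm => h m (Finset.mem_insert_of_mem hm)
    obtain ⟨w, hw0, hw⟩ := h k (Finset.mem_insert_self k s)
    have hfin : ∀ m ∈ insert k s,
        ({t : ℝ | ⟪β m, v⟫ + t * ⟪β m, w⟫ = 0}).Finite := by
      intro m hm
      by_cases hb : ⟪β m, w⟫ = 0
      · have ha : ⟪β m, v⟫ ≠ 0 := by
          rcases Finset.mem_insert.mp hm with rfl | hms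
          · exact absurd hb hw
          · exact hv m hms
        have : {t : ℝ | ⟪β m, v⟫ + t * ⟪β m, w⟫ = 0} = ∅ := by
          ext t; simp [hb, ha]
        simp [this]
      · apply Set.Finite.subset (Set.finite_singleton (-⟪β m, v⟫ / ⟪β m, w⟫))
        intro t ht
        simp only [Set.mem_setOf_eq] at ht
        simp only [Set.mem_singleton_iff]
        field_simp
        linarith
    have hBfin : (⋃ m ∈ (insert k s : Finset ι),
        {t : ℝ | ⟪β m, v⟫ + t * ⟪β m, w⟫ = 0}).Finite :=
      Set.Finite.biUnion (insert k s).finite_toSet hfin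
    obtain ⟨t, ht⟩ := hBfin.infinite_compl.nonempty
    refine ⟨v + t • w, by simp [inner_add_right, real_inner_smul_right, hv0, hw0], ?_⟩
    intro m hm
    rw [inner_add_right, real_inner_smul_right]
    intro hcontra
    exact ht (Set.mem_biUnion hm hcontra)

/-- Limit of `g` along a line with nonzero slope. -/
lemma tendsto_g_line {g : ℝ → ℝ} (hg : CondS3 g) {c bb : ℝ} (hc : c ≠ 0) :
    Tendsto (fun t : ℝ => g (t * c + bb)) atTop
      (nhds (if 0 < c then (1:ℝ) else 0)) := by
  rcases hc.lt_or_gt with h | h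
  · rw [if_neg (not_lt.2 h.le)]
    exact hg.2.2.1.comp
      (tendsto_atBot_add_const_right _ bb (tendsto_id.atTop_mul_const_of_neg h))
  · rw [if_pos h]
    exact hg.2.2.2.1.comp
      (tendsto_atTop_add_const_right _ bb (tendsto_id.atTop_mul_const h))

/-- A perturbation smaller in absolute value does not change the sign. -/
lemma sign_stable {a e : ℝ} (h : |e| < |a|) : (0 < a + e ↔ 0 < a) := by
  rcases abs_lt.mp h with ⟨h1, h2⟩
  rcases lt_trichotomy a 0 with ha | ha | ha
  · rw [abs_of_neg ha] at h2
    constructor <;> intro <;> linarith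
  · subst ha
    simp only [abs_zero] at h
    exact absurd h (abs_nonneg e).not_gt
  · rw [abs_of_pos ha] at h1
    constructor <;> intro <;> linarith

lemma add_ne_of_abs_lt {a e : ℝ} (h : |e| < |a|) : a + e ≠ 0 := by
  intro h0
  rw [show e = -a by linarith] at h
  rw [abs_neg] at h
  exact lt_irrefl _ h

open RealInnerProductSpace in
theorem component_functions_linearly_independent
    (d K : ℕ) (hd : 1 ≤ d) (hK : 1 ≤ K)
    (g : ℝ → ℝ) (hg : CondS3 g)
    (β : Fin K → EuclideanSpace ℝ (Fin d)) (hβ : ∀ k, β k ≠ 0)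
    (hS2 : CondS2 β) (b : Fin K → ℝ)
    (α : Fin K → ℝ)
    (hzero : ∀ x : EuclideanSpace ℝ (Fin d), ∑ k, α k * g (⟪β k, x⟫ + b k) = 0) :
    ∀ k, α k = 0 := by
  classical
  intro j
  have hnβ : ∀ k, (0:ℝ) < ‖β k‖ := fun k => norm_pos_iff.mpr (hβ k)
  have hdirnorm : ∀ k, ‖dir β k‖ = 1 := by
    intro k
    rw [dir, norm_smul, norm_inv, norm_norm, inv_mul_cancel₀ (hnβ k).ne']
  have hβdir : ∀ k, β k = ‖β k‖ • dir β k := by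
    intro k; rw [dir, smul_smul, mul_inv_cancel₀ (hnβ k).ne', one_smul]
  -- Key: for any direction `v` avoiding all hyperplanes, the limit along `t • v`
  -- gives a linear relation on the `α k` with halfspace indicator coefficients.
  have key : ∀ v : EuclideanSpace ℝ (Fin d), (∀ k, ⟪β k, v⟫ ≠ 0) →
      ∑ k, α k * (if 0 < ⟪β k, v⟫ then (1:ℝ) else 0) = 0 := by
    intro v hv
    have h1 : Tendsto (fun t : ℝ => ∑ k, α k * g (t * ⟪β k, v⟫ + b k)) atTop
        (nhds (∑ k, α k * (if 0 < ⟪β k, v⟫ then (1:ℝ) else 0))) := by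
      apply tendsto_finset_sum
      intro k _
      exact (tendsto_g_line hg (hv k)).const_mul (α k)
    have h2 : (fun t : ℝ => ∑ k, α k * g (t * ⟪β k, v⟫ + b k))
        = fun _ : ℝ => (0:ℝ) := by
      funext t
      have h := hzero (t • v)
      simp only [real_inner_smul_right] at h
      exact h
    rw [h2] at h1
    exact tendsto_nhds_unique h1 tendsto_const_nhds
  -- Witnesses for hyperplane avoidance inside `(β j)^⊥`.
  have hwits : ∀ k ∈ Finset.univ.erase j, ∃ w : EuclideanSpace ℝ (Fin d),
      ⟪β j, w⟫ = 0 ∧ ⟪β k, w⟫ ≠ 0 := by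
    intro k hk
    have hkj : j ≠ k := (Finset.ne_of_mem_erase hk).symm
    obtain ⟨hne, hnne⟩ := hS2 j k hkj
    have hcomm : ⟪dir β j, dir β k⟫ = ⟪dir β k, dir β j⟫ := real_inner_comm _ _
    have hjj : ⟪dir β j, dir β j⟫ = 1 := by
      rw [real_inner_self_eq_norm_mul_norm, hdirnorm j]; norm_num
    have hkk : ⟪dir β k, dir β k⟫ = 1 := by
      rw [real_inner_self_eq_norm_mul_norm, hdirnorm k]; norm_num
    have hcs : |⟪dir β k, dir β j⟫| ≤ 1 := by
      have := abs_real_inner_le_norm (dir β k) (dir β j)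
      rwa [hdirnorm, hdirnorm, mul_one] at this
    have hc1 : ⟪dir β k, dir β j⟫ ≠ 1 := by
      intro h1
      exact hne ((inner_eq_one_iff_of_norm_eq_one (hdirnorm k) (hdirnorm j)).mp h1).symm
    have hcm1 : ⟪dir β k, dir β j⟫ ≠ -1 := by
      intro h1
      apply hnne
      have h2 : ⟪dir β k, -dir β j⟫ = 1 := by
        rw [inner_neg_right, h1]; ring
      have h3 := (inner_eq_one_iff_of_norm_eq_one (hdirnorm k)
        (by rw [norm_neg]; exact hdirnorm j)).mp h2
      rw [h3]; simp
    have hc2 : ⟪dir β k, dir β j⟫ ^ 2 < 1 := by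
      have habs : |⟪dir β k, dir β j⟫| ≠ 1 := by
        intro h
        rcases (abs_eq zero_le_one).mp h with h' | h'
        exacts [hc1 h', hcm1 h']
      have hlt : |⟪dir β k, dir β j⟫| < 1 := lt_of_le_of_ne hcs habs
      calc ⟪dir β k, dir β j⟫ ^ 2 = |⟪dir β k, dir β j⟫| ^ 2 := (sq_abs _).symm
      _ < 1 := by nlinarith [abs_nonneg ⟪dir β k, dir β j⟫]
    refine ⟨dir β k - ⟪dir β k, dir β j⟫ • dir β j, ?_, ?_⟩
    · rw [hβdir j, real_inner_smul_left, inner_sub_right, real_inner_smul_right,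
        hjj, hcomm]
      ring
    · rw [hβdir k, real_inner_smul_left, inner_sub_right, real_inner_smul_right, hkk]
      apply mul_ne_zero (hnβ k).ne'
      nlinarith [hc2]
  obtain ⟨v0, hv0perp, hv0⟩ :=
    exists_perp_forall_inner_ne (β j) (Finset.univ.erase j) β hwits
  -- choose a small ε > 0
  set T : Finset ℝ := insert 1 ((Finset.univ.erase j).image
    fun k => |⟪β k, v0⟫| / (2 * ‖β k‖)) with hT
  have hTne : T.Nonempty := ⟨1, Finset.mem_insert_self _ _⟩
  set ε := T.min' hTne with hε
  have hεpos : 0 < ε := by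
    have hmem := T.min'_mem hTne
    rw [← hε] at hmem
    rcases Finset.mem_insert.mp hmem with h | h
    · rw [h]; norm_num
    · obtain ⟨k, hk, hkk⟩ := Finset.mem_image.mp h
      rw [← hkk]
      have h1 : 0 < |⟪β k, v0⟫| := abs_pos.mpr (hv0 k hk)
      have h2 := hnβ k
      positivity
  have hεlt : ∀ k, k ≠ j → ε * ‖β k‖ < |⟪β k, v0⟫| := by
    intro k hkj
    have hks : k ∈ Finset.univ.erase j := Finset.mem_erase.mpr ⟨hkj, Finset.mem_univ k⟩
    have hle : ε ≤ |⟪β k, v0⟫| / (2 * ‖β k‖) :=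
      T.min'_le _ (Finset.mem_insert_of_mem (Finset.mem_image_of_mem _ hks))
    have hN := hnβ k
    have hA : 0 < |⟪β k, v0⟫| := abs_pos.mpr (hv0 k hks)
    calc ε * ‖β k‖ ≤ (|⟪β k, v0⟫| / (2 * ‖β k‖)) * ‖β k‖ :=
          mul_le_mul_of_nonneg_right hle hN.le
    _ = |⟪β k, v0⟫| / 2 := by
          have hN' : ‖β k‖ ≠ 0 := hN.ne'
          field_simp
    _ < |⟪β k, v0⟫| := by linarith
  -- inner products with the perturbed directions
  have hdj : ⟪β j, dir β j⟫ = ‖β j‖ := by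
    rw [dir, real_inner_smul_right, real_inner_self_eq_norm_mul_norm,
      ← mul_assoc, inv_mul_cancel₀ (hnβ j).ne', one_mul]
  have hsmall : ∀ k, k ≠ j → |ε * ⟪β k, dir β j⟫| < |⟪β k, v0⟫| ∧
      |(-ε) * ⟪β k, dir β j⟫| < |⟪β k, v0⟫| := by
    intro k hkj
    have h1 : |⟪β k, dir β j⟫| ≤ ‖β k‖ := by
      have := abs_real_inner_le_norm (β k) (dir β j)
      rwa [hdirnorm j, mul_one] at this
    have h2 : |ε * ⟪β k, dir β j⟫| ≤ ε * ‖β k‖ := by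
      rw [abs_mul, abs_of_pos hεpos]
      exact mul_le_mul_of_nonneg_left h1 hεpos.le
    constructor
    · exact lt_of_le_of_lt h2 (hεlt k hkj)
    · rw [neg_mul, abs_neg]
      exact lt_of_le_of_lt h2 (hεlt k hkj)
  have hexp : ∀ (k : Fin K) (σ : ℝ),
      ⟪β k, v0 + σ • dir β j⟫ = ⟪β k, v0⟫ + σ * ⟪β k, dir β j⟫ := by
    intro k σ
    rw [inner_add_right, real_inner_smul_right]
  have hvp : ∀ k, ⟪β k, v0 + ε • dir β j⟫ ≠ 0 := by
    intro k
    rw [hexp]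
    by_cases hkj : k = j
    · subst hkj
      rw [hv0perp, hdj, zero_add]
      exact (mul_pos hεpos (hnβ k)).ne'
    · exact add_ne_of_abs_lt (hsmall k hkj).1
  have hvm : ∀ k, ⟪β k, v0 + (-ε) • dir β j⟫ ≠ 0 := by
    intro k
    rw [hexp]
    by_cases hkj : k = j
    · subst hkj
      rw [hv0perp, hdj, zero_add]
      exact mul_ne_zero (neg_ne_zero.mpr hεpos.ne') (hnβ k).ne'
    · exact add_ne_of_abs_lt (hsmall k hkj).2
  have hp := key _ hvp
  have hm := key _ hvm
  have hjp : 0 < ⟪β j, v0 + ε • dir β j⟫ := by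
    rw [hexp, hv0perp, hdj, zero_add]; exact mul_pos hεpos (hnβ j)
  have hjm : ¬ (0 < ⟪β j, v0 + (-ε) • dir β j⟫) := by
    rw [hexp, hv0perp, hdj, zero_add]
    push_neg
    exact (mul_neg_of_neg_of_pos (neg_lt_zero.mpr hεpos) (hnβ j)).le
  have hdiff : ∑ k, (α k * (if 0 < ⟪β k, v0 + ε • dir β j⟫ then (1:ℝ) else 0)
      - α k * (if 0 < ⟪β k, v0 + (-ε) • dir β j⟫ then (1:ℝ) else 0)) = α j := by
    rw [Finset.sum_eq_single j]
    · rw [if_pos hjp, if_neg hjm]; ring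
    · intro k _ hkj
      have hiffp : (0 < ⟪β k, v0 + ε • dir β j⟫) ↔ (0 < ⟪β k, v0⟫) := by
        rw [hexp]; exact sign_stable (hsmall k hkj).1
      have hiffm : (0 < ⟪β k, v0 + (-ε) • dir β j⟫) ↔ (0 < ⟪β k, v0⟫) := by
        rw [hexp]; exact sign_stable (hsmall k hkj).2
      simp only [hiffp, hiffm]
      ring
    · intro h
      exact absurd (Finset.mem_univ j) h
  rw [Finset.sum_sub_distrib, hp, hm] at hdiff
  linarith [hdiff]

end
end
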